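/- arXiv:2604.03379 — 3 statements merged into one kernel-verified Lean document; each statement's English description precedes it below -/
import Mathlib

section
/- For any involution y in S_n and any permutation w with w^{-1} ∘ w = y under the Demazure product, ℓ(w) ≥ ℓ̂(y), where ℓ̂(y) = (ℓ(y) + n − |Cyc(y)|)/2; that is, atoms of y are exactly the minimal-length such w. -/
open scoped Classical

noncomputable section

/-- The simple transposition `s_i` in `S_n` (0-indexed: swaps `i` and `i+1`). -/
def simpleT (n i : ℕ) : Equiv.Perm (Fin n) :=
  if h : i + 1 < n then Equiv.swap ⟨i, Nat.lt_of_succ_lt h⟩ ⟨i + 1, h⟩ else 1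

/-- The product of the word `l` of simple transpositions. -/
def wordProd (n : ℕ) (l : List ℕ) : Equiv.Perm (Fin n) :=
  (l.map (simpleT n)).prod

/-- The Coxeter length of a permutation: minimal length of a word of simple
transpositions with product `w`. -/
def len (n : ℕ) (w : Equiv.Perm (Fin n)) : ℕ :=
  sInf {p | ∃ l : List ℕ, l.length = p ∧ wordProd n l = w}

/-- One step of the (right) Demazure / 0-Hecke product: `w ∘ s_i`. -/
def demStepR (n : ℕ) (w : Equiv.Perm (Fin n)) (i : ℕ) : Equiv.Perm (Fin n) :=
  if len n w < len n (w * simpleT n i) then w * simpleT n i else w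

/-- One step of the (left) Demazure / 0-Hecke product: `s_i ∘ w`. -/
def demStepL (n i : ℕ) (w : Equiv.Perm (Fin n)) : Equiv.Perm (Fin n) :=
  if len n w < len n (simpleT n i * w) then simpleT n i * w else w

/-- The Demazure product of the word `l`: `s_{a_1} ∘ s_{a_2} ∘ ⋯ ∘ s_{a_p}`. -/
def demWord (n : ℕ) (l : List ℕ) : Equiv.Perm (Fin n) :=
  l.foldl (demStepR n) 1

/-- `w⁻¹ ∘ w = y` for the Demazure product: expressed via a reduced word `l` of `w`,
as `demWord (l.reverse ++ l) = y` (note `l.reverse` is a reduced word of `w⁻¹`). -/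
def DemSelf (n : ℕ) (w y : Equiv.Perm (Fin n)) : Prop :=
  ∃ l : List ℕ, wordProd n l = w ∧ l.length = len n w ∧ demWord n (l.reverse ++ l) = y

/-- `w` is an atom of the involution `y`: a minimal-length permutation with
`w⁻¹ ∘ w = y` under the Demazure product. -/
def IsAtomOf (n : ℕ) (y w : Equiv.Perm (Fin n)) : Prop :=
  DemSelf n w y ∧ ∀ w', DemSelf n w' y → len n w ≤ len n w'

/-- The number of cycles (2-cycles together with fixed points) of an involution `y`. -/
def cycCount (n : ℕ) (y : Equiv.Perm (Fin n)) : ℕ :=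
  (Finset.univ.filter fun i : Fin n => i ≤ y i).card

/-- The minimal length of an involution word for `y`
(`y = s_{a_1} ⊳ ⋯ ⊳ s_{a_p}`, equivalently `y = demWord (a.reverse ++ a)`). -/
def ihat (n : ℕ) (y : Equiv.Perm (Fin n)) : ℕ :=
  sInf {p | ∃ a : List ℕ, a.length = p ∧ demWord n (a.reverse ++ a) = y}

/-- Bruhat order on `S_n` via the subword property. -/
def BruhatLE (n : ℕ) (u v : Equiv.Perm (Fin n)) : Prop :=
  ∀ l : List ℕ, wordProd n l = v → l.length = len n v →
    ∃ l' : List ℕ, l'.Sublist l ∧ wordProd n l' = u ∧ l'.length = len n u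

/-- `y` standardizes (as a word `b` on a finite alphabet of naturals) to the
permutation `y` of positions: `y i` is the rank of the letter `b i`. -/
def stdEq {k : ℕ} (b : Fin k → ℕ) (y : Equiv.Perm (Fin k)) : Prop :=
  Function.Injective b ∧
    ∀ i, (y i : ℕ) = (Finset.univ.filter fun j => b j < b i).card

/-- `q` is an inverse block atom of the block involution `b`: a word on the same
alphabet whose standardization is an inverse atom of `std b`. -/
def IsInvBlockAtomOf {k : ℕ} (b q : Fin k → ℕ) : Prop :=
  Set.range q = Set.range b ∧
    ∃ y w : Equiv.Perm (Fin k), stdEq b y ∧ y * y = 1 ∧ stdEq q w ∧ IsAtomOf k y w⁻¹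

/-- Positions `p` and `q` (0-indexed) lie in the same block of the composition `μ`. -/
def SameBlock (μ : List ℕ) (p q : ℕ) : Prop :=
  ∀ k ≤ μ.length, ((μ.take k).sum ≤ p ↔ (μ.take k).sum ≤ q)

/-- The starting position (0-indexed) of the block of `μ` containing position `p`. -/
def blockStart (μ : List ℕ) (p : ℕ) : ℕ :=
  (Finset.range (μ.length + 1)).sup fun k =>
    if (μ.take k).sum ≤ p then (μ.take k).sum else 0

/-- The 0-Hecke action `π ∘_μ s_i` on `μ`-involutions: if the values `i, i+1` of `π`
lie in different blocks it is `s_i ∘ π`; if they lie in the same block `B` it is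
`s_i ∘ π ∘ s_r`, where `r` is the position (global, 0-indexed) within the block
corresponding to the relative value of `i` in `B`. -/
def muAct (n : ℕ) (μ : List ℕ) (π : Equiv.Perm (Fin n)) (i : ℕ) : Equiv.Perm (Fin n) :=
  if h : i + 1 < n then
    let a : Fin n := ⟨i, Nat.lt_of_succ_lt h⟩
    let b : Fin n := ⟨i + 1, h⟩
    if SameBlock μ ((π⁻¹ a : Fin n) : ℕ) ((π⁻¹ b : Fin n) : ℕ) then
      demStepR n (demStepL n i π)
        (blockStart μ ((π⁻¹ a : Fin n) : ℕ) +
          (Finset.univ.filter fun p' : Fin n =>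
            SameBlock μ (p' : ℕ) ((π⁻¹ a : Fin n) : ℕ) ∧ (π p' : ℕ) < i).card)
    else demStepL n i π
  else π

/-- `e ∘_μ s_{a_1} ∘_μ ⋯ ∘_μ s_{a_p}` for a word `l = (a_1, …, a_p)`. -/
def muWord (n : ℕ) (μ : List ℕ) (l : List ℕ) : Equiv.Perm (Fin n) :=
  l.foldl (muAct n μ) 1

/-- `ℓ_μ(π)`: the minimal length of a `μ`-word for `π`. -/
def lmu (n : ℕ) (μ : List ℕ) (π : Equiv.Perm (Fin n)) : ℕ :=
  sInf {p | ∃ l : List ℕ, l.length = p ∧ muWord n μ l = π}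

/-- The `i`-th block of the one-line notation of `π` with respect to `μ`, as a word. -/
def blockWord (n : ℕ) (μ : List ℕ) (π : Equiv.Perm (Fin n)) (i : Fin μ.length) :
    Fin (μ.get i) → ℕ :=
  fun j =>
    if h : (μ.take (i : ℕ)).sum + (j : ℕ) < n then
      (π ⟨(μ.take (i : ℕ)).sum + (j : ℕ), h⟩ : ℕ)
    else 0

/-- `π` is a `μ`-involution: `μ` is a composition of `n` and every block of `π`
standardizes to an involution. -/
def IsMuInv (n : ℕ) (μ : List ℕ) (π : Equiv.Perm (Fin n)) : Prop :=
  μ.sum = n ∧ (∀ x ∈ μ, 0 < x) ∧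
    ∀ i : Fin μ.length,
      ∃ y : Equiv.Perm (Fin (μ.get i)), stdEq (blockWord n μ π i) y ∧ y * y = 1

/-- `w` is a `μ`-atom of `π`: a minimal-length permutation one of whose reduced words
is a reduced `μ`-word for `π`. -/
def IsMuAtom (n : ℕ) (μ : List ℕ) (π w : Equiv.Perm (Fin n)) : Prop :=
  ∃ l : List ℕ, wordProd n l = w ∧ l.length = len n w ∧
    muWord n μ l = π ∧ l.length = lmu n μ π

/-- `ν` refines `μ`: every partial sum of `μ` is a partial sum of `ν`. -/
def Refines (ν μ : List ℕ) : Prop :=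
  ∀ k ≤ μ.length, ∃ k' ≤ ν.length, (ν.take k').sum = (μ.take k).sum

/-- `μ`-Bruhat order via the subword property on reduced `μ`-words. -/
def MuBruhatLE (n : ℕ) (μ : List ℕ) (π τ : Equiv.Perm (Fin n)) : Prop :=
  ∀ l : List ℕ, muWord n μ l = τ → l.length = lmu n μ τ →
    ∃ l' : List ℕ, l'.Sublist l ∧ muWord n μ l' = π ∧ l'.length = lmu n μ π

/-- The longest element `w_0` of `S_n`. -/
def longest (n : ℕ) : Equiv.Perm (Fin n) :=
  ⟨Fin.rev, Fin.rev, Fin.rev_rev, Fin.rev_rev⟩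

/-- The divided difference operator `∂_i f = (f - s_i f)/(x_i - x_{i+1})`. -/
def ddiff (n i : ℕ) (f : MvPolynomial (Fin n) ℚ) : MvPolynomial (Fin n) ℚ :=
  if h : ∃ hi : i + 1 < n, ∃ g : MvPolynomial (Fin n) ℚ,
      f - MvPolynomial.rename (⇑(simpleT n i)) f =
        g * (MvPolynomial.X (⟨i, Nat.lt_of_succ_lt hi⟩ : Fin n) -
          MvPolynomial.X (⟨i + 1, hi⟩ : Fin n))
  then h.choose_spec.choose else 0

/-- A choice of reduced word for `v`. -/
def aRedWord (n : ℕ) (v : Equiv.Perm (Fin n)) : List ℕ :=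
  if h : ∃ l : List ℕ, wordProd n l = v ∧ l.length = len n v then h.choose else []

/-- The Schubert polynomial of `w`: obtained from the staircase monomial
`S_{w_0} = x_1^{n-1} ⋯ x_{n-1}` by applying divided differences along a reduced
word of `w_0 w` (so that `w_0 · s_{a_1} ⋯ s_{a_p} = w`). -/
def schubert (n : ℕ) (w : Equiv.Perm (Fin n)) : MvPolynomial (Fin n) ℚ :=
  (aRedWord n (longest n * w)).foldl (fun f i => ddiff n i f)
    (∏ i : Fin n, MvPolynomial.X i ^ (n - 1 - (i : ℕ)))

/-- The involution Schubert polynomial `S^I_y = ∑_{w ∈ A(y)} S_w`. -/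
def invSchubert (n : ℕ) (y : Equiv.Perm (Fin n)) : MvPolynomial (Fin n) ℚ :=
  ∑ w ∈ Finset.univ.filter (fun w => IsAtomOf n y w), schubert n w

/-- The `μ`-involution Schubert polynomial `S^μ_π = ∑_{w ∈ A_μ(π)} S_w`. -/
def muSchubert (n : ℕ) (μ : List ℕ) (π : Equiv.Perm (Fin n)) : MvPolynomial (Fin n) ℚ :=
  ∑ w ∈ Finset.univ.filter (fun w => IsMuAtom n μ π w), schubert n w

/-- The parabolic (Young) subgroup `S_μ ≤ S_n`, generated by the simple
transpositions not crossing a block boundary of `μ`. -/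
def parabolic (n : ℕ) (μ : List ℕ) : Subgroup (Equiv.Perm (Fin n)) :=
  Subgroup.closure
    {g | ∃ i : ℕ, i + 1 < n ∧ (∀ k ≤ μ.length, (μ.take k).sum ≠ i + 1) ∧ g = simpleT n i}

/-- `z = t^I_{ab}(y)` nontrivially, encoded via atoms: some atom `v` of `y` satisfies
`v ⋖ v t_{ab}` and `v t_{ab}` is an atom of `z`. -/
def tOpI (n : ℕ) (y z : Equiv.Perm (Fin n)) (a b : Fin n) : Prop :=
  ∃ v : Equiv.Perm (Fin n), IsAtomOf n y v ∧
    len n (v * Equiv.swap a b) = len n v + 1 ∧ IsAtomOf n z (v * Equiv.swap a b)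

/-- The local move on one-line notations: a consecutive subsequence `c, a, b`
(with `a < b < c`) of `u` is replaced by `b, c, a` in `v`, all other entries equal. -/
def LocalMove (n : ℕ) (u v : Equiv.Perm (Fin n)) : Prop :=
  ∃ p : ℕ, ∃ hp : p + 2 < n, ∃ a b c : Fin n, a < b ∧ b < c ∧
    u ⟨p, by omega⟩ = c ∧ u ⟨p + 1, by omega⟩ = a ∧ u ⟨p + 2, hp⟩ = b ∧
    v ⟨p, by omega⟩ = b ∧ v ⟨p + 1, by omega⟩ = c ∧ v ⟨p + 2, hp⟩ = a ∧
    ∀ q : Fin n, (q : ℕ) ≠ p → (q : ℕ) ≠ p + 1 → (q : ℕ) ≠ p + 2 → u q = v q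

/-- The values `x, x'` form a (non-fixed-point) block cycle of the word `b`. -/
def Paired (m : ℕ) (b : Fin m → ℕ) (x x' : ℕ) : Prop :=
  ∃ y : Equiv.Perm (Fin m), stdEq b y ∧ ∃ i : Fin m, b i = x ∧ b (y i) = x' ∧ y i ≠ i

/-- `q` is an inverse block atom of the block involution obtained from `b` by
restricting its cycle structure to the value set of `q` (with unmatched values
becoming fixed points). -/
def RestrictedInvBlockAtom (m : ℕ) (b : Fin m → ℕ) (k : ℕ) (q : Fin k → ℕ) : Prop :=
  ∃ bL : Fin k → ℕ, ∃ yL : Equiv.Perm (Fin k),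
    stdEq bL yL ∧ yL * yL = 1 ∧ Set.range bL = Set.range q ∧
    (∀ i j : Fin k, (yL i = j ∧ i ≠ j) ↔ Paired m b (bL i) (bL j)) ∧
    IsInvBlockAtomOf bL q

end

section AuxProof

open Finset

variable {n : ℕ}

/-- Inversion set of a permutation. -/
noncomputable def invSet (n : ℕ) (w : Equiv.Perm (Fin n)) : Finset (Fin n × Fin n) :=
  Finset.univ.filter fun p => p.1 < p.2 ∧ w p.2 < w p.1

/-- Number of inversions. -/
noncomputable def linv (n : ℕ) (w : Equiv.Perm (Fin n)) : ℕ := (invSet n w).card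

lemma linv_one : linv n 1 = 0 := by
  rw [linv, Finset.card_eq_zero, invSet, Finset.filter_eq_empty_iff]
  rintro ⟨a, b⟩ -
  simp only [Equiv.Perm.one_apply]
  rintro ⟨h1, h2⟩
  exact absurd h1 (not_lt.2 h2.le)

lemma simpleT_eq_swap {i : ℕ} (hi : i + 1 < n) :
    simpleT n i = Equiv.swap ⟨i, Nat.lt_of_succ_lt hi⟩ ⟨i + 1, hi⟩ := dif_pos hi

lemma simpleT_eq_one {i : ℕ} (hi : ¬ i + 1 < n) : simpleT n i = 1 := dif_neg hi

lemma simpleT_apply_nat {i : ℕ} (hi : i + 1 < n) (x : Fin n) :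
    ((simpleT n i x : Fin n) : ℕ) = if (x : ℕ) = i then i + 1 else if (x : ℕ) = i + 1 then i else (x : ℕ) := by
  rw [simpleT_eq_swap hi, Equiv.swap_apply_def]
  rcases eq_or_ne (x : ℕ) i with h1 | h1
  · rw [if_pos (Fin.ext h1), if_pos h1]
  · rw [if_neg (fun hc => h1 (congrArg Fin.val hc)), if_neg h1]
    rcases eq_or_ne (x : ℕ) (i + 1) with h2 | h2
    · rw [if_pos (Fin.ext h2), if_pos h2]
    · rw [if_neg (fun hc => h2 (congrArg Fin.val hc)), if_neg h2]

lemma simpleT_mul_self (i : ℕ) : simpleT n i * simpleT n i = 1 := by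
  by_cases hi : i + 1 < n
  · rw [simpleT_eq_swap hi, Equiv.swap_mul_self]
  · rw [simpleT_eq_one hi, mul_one]

lemma simpleT_apply_apply (i : ℕ) (x : Fin n) : simpleT n i (simpleT n i x) = x := by
  rw [← Equiv.Perm.mul_apply, simpleT_mul_self, Equiv.Perm.one_apply]

lemma simpleT_inv (i : ℕ) : (simpleT n i)⁻¹ = simpleT n i :=
  inv_eq_of_mul_eq_one_right (simpleT_mul_self i)

lemma simpleT_fix {i : ℕ} (hi : i + 1 < n) {x : Fin n} (h1 : (x : ℕ) ≠ i) (h2 : (x : ℕ) ≠ i + 1) :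
    simpleT n i x = x := by
  apply Fin.ext
  rw [simpleT_apply_nat hi, if_neg h1, if_neg h2]

lemma simpleT_apply_left {i : ℕ} (hi : i + 1 < n) :
    simpleT n i ⟨i, Nat.lt_of_succ_lt hi⟩ = ⟨i + 1, hi⟩ := by
  apply Fin.ext
  rw [simpleT_apply_nat hi]
  simp

lemma simpleT_apply_right {i : ℕ} (hi : i + 1 < n) :
    simpleT n i ⟨i + 1, hi⟩ = ⟨i, Nat.lt_of_succ_lt hi⟩ := by
  apply Fin.ext
  rw [simpleT_apply_nat hi]
  simp

/-- swapping by `s_i` preserves strict order except on the pair `(i, i+1)`. -/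
lemma simpleT_lt {i : ℕ} (hi : i + 1 < n) {a b : Fin n} (hab : a < b)
    (hne : ¬ ((a : ℕ) = i ∧ (b : ℕ) = i + 1)) :
    (simpleT n i a : ℕ) < (simpleT n i b : ℕ) := by
  rw [Fin.lt_def] at hab
  rw [simpleT_apply_nat hi, simpleT_apply_nat hi]
  have hbn : (b : ℕ) < n := b.isLt
  split_ifs <;> omega

lemma simpleT_not_lt {i : ℕ} (hi : i + 1 < n) {a b : Fin n} (hab : a < b)
    (h : ¬ ((simpleT n i a : ℕ) < (simpleT n i b : ℕ))) : a = ⟨i, Nat.lt_of_succ_lt hi⟩ ∧ b = ⟨i + 1, hi⟩ := by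
  by_contra hc
  apply h
  apply simpleT_lt hi hab
  rintro ⟨h1, h2⟩
  exact hc ⟨Fin.ext h1, Fin.ext h2⟩

end AuxProof

section AuxProof2

open Finset

variable {n : ℕ}

lemma mem_invSet {w : Equiv.Perm (Fin n)} {a b : Fin n} :
    (a, b) ∈ invSet n w ↔ a < b ∧ w b < w a := by
  rw [invSet, Finset.mem_filter]
  simp

lemma linv_mul_asc {i : ℕ} (hi : i + 1 < n) {w : Equiv.Perm (Fin n)}
    (h : (w ⟨i, Nat.lt_of_succ_lt hi⟩ : ℕ) < (w ⟨i + 1, hi⟩ : ℕ)) :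
    linv n (w * simpleT n i) = linv n w + 1 := by
  set i0 : Fin n := ⟨i, Nat.lt_of_succ_lt hi⟩ with hi0
  set ip1 : Fin n := ⟨i + 1, hi⟩ with hip1
  set s := simpleT n i with hs
  have hss : ∀ x, s (s x) = x := simpleT_apply_apply i
  have hsl : s i0 = ip1 := simpleT_apply_left hi
  have hsr : s ip1 = i0 := simpleT_apply_right hi
  have hmem : (i0, ip1) ∈ invSet n (w * s) := by
    rw [mem_invSet]
    constructor
    · rw [Fin.lt_def]; simp [hi0, hip1]
    · simp only [Equiv.Perm.mul_apply, hsl, hsr]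
      rwa [Fin.lt_def]
  have hcard : ((invSet n (w * s)).erase (i0, ip1)).card = (invSet n w).card := by
    apply Finset.card_nbij' (fun p => (s p.1, s p.2)) (fun p => (s p.1, s p.2))
    · rintro ⟨a, b⟩ hp
      simp only [Finset.mem_coe] at hp ⊢
      rw [Finset.mem_erase, mem_invSet] at hp
      obtain ⟨hne, hab, hinv⟩ := hp
      rw [mem_invSet]
      constructor
      · rw [Fin.lt_def]
        apply simpleT_lt hi hab
        rintro ⟨h1, h2⟩
        exact hne (by rw [Prod.mk.injEq]; exact ⟨Fin.ext h1, Fin.ext h2⟩)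
      · simpa only [Equiv.Perm.mul_apply] using hinv
    · rintro ⟨a, b⟩ hp
      simp only [Finset.mem_coe] at hp ⊢
      rw [mem_invSet] at hp
      obtain ⟨hab, hinv⟩ := hp
      rw [Finset.mem_erase, mem_invSet]
      have hne : ¬ ((a : ℕ) = i ∧ (b : ℕ) = i + 1) := by
        rintro ⟨h1, h2⟩
        have ha : a = i0 := Fin.ext h1
        have hb : b = ip1 := Fin.ext h2
        rw [ha, hb, Fin.lt_def] at hinv
        omega
      refine ⟨?_, ?_, ?_⟩
      · intro hc
        rw [Prod.mk.injEq] at hc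
        obtain ⟨h1, h2⟩ := hc
        have ha : a = ip1 := by rw [← hss a, h1, hsl]
        have hb : b = i0 := by rw [← hss b, h2, hsr]
        rw [ha, hb, Fin.lt_def] at hab
        simp [hi0, hip1] at hab
      · rw [Fin.lt_def]
        exact simpleT_lt hi hab hne
      · simp only [Equiv.Perm.mul_apply, hss]
        exact hinv
    · rintro ⟨a, b⟩ _
      simp [hss]
    · rintro ⟨a, b⟩ _
      simp [hss]
  have h2 := Finset.card_erase_add_one hmem
  rw [linv, linv, ← h2, hcard]

lemma linv_mul_desc {i : ℕ} (hi : i + 1 < n) {w : Equiv.Perm (Fin n)}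
    (h : (w ⟨i + 1, hi⟩ : ℕ) < (w ⟨i, Nat.lt_of_succ_lt hi⟩ : ℕ)) :
    linv n (w * simpleT n i) + 1 = linv n w := by
  have h2 : ((w * simpleT n i) ⟨i, Nat.lt_of_succ_lt hi⟩ : ℕ) <
      ((w * simpleT n i) ⟨i + 1, hi⟩ : ℕ) := by
    simp only [Equiv.Perm.mul_apply, simpleT_apply_left hi, simpleT_apply_right hi]
    exact h
  have := linv_mul_asc hi h2
  rw [mul_assoc, simpleT_mul_self, mul_one] at this
  omega

lemma linv_inv (w : Equiv.Perm (Fin n)) : linv n w⁻¹ = linv n w := by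
  rw [linv, linv]
  apply Finset.card_nbij' (fun p => (w⁻¹ p.2, w⁻¹ p.1)) (fun p => (w p.2, w p.1))
  · rintro ⟨a, b⟩ hp
    simp only [Finset.mem_coe] at hp ⊢
    rw [mem_invSet] at hp
    rw [mem_invSet]
    obtain ⟨hab, hinv⟩ := hp
    refine ⟨hinv, ?_⟩
    simpa [Equiv.Perm.coe_inv, Equiv.apply_symm_apply] using hab
  · rintro ⟨a, b⟩ hp
    simp only [Finset.mem_coe] at hp ⊢
    rw [mem_invSet] at hp
    rw [mem_invSet]
    obtain ⟨hab, hinv⟩ := hp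
    refine ⟨hinv, ?_⟩
    simpa [Equiv.Perm.coe_inv, Equiv.symm_apply_apply] using hab
  · rintro ⟨a, b⟩ _; simp
  · rintro ⟨a, b⟩ _; simp

lemma linv_mul_left_asc {i : ℕ} (hi : i + 1 < n) {w : Equiv.Perm (Fin n)}
    (h : (w⁻¹ ⟨i, Nat.lt_of_succ_lt hi⟩ : ℕ) < (w⁻¹ ⟨i + 1, hi⟩ : ℕ)) :
    linv n (simpleT n i * w) = linv n w + 1 := by
  have h2 : linv n (w⁻¹ * simpleT n i) = linv n w⁻¹ + 1 := linv_mul_asc hi h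
  have h3 : (simpleT n i * w)⁻¹ = w⁻¹ * simpleT n i := by
    rw [mul_inv_rev, simpleT_inv]
  rw [← linv_inv (simpleT n i * w), h3, h2, linv_inv]

lemma linv_mul_left_desc {i : ℕ} (hi : i + 1 < n) {w : Equiv.Perm (Fin n)}
    (h : (w⁻¹ ⟨i + 1, hi⟩ : ℕ) < (w⁻¹ ⟨i, Nat.lt_of_succ_lt hi⟩ : ℕ)) :
    linv n (simpleT n i * w) + 1 = linv n w := by
  have h2 : linv n (w⁻¹ * simpleT n i) + 1 = linv n w⁻¹ := linv_mul_desc hi h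
  have h3 : (simpleT n i * w)⁻¹ = w⁻¹ * simpleT n i := by
    rw [mul_inv_rev, simpleT_inv]
  rw [← linv_inv (simpleT n i * w), h3, h2, linv_inv]

end AuxProof2

section AuxProof3

open Finset

variable {n : ℕ}

lemma wordProd_nil : wordProd n [] = 1 := rfl

lemma wordProd_append_single (l : List ℕ) (i : ℕ) :
    wordProd n (l ++ [i]) = wordProd n l * simpleT n i := by
  rw [wordProd, wordProd, List.map_append, List.prod_append]
  simp

lemma fin_vals_ne {w : Equiv.Perm (Fin n)} {i : ℕ} (hi : i + 1 < n) :
    (w ⟨i, Nat.lt_of_succ_lt hi⟩ : ℕ) ≠ (w ⟨i + 1, hi⟩ : ℕ) := by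
  intro hc
  have := w.injective (Fin.ext hc)
  simp [Fin.ext_iff] at this

lemma linv_wordProd_le (l : List ℕ) : linv n (wordProd n l) ≤ l.length := by
  induction l using List.reverseRecOn with
  | nil => rw [wordProd_nil, linv_one]; exact Nat.zero_le _
  | append_singleton l i ih =>
    rw [wordProd_append_single]
    by_cases hi : i + 1 < n
    · set w := wordProd n l
      rcases lt_or_gt_of_ne (fin_vals_ne (w := w) hi) with h | h
      · have := linv_mul_asc hi h
        simp only [List.length_append, List.length_singleton]
        omega
      · have := linv_mul_desc hi h
        simp only [List.length_append, List.length_singleton]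
        omega
    · rw [simpleT_eq_one hi, mul_one]
      simp only [List.length_append, List.length_singleton]
      omega

lemma eq_one_of_no_descent {w : Equiv.Perm (Fin n)}
    (h : ∀ i : ℕ, ∀ hi : i + 1 < n, (w ⟨i, Nat.lt_of_succ_lt hi⟩ : ℕ) < (w ⟨i + 1, hi⟩ : ℕ)) :
    w = 1 := by
  -- first: k ≤ w ⟨k, _⟩ for all k
  have hle : ∀ k : ℕ, ∀ hk : k < n, k ≤ (w ⟨k, hk⟩ : ℕ) := by
    intro k
    induction k with
    | zero => intro hk; exact Nat.zero_le _
    | succ m ihm =>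
      intro hk
      have hm : m + 1 < n := hk
      have h1 := h m hm
      have h2 := ihm (Nat.lt_of_succ_lt hm)
      omega
  have hlex : ∀ x : Fin n, (x : ℕ) ≤ (w x : ℕ) := by
    intro x
    have := hle (x : ℕ) x.isLt
    simpa using this
  -- sums are equal
  have hsum : ∑ x : Fin n, ((x : ℕ)) = ∑ x : Fin n, ((w x : ℕ)) :=
    (Equiv.sum_comp w (fun x => (x : ℕ))).symm
  have heq : ∀ x : Fin n, (x : ℕ) = (w x : ℕ) := by
    by_contra hc
    push_neg at hc
    obtain ⟨x, hx⟩ := hc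
    have hlt : (x : ℕ) < (w x : ℕ) := lt_of_le_of_ne (hlex x) hx
    have : ∑ x : Fin n, ((x : ℕ)) < ∑ x : Fin n, ((w x : ℕ)) :=
      Finset.sum_lt_sum (fun i _ => hlex i) ⟨x, Finset.mem_univ x, hlt⟩
    omega
  apply Equiv.ext
  intro x
  exact ((Fin.ext (heq x).symm) : w x = x)

lemma descent_of_ne_one {w : Equiv.Perm (Fin n)} (hw : w ≠ 1) :
    ∃ i : ℕ, ∃ hi : i + 1 < n, (w ⟨i + 1, hi⟩ : ℕ) < (w ⟨i, Nat.lt_of_succ_lt hi⟩ : ℕ) := by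
  by_contra hc
  push_neg at hc
  apply hw
  apply eq_one_of_no_descent
  intro i hi
  have h1 := hc i hi
  have h2 := fin_vals_ne (w := w) hi
  omega

lemma exists_word_aux : ∀ k : ℕ, ∀ w : Equiv.Perm (Fin n), linv n w = k →
    ∃ l : List ℕ, wordProd n l = w ∧ l.length = linv n w := by
  intro k
  induction k using Nat.strong_induction_on with
  | _ k ih =>
    intro w hw
    by_cases hw1 : w = 1
    · exact ⟨[], by rw [hw1, wordProd_nil], by rw [hw1, linv_one]; rfl⟩
    · obtain ⟨i, hi, hdesc⟩ := descent_of_ne_one hw1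
      have hstep : linv n (w * simpleT n i) + 1 = linv n w := linv_mul_desc hi hdesc
      obtain ⟨l, hl1, hl2⟩ := ih (linv n (w * simpleT n i)) (by omega) (w * simpleT n i) rfl
      refine ⟨l ++ [i], ?_, ?_⟩
      · rw [wordProd_append_single, hl1, mul_assoc, simpleT_mul_self, mul_one]
      · simp only [List.length_append, List.length_singleton]
        omega

lemma len_eq_linv (w : Equiv.Perm (Fin n)) : len n w = linv n w := by
  obtain ⟨l, hl1, hl2⟩ := exists_word_aux (linv n w) w rfl
  apply le_antisymm
  · exact Nat.sInf_le ⟨l, hl2, hl1⟩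
  · have hne : {p | ∃ l : List ℕ, l.length = p ∧ wordProd n l = w}.Nonempty :=
      ⟨l.length, l, rfl, hl1⟩
    obtain ⟨m, hm1, hm2⟩ := Nat.sInf_mem hne
    rw [len, ← hm1, ← hm2]
    exact linv_wordProd_le m

end AuxProof3

section AuxProof4

open Finset

variable {n : ℕ}

lemma demStepR_degen {i : ℕ} (hi : ¬ i + 1 < n) (w : Equiv.Perm (Fin n)) :
    demStepR n w i = w := by
  rw [demStepR, simpleT_eq_one hi, mul_one, if_neg (lt_irrefl _)]

lemma demStepL_degen {i : ℕ} (hi : ¬ i + 1 < n) (w : Equiv.Perm (Fin n)) :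
    demStepL n i w = w := by
  rw [demStepL, simpleT_eq_one hi, one_mul, if_neg (lt_irrefl _)]

lemma demStepR_asc {i : ℕ} (hi : i + 1 < n) {w : Equiv.Perm (Fin n)}
    (h : (w ⟨i, Nat.lt_of_succ_lt hi⟩ : ℕ) < (w ⟨i + 1, hi⟩ : ℕ)) :
    demStepR n w i = w * simpleT n i := by
  rw [demStepR, if_pos]
  rw [len_eq_linv, len_eq_linv, linv_mul_asc hi h]
  omega

lemma demStepR_desc {i : ℕ} (hi : i + 1 < n) {w : Equiv.Perm (Fin n)}
    (h : (w ⟨i + 1, hi⟩ : ℕ) < (w ⟨i, Nat.lt_of_succ_lt hi⟩ : ℕ)) :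
    demStepR n w i = w := by
  rw [demStepR, if_neg]
  rw [len_eq_linv, len_eq_linv]
  have := linv_mul_desc hi h
  omega

lemma demStepL_asc {i : ℕ} (hi : i + 1 < n) {w : Equiv.Perm (Fin n)}
    (h : (w⁻¹ ⟨i, Nat.lt_of_succ_lt hi⟩ : ℕ) < (w⁻¹ ⟨i + 1, hi⟩ : ℕ)) :
    demStepL n i w = simpleT n i * w := by
  rw [demStepL, if_pos]
  rw [len_eq_linv, len_eq_linv, linv_mul_left_asc hi h]
  omega

lemma demStepL_desc {i : ℕ} (hi : i + 1 < n) {w : Equiv.Perm (Fin n)}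
    (h : (w⁻¹ ⟨i + 1, hi⟩ : ℕ) < (w⁻¹ ⟨i, Nat.lt_of_succ_lt hi⟩ : ℕ)) :
    demStepL n i w = w := by
  rw [demStepL, if_neg]
  rw [len_eq_linv, len_eq_linv]
  have := linv_mul_left_desc hi h
  omega

/-- the lifting property. -/
lemma lifting {i j : ℕ} (hi : i + 1 < n) (hj : j + 1 < n) {u : Equiv.Perm (Fin n)}
    (h1 : (u⁻¹ ⟨i, Nat.lt_of_succ_lt hi⟩ : ℕ) < (u⁻¹ ⟨i + 1, hi⟩ : ℕ))
    (h2 : (u ⟨j, Nat.lt_of_succ_lt hj⟩ : ℕ) < (u ⟨j + 1, hj⟩ : ℕ))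
    (h3 : ¬ (((u * simpleT n j)⁻¹ ⟨i, Nat.lt_of_succ_lt hi⟩ : ℕ) <
          ((u * simpleT n j)⁻¹ ⟨i + 1, hi⟩ : ℕ))) :
    simpleT n i * u = u * simpleT n j := by
  set i0 : Fin n := ⟨i, Nat.lt_of_succ_lt hi⟩
  set ip1 : Fin n := ⟨i + 1, hi⟩
  set j0 : Fin n := ⟨j, Nat.lt_of_succ_lt hj⟩
  set jp1 : Fin n := ⟨j + 1, hj⟩
  have hv : ∀ x : Fin n, (u * simpleT n j)⁻¹ x = simpleT n j (u⁻¹ x) := by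
    intro x
    rw [mul_inv_rev, simpleT_inv, Equiv.Perm.mul_apply]
  rw [hv, hv] at h3
  have hlt : u⁻¹ i0 < u⁻¹ ip1 := by rw [Fin.lt_def]; exact h1
  obtain ⟨ha0, hb0⟩ := simpleT_not_lt hj hlt h3
  have ha : u⁻¹ i0 = j0 := ha0
  have hb : u⁻¹ ip1 = jp1 := hb0
  -- u⁻¹ i0 = j0, u⁻¹ ip1 = jp1
  have hu1 : u j0 = i0 := by rw [← ha, Equiv.Perm.coe_inv, Equiv.apply_symm_apply]
  have hu2 : u jp1 = ip1 := by rw [← hb, Equiv.Perm.coe_inv, Equiv.apply_symm_apply]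
  apply Equiv.ext
  intro x
  rw [Equiv.Perm.mul_apply, Equiv.Perm.mul_apply]
  rcases eq_or_ne x j0 with hx | hx
  · rw [hx, hu1, simpleT_apply_left hi, simpleT_apply_left hj, hu2]
  rcases eq_or_ne x jp1 with hx2 | hx2
  · rw [hx2, hu2, simpleT_apply_right hi, simpleT_apply_right hj, hu1]
  have hxj : simpleT n j x = x := by
    apply simpleT_fix hj
    · exact fun hc => hx (Fin.ext hc)
    · exact fun hc => hx2 (Fin.ext hc)
  rw [hxj]
  apply simpleT_fix hi
  · intro hc
    apply hx
    have : u x = i0 := Fin.ext hc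
    rw [← ha, ← this, Equiv.Perm.coe_inv, Equiv.symm_apply_apply]
  · intro hc
    apply hx2
    have : u x = ip1 := Fin.ext hc
    rw [← hb, ← this, Equiv.Perm.coe_inv, Equiv.symm_apply_apply]

lemma demStep_comm (i j : ℕ) (u : Equiv.Perm (Fin n)) :
    demStepR n (demStepL n i u) j = demStepL n i (demStepR n u j) := by
  by_cases hi : i + 1 < n
  swap
  · rw [demStepL_degen hi, demStepL_degen hi]
  by_cases hj : j + 1 < n
  swap
  · rw [demStepR_degen hj, demStepR_degen hj]
  rcases lt_or_gt_of_ne (fin_vals_ne (w := u⁻¹) hi) with hL | hL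
  · -- left ascent : s * u longer
    rcases lt_or_gt_of_ne (fin_vals_ne (w := u) hj) with hR | hR
    · -- right ascent
      rw [demStepR_asc hj hR, demStepL_asc hi hL]
      by_cases hX : (((u * simpleT n j)⁻¹ ⟨i, Nat.lt_of_succ_lt hi⟩ : Fin n) : ℕ) < (((u * simpleT n j)⁻¹ ⟨i + 1, hi⟩ : Fin n) : ℕ)
      · -- both go up
        rw [demStepL_asc hi hX]
        have hY : (((simpleT n i * u) ⟨j, Nat.lt_of_succ_lt hj⟩ : Fin n) : ℕ) < (((simpleT n i * u) ⟨j + 1, hj⟩ : Fin n) : ℕ) := by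
          -- linv computation: s*u*t has linv = linv u + 2
          have e1 : linv n (simpleT n i * u) = linv n u + 1 := linv_mul_left_asc hi hL
          have e2 : linv n (u * simpleT n j) = linv n u + 1 := linv_mul_asc hj hR
          have e3 : linv n (simpleT n i * (u * simpleT n j)) = linv n u + 2 := by
            rw [linv_mul_left_asc hi hX, e2]
          rcases lt_or_gt_of_ne (fin_vals_ne (w := simpleT n i * u) hj) with h | h
          · exact h
          · exfalso
            have := linv_mul_desc hj h
            rw [e1] at this
            rw [← mul_assoc] at e3
            omega
        rw [demStepR_asc hj hY, mul_assoc]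
      · -- lifting case
        have hlift := lifting hi hj hL hR hX
        have hXd : (((u * simpleT n j)⁻¹ ⟨i + 1, hi⟩ : Fin n) : ℕ) < (((u * simpleT n j)⁻¹ ⟨i, Nat.lt_of_succ_lt hi⟩ : Fin n) : ℕ) := by
          have := fin_vals_ne (w := (u * simpleT n j)⁻¹) hi
          omega
        rw [demStepL_desc hi hXd]
        have hYd : (((simpleT n i * u) ⟨j + 1, hj⟩ : Fin n) : ℕ) < (((simpleT n i * u) ⟨j, Nat.lt_of_succ_lt hj⟩ : Fin n) : ℕ) := by
          have e1 : linv n (simpleT n i * u) = linv n u + 1 := linv_mul_left_asc hi hL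
          have e2 : linv n (u * simpleT n j) = linv n u + 1 := linv_mul_asc hj hR
          rcases lt_or_gt_of_ne (fin_vals_ne (w := simpleT n i * u) hj) with h | h
          · exfalso
            have := linv_mul_asc hj h
            rw [e1, hlift] at this
            rw [mul_assoc, simpleT_mul_self, mul_one] at this
            omega
          · exact h
        rw [demStepR_desc hj hYd, hlift]
    · -- right descent
      rw [demStepR_desc hj hR, demStepL_asc hi hL]
      have hYd : (((simpleT n i * u) ⟨j + 1, hj⟩ : Fin n) : ℕ) < (((simpleT n i * u) ⟨j, Nat.lt_of_succ_lt hj⟩ : Fin n) : ℕ) := by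
        have e1 : linv n (simpleT n i * u) = linv n u + 1 := linv_mul_left_asc hi hL
        have e2 : linv n (u * simpleT n j) + 1 = linv n u := linv_mul_desc hj hR
        rcases lt_or_gt_of_ne (fin_vals_ne (w := simpleT n i * u) hj) with h | h
        · exfalso
          have e3 := linv_mul_asc hj h
          -- linv (s*u*t) = linv u + 2 ; but also linv(s*(u*t)) ≤ linv (u*t) + 1 = linv u
          rcases lt_or_gt_of_ne (fin_vals_ne (w := (u * simpleT n j)⁻¹) hi) with h4 | h4
          · have h6 := linv_mul_left_asc hi h4
            rw [← mul_assoc] at h6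
            omega
          · have h6 := linv_mul_left_desc hi h4
            rw [← mul_assoc] at h6
            omega
        · exact h
      rw [demStepR_desc hj hYd]
  · -- left descent
    rcases lt_or_gt_of_ne (fin_vals_ne (w := u) hj) with hR | hR
    · -- right ascent
      rw [demStepR_asc hj hR, demStepL_desc hi hL]
      have hX : (((u * simpleT n j)⁻¹ ⟨i + 1, hi⟩ : Fin n) : ℕ) < (((u * simpleT n j)⁻¹ ⟨i, Nat.lt_of_succ_lt hi⟩ : Fin n) : ℕ) := by
        have e1 : linv n (simpleT n i * u) + 1 = linv n u := linv_mul_left_desc hi hL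
        have e2 : linv n (u * simpleT n j) = linv n u + 1 := linv_mul_asc hj hR
        rcases lt_or_gt_of_ne (fin_vals_ne (w := (u * simpleT n j)⁻¹) hi) with h4 | h4
        · exfalso
          have e3 := linv_mul_left_asc hi h4
          -- linv (s*(u*t)) = linv u + 2, but linv(s*(u*t)) ≤ linv(s*u)+1 = linv u
          rcases lt_or_gt_of_ne (fin_vals_ne (w := simpleT n i * u) hj) with h5 | h5
          · have h6 := linv_mul_asc hj h5
            rw [← mul_assoc] at e3
            omega
          · have h6 := linv_mul_desc hj h5
            rw [← mul_assoc] at e3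
            omega
        · exact h4
      rw [demStepL_desc hi hX, demStepR_asc hj hR]
    · -- both descents
      rw [demStepR_desc hj hR, demStepL_desc hi hL, demStepR_desc hj hR]

lemma demWord_append_single (l : List ℕ) (i : ℕ) :
    demWord n (l ++ [i]) = demStepR n (demWord n l) i := by
  rw [demWord, demWord, List.foldl_append]
  rfl

lemma foldl_demStepL (l : List ℕ) (i : ℕ) :
    ∀ u : Equiv.Perm (Fin n), List.foldl (demStepR n) (demStepL n i u) l =
      demStepL n i (List.foldl (demStepR n) u l) := by
  induction l with
  | nil => intro u; rfl
  | cons j l ih =>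
    intro u
    simp only [List.foldl_cons]
    rw [demStep_comm, ih]

lemma demStep_one (i : ℕ) : demStepR n 1 i = demStepL n i 1 := by
  rw [demStepR, demStepL, one_mul, mul_one]

lemma demWord_cons (i : ℕ) (l : List ℕ) :
    demWord n (i :: l) = demStepL n i (demWord n l) := by
  rw [demWord, demWord, List.foldl_cons, demStep_one, foldl_demStepL]

lemma demWord_self_append (l : List ℕ) (i : ℕ) :
    demWord n ((l ++ [i]).reverse ++ (l ++ [i])) =
      demStepL n i (demStepR n (demWord n (l.reverse ++ l)) i) := by
  have h1 : (l ++ [i]).reverse ++ (l ++ [i]) = i :: ((l.reverse ++ l) ++ [i]) := by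
    rw [List.reverse_append]
    simp [List.append_assoc]
  rw [h1, demWord_cons, demWord_append_single]

end AuxProof4

section AuxProof5

open Finset

variable {n : ℕ}

lemma cycCount_one : cycCount n 1 = n := by
  rw [cycCount]
  have : (Finset.univ.filter fun i : Fin n => i ≤ (1 : Equiv.Perm (Fin n)) i) = Finset.univ := by
    apply Finset.filter_true_of_mem
    intro i _
    exact le_refl i
  rw [this, Finset.card_univ, Fintype.card_fin]

/-- number of fixed points -/
noncomputable def fixc (n : ℕ) (z : Equiv.Perm (Fin n)) : ℕ :=
  (Finset.univ.filter fun x : Fin n => z x = x).card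

lemma apply_apply_self {z : Equiv.Perm (Fin n)} (hz : z * z = 1) (x : Fin n) : z (z x) = x := by
  rw [← Equiv.Perm.mul_apply, hz, Equiv.Perm.one_apply]

lemma two_cycCount {z : Equiv.Perm (Fin n)} (hz : z * z = 1) :
    2 * cycCount n z = n + fixc n z := by
  set P := Finset.univ.filter fun x : Fin n => x ≤ z x with hP
  set Q := Finset.univ.filter fun x : Fin n => z x ≤ x with hQ
  have hPQ : P.card = Q.card := by
    apply Finset.card_nbij' (fun x => z x) (fun x => z x)
    · intro x hx
      simp only [Finset.mem_coe] at hx ⊢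
      rw [hP, Finset.mem_filter] at hx
      rw [hQ, Finset.mem_filter]
      exact ⟨Finset.mem_univ _, by rw [apply_apply_self hz]; exact hx.2⟩
    · intro x hx
      simp only [Finset.mem_coe] at hx ⊢
      rw [hQ, Finset.mem_filter] at hx
      rw [hP, Finset.mem_filter]
      exact ⟨Finset.mem_univ _, by rw [apply_apply_self hz]; exact hx.2⟩
    · intro x _; exact apply_apply_self hz x
    · intro x _; exact apply_apply_self hz x
  have hunion : P ∪ Q = Finset.univ := by
    apply Finset.eq_univ_of_forall
    intro x
    rw [Finset.mem_union, hP, hQ, Finset.mem_filter, Finset.mem_filter]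
    rcases le_total x (z x) with h | h
    · exact Or.inl ⟨Finset.mem_univ _, h⟩
    · exact Or.inr ⟨Finset.mem_univ _, h⟩
  have hinter : P ∩ Q = Finset.univ.filter fun x : Fin n => z x = x := by
    ext x
    rw [Finset.mem_inter, hP, hQ, Finset.mem_filter, Finset.mem_filter, Finset.mem_filter]
    constructor
    · rintro ⟨⟨-, h1⟩, -, h2⟩
      exact ⟨Finset.mem_univ _, le_antisymm h2 h1⟩
    · rintro ⟨-, h⟩
      exact ⟨⟨Finset.mem_univ _, h.ge⟩, Finset.mem_univ _, h.le⟩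
  have hcards := Finset.card_union_add_card_inter P Q
  rw [hunion, hinter, Finset.card_univ, Fintype.card_fin] at hcards
  rw [cycCount, ← hP]
  rw [← hPQ] at hcards
  rw [fixc]
  omega

lemma fixc_conj {z : Equiv.Perm (Fin n)} (i : ℕ) :
    fixc n (simpleT n i * z * simpleT n i) = fixc n z := by
  rw [fixc, fixc]
  apply Finset.card_nbij' (fun x => simpleT n i x) (fun x => simpleT n i x)
  · intro x hx
    simp only [Finset.mem_coe] at hx ⊢
    rw [Finset.mem_filter] at hx ⊢
    refine ⟨Finset.mem_univ _, ?_⟩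
    have h2 := hx.2
    simp only [Equiv.Perm.mul_apply, simpleT_apply_apply] at h2
    have := congrArg (simpleT n i) h2
    rwa [simpleT_apply_apply] at this
  · intro x hx
    simp only [Finset.mem_coe] at hx ⊢
    rw [Finset.mem_filter] at hx ⊢
    refine ⟨Finset.mem_univ _, ?_⟩
    simp only [Equiv.Perm.mul_apply, simpleT_apply_apply]
    rw [hx.2]
  · intro x _; exact simpleT_apply_apply i x
  · intro x _; exact simpleT_apply_apply i x

lemma cycCount_mul_s {z : Equiv.Perm (Fin n)} {i : ℕ} (hi : i + 1 < n)
    (h1 : z ⟨i, Nat.lt_of_succ_lt hi⟩ = ⟨i, Nat.lt_of_succ_lt hi⟩)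
    (h2 : z ⟨i + 1, hi⟩ = ⟨i + 1, hi⟩) :
    cycCount n (z * simpleT n i) + 1 = cycCount n z := by
  have hset : (Finset.univ.filter fun x : Fin n => x ≤ (z * simpleT n i) x) =
      (Finset.univ.filter fun x : Fin n => x ≤ z x).erase ⟨i + 1, hi⟩ := by
    ext x
    rw [Finset.mem_erase, Finset.mem_filter, Finset.mem_filter]
    rcases eq_or_ne (x : ℕ) i with hx | hx
    · have hxe : x = (⟨i, Nat.lt_of_succ_lt hi⟩ : Fin n) := Fin.ext hx
      subst hxe
      simp only [Equiv.Perm.mul_apply, simpleT_apply_left hi, h2]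
      constructor
      · rintro ⟨-, -⟩
        refine ⟨?_, Finset.mem_univ _, ?_⟩
        · intro hc; rw [Fin.ext_iff] at hc; simp at hc
        · rw [h1]
      · rintro ⟨-, -⟩
        exact ⟨Finset.mem_univ _, by rw [Fin.le_def]; simp⟩
    rcases eq_or_ne (x : ℕ) (i + 1) with hx2 | hx2
    · have hxe : x = (⟨i + 1, hi⟩ : Fin n) := Fin.ext hx2
      subst hxe
      simp only [Equiv.Perm.mul_apply, simpleT_apply_right hi, h1]
      constructor
      · rintro ⟨-, hle⟩
        rw [Fin.le_def] at hle
        simp at hle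
      · rintro ⟨hne, -⟩
        exact absurd rfl hne
    · have hfix : simpleT n i x = x := simpleT_fix hi hx hx2
      simp only [Equiv.Perm.mul_apply, hfix]
      constructor
      · rintro ⟨-, h⟩
        exact ⟨fun hc => hx2 (congrArg Fin.val hc), Finset.mem_univ _, h⟩
      · rintro ⟨-, -, h⟩
        exact ⟨Finset.mem_univ _, h⟩
  have hmem : (⟨i + 1, hi⟩ : Fin n) ∈ Finset.univ.filter fun x : Fin n => x ≤ z x := by
    rw [Finset.mem_filter]
    exact ⟨Finset.mem_univ _, by rw [h2]⟩
  rw [cycCount, cycCount, hset, Finset.card_erase_add_one hmem]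

/-- The single-step lemma for the first part. -/
lemma tau_step (i : ℕ) {z : Equiv.Perm (Fin n)} (hz : z * z = 1) :
    (demStepL n i (demStepR n z i)) * (demStepL n i (demStepR n z i)) = 1 ∧
    linv n (demStepL n i (demStepR n z i)) + cycCount n z ≤
      cycCount n (demStepL n i (demStepR n z i)) + linv n z + 2 := by
  by_cases hi : i + 1 < n
  swap
  · rw [demStepR_degen hi, demStepL_degen hi]
    exact ⟨hz, by omega⟩
  have hzz : ∀ x, z (z x) = x := apply_apply_self hz
  have hzinv : z⁻¹ = z := inv_eq_of_mul_eq_one_right hz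
  have hss : ∀ x, simpleT n i (simpleT n i x) = x := simpleT_apply_apply i
  rcases lt_or_gt_of_ne (fin_vals_ne (w := z) hi) with hasc | hdesc
  swap
  · -- descent : both steps keep z
    rw [demStepR_desc hi hdesc]
    have hd2 : (z⁻¹ ⟨i + 1, hi⟩ : ℕ) < (z⁻¹ ⟨i, Nat.lt_of_succ_lt hi⟩ : ℕ) := by
      rw [hzinv]; exact hdesc
    rw [demStepL_desc hi hd2]
    exact ⟨hz, by omega⟩
  · -- ascent
    rw [demStepR_asc hi hasc]
    have hv : ∀ x, (z * simpleT n i)⁻¹ x = simpleT n i (z x) := by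
      intro x
      rw [mul_inv_rev, simpleT_inv, hzinv, Equiv.Perm.mul_apply]
    by_cases hfix : z ⟨i, Nat.lt_of_succ_lt hi⟩ = ⟨i, Nat.lt_of_succ_lt hi⟩ ∧
        z ⟨i + 1, hi⟩ = ⟨i + 1, hi⟩
    · -- commuting case : new element is z * s
      obtain ⟨h1, h2⟩ := hfix
      have hd2 : ((z * simpleT n i)⁻¹ ⟨i + 1, hi⟩ : ℕ) <
          ((z * simpleT n i)⁻¹ ⟨i, Nat.lt_of_succ_lt hi⟩ : ℕ) := by
        rw [hv, hv, h1, h2, simpleT_apply_left hi, simpleT_apply_right hi]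
        simp
      rw [demStepL_desc hi hd2]
      have hcomm2 : ∀ x, simpleT n i (z x) = z (simpleT n i x) := by
        intro x
        rcases eq_or_ne (x : ℕ) i with hx | hx
        · have : x = (⟨i, Nat.lt_of_succ_lt hi⟩ : Fin n) := Fin.ext hx
          subst this
          rw [h1, simpleT_apply_left hi, h2]
        rcases eq_or_ne (x : ℕ) (i + 1) with hx2 | hx2
        · have : x = (⟨i + 1, hi⟩ : Fin n) := Fin.ext hx2
          subst this
          rw [h2, simpleT_apply_right hi, h1]
        · rw [simpleT_fix hi hx hx2]
          apply simpleT_fix hi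
          · intro hc
            have : z x = ⟨i, Nat.lt_of_succ_lt hi⟩ := Fin.ext hc
            have := congrArg z this
            rw [hzz, h1] at this
            exact hx (congrArg Fin.val this)
          · intro hc
            have : z x = ⟨i + 1, hi⟩ := Fin.ext hc
            have := congrArg z this
            rw [hzz, h2] at this
            exact hx2 (congrArg Fin.val this)
      constructor
      · apply Equiv.ext
        intro x
        simp only [Equiv.Perm.mul_apply, Equiv.Perm.one_apply]
        rw [show simpleT n i (z (simpleT n i x)) = z (simpleT n i (simpleT n i x)) from
          hcomm2 (simpleT n i x), hss, hzz]
      · have e1 : linv n (z * simpleT n i) = linv n z + 1 := linv_mul_asc hi hasc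
        have e2 := cycCount_mul_s hi h1 h2
        omega
    · -- conjugation case : new element is s * z * s
      have hnepair : ¬ ((z ⟨i, Nat.lt_of_succ_lt hi⟩ : ℕ) = i ∧ (z ⟨i + 1, hi⟩ : ℕ) = i + 1) := by
        rintro ⟨hc1, hc2⟩
        exact hfix ⟨Fin.ext hc1, Fin.ext hc2⟩
      have hzlt : z ⟨i, Nat.lt_of_succ_lt hi⟩ < z ⟨i + 1, hi⟩ := by
        rw [Fin.lt_def]; exact hasc
      have ha2 : ((z * simpleT n i)⁻¹ ⟨i, Nat.lt_of_succ_lt hi⟩ : ℕ) <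
          ((z * simpleT n i)⁻¹ ⟨i + 1, hi⟩ : ℕ) := by
        rw [hv, hv]
        exact simpleT_lt hi hzlt hnepair
      rw [demStepL_asc hi ha2]
      have hinv2 : (simpleT n i * (z * simpleT n i)) * (simpleT n i * (z * simpleT n i)) = 1 := by
        apply Equiv.ext
        intro x
        simp only [Equiv.Perm.mul_apply, Equiv.Perm.one_apply, hss, hzz]
      refine ⟨hinv2, ?_⟩
      have e1 : linv n (z * simpleT n i) = linv n z + 1 := linv_mul_asc hi hasc
      have e2 : linv n (simpleT n i * (z * simpleT n i)) = linv n z + 2 := by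
        rw [linv_mul_left_asc hi ha2, e1]
      have e3 : cycCount n (simpleT n i * (z * simpleT n i)) = cycCount n z := by
        have f1 := two_cycCount hz
        have f2 := two_cycCount hinv2
        have f3 : fixc n (simpleT n i * (z * simpleT n i)) = fixc n z := by
          rw [← mul_assoc]
          exact fixc_conj i
        omega
      omega

end AuxProof5

section AuxProof6

open Finset

variable {n : ℕ}

lemma demWord_nil : demWord n [] = 1 := rfl

/-- The first part : for any word, the self Demazure product is an involution and
satisfies the length inequality. -/
lemma part_one (l : List ℕ) :
    (demWord n (l.reverse ++ l)) * (demWord n (l.reverse ++ l)) = 1 ∧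
    linv n (demWord n (l.reverse ++ l)) + n ≤
      cycCount n (demWord n (l.reverse ++ l)) + 2 * l.length := by
  induction l using List.reverseRecOn with
  | nil =>
    simp only [List.reverse_nil, List.append_nil, demWord_nil]
    rw [linv_one, cycCount_one]
    exact ⟨one_mul 1, by omega⟩
  | append_singleton l i ih =>
    rw [demWord_self_append]
    obtain ⟨ih1, ih2⟩ := ih
    obtain ⟨t1, t2⟩ := tau_step i ih1
    refine ⟨t1, ?_⟩
    simp only [List.length_append, List.length_singleton]
    omega

/-- maximum of the cycle of `x`. -/
noncomputable def mxv (n : ℕ) (y : Equiv.Perm (Fin n)) (x : Fin n) : ℕ :=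
  max (x : ℕ) ((y x : Fin n) : ℕ)

noncomputable def cntv (n : ℕ) (y : Equiv.Perm (Fin n)) (x : Fin n) : ℕ :=
  (Finset.univ.filter fun u : Fin n => mxv n y u < mxv n y x).card

/-- The canonical atom, as a function to ℕ. -/
noncomputable def Ffun (n : ℕ) (y : Equiv.Perm (Fin n)) (x : Fin n) : ℕ :=
  cntv n y x + (if (x : ℕ) < ((y x : Fin n) : ℕ) then 1 else 0)

lemma Ffun_one (x : Fin n) : Ffun n 1 x = (x : ℕ) := by
  rw [Ffun, cntv]
  have h1 : ∀ u : Fin n, mxv n 1 u = (u : ℕ) := by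
    intro u
    rw [mxv, Equiv.Perm.one_apply]
    exact max_self _
  simp only [h1, Equiv.Perm.one_apply, lt_irrefl, if_false, add_zero]
  have h2 : (Finset.univ.filter fun u : Fin n => (u : ℕ) < (x : ℕ)) = Finset.Iio x := by
    ext u
    rw [Finset.mem_filter, Finset.mem_Iio, Fin.lt_def]
    simp
  rw [h2]
  exact Fin.card_Iio x

end AuxProof6

section AuxProof7

open Finset

variable {n : ℕ}

lemma sswap_lt_iff (i p q : ℕ) (h1 : ¬(p = i ∧ q = i + 1)) (h2 : ¬(p = i + 1 ∧ q = i)) :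
    ((if p = i then i + 1 else if p = i + 1 then i else p) <
     (if q = i then i + 1 else if q = i + 1 then i else q)) ↔ p < q := by
  split_ifs <;> omega

lemma sswap_max (i p q : ℕ) (h1 : ¬(p = i ∧ q = i + 1)) (h2 : ¬(p = i + 1 ∧ q = i)) :
    max (if p = i then i + 1 else if p = i + 1 then i else p)
        (if q = i then i + 1 else if q = i + 1 then i else q) =
    (if max p q = i then i + 1 else if max p q = i + 1 then i else max p q) := by
  simp only [Nat.max_def]
  split_ifs <;> omega

lemma Ffun_commute {i : ℕ} (hi : i + 1 < n) {y : Equiv.Perm (Fin n)}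
    (hzz : ∀ x, y (y x) = x)
    (ha : y ⟨i, Nat.lt_of_succ_lt hi⟩ = ⟨i + 1, hi⟩) (x : Fin n) :
    Ffun n (y * simpleT n i) (simpleT n i x) = Ffun n y x := by
  have hb : y ⟨i + 1, hi⟩ = ⟨i, Nat.lt_of_succ_lt hi⟩ := by
    have := hzz ⟨i, Nat.lt_of_succ_lt hi⟩
    rwa [ha] at this
  set y' := y * simpleT n i with hy'
  have hy'i0 : y' ⟨i, Nat.lt_of_succ_lt hi⟩ = ⟨i, Nat.lt_of_succ_lt hi⟩ := by
    rw [hy', Equiv.Perm.mul_apply, simpleT_apply_left hi, hb]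
  have hy'ip1 : y' ⟨i + 1, hi⟩ = ⟨i + 1, hi⟩ := by
    rw [hy', Equiv.Perm.mul_apply, simpleT_apply_right hi, ha]
  have hy'fix : ∀ u : Fin n, (u : ℕ) ≠ i → (u : ℕ) ≠ i + 1 → y' u = y u := by
    intro u h1 h2
    rw [hy', Equiv.Perm.mul_apply, simpleT_fix hi h1 h2]
  -- mxv computations
  have hm_i0 : mxv n y ⟨i, Nat.lt_of_succ_lt hi⟩ = i + 1 := by
    rw [mxv, ha]; simp
  have hm_ip1 : mxv n y ⟨i + 1, hi⟩ = i + 1 := by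
    rw [mxv, hb]; simp
  have hm'_i0 : mxv n y' ⟨i, Nat.lt_of_succ_lt hi⟩ = i := by
    rw [mxv, hy'i0]; simp
  have hm'_ip1 : mxv n y' ⟨i + 1, hi⟩ = i + 1 := by
    rw [mxv, hy'ip1]; simp
  have hmne : ∀ u : Fin n, (u : ℕ) ≠ i → (u : ℕ) ≠ i + 1 →
      mxv n y u ≠ i ∧ mxv n y u ≠ i + 1 := by
    intro u h1 h2
    constructor
    · intro hc
      rw [mxv, Nat.max_def] at hc
      split_ifs at hc
      · -- (y u : ℕ) = i
        have h3 : y u = ⟨i, Nat.lt_of_succ_lt hi⟩ := Fin.ext hc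
        have h4 := congrArg y h3
        rw [hzz, ha] at h4
        exact h2 (congrArg Fin.val h4)
      · exact h1 hc
    · intro hc
      rw [mxv, Nat.max_def] at hc
      split_ifs at hc
      · have h3 : y u = ⟨i + 1, hi⟩ := Fin.ext hc
        have h4 := congrArg y h3
        rw [hzz, hb] at h4
        exact h1 (congrArg Fin.val h4)
      · exact h2 hc
  have hmx_eq : ∀ u : Fin n, (u : ℕ) ≠ i → (u : ℕ) ≠ i + 1 → mxv n y' u = mxv n y u := by
    intro u h1 h2
    rw [mxv, mxv, hy'fix u h1 h2]
  rcases eq_or_ne (x : ℕ) i with hx | hx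
  · -- x = i0 : goal Ffun y' ip1 = Ffun y i0
    have hxe : x = (⟨i, Nat.lt_of_succ_lt hi⟩ : Fin n) := Fin.ext hx
    subst hxe
    rw [simpleT_apply_left hi, Ffun, Ffun, hy'ip1, ha]
    simp only [lt_irrefl, if_false, add_zero]
    have h5 : ((⟨i, Nat.lt_of_succ_lt hi⟩ : Fin n) : ℕ) < ((⟨i + 1, hi⟩ : Fin n) : ℕ) := by simp
    rw [if_pos h5]
    rw [cntv, cntv, hm'_ip1, hm_i0]
    have hsets : (Finset.univ.filter fun u : Fin n => mxv n y' u < i + 1) =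
        insert (⟨i, Nat.lt_of_succ_lt hi⟩ : Fin n)
          (Finset.univ.filter fun u : Fin n => mxv n y u < i + 1) := by
      ext u
      rw [Finset.mem_filter, Finset.mem_insert, Finset.mem_filter]
      rcases eq_or_ne (u : ℕ) i with hu | hu
      · have hue : u = (⟨i, Nat.lt_of_succ_lt hi⟩ : Fin n) := Fin.ext hu
        subst hue
        rw [hm'_i0]
        simp
      rcases eq_or_ne (u : ℕ) (i + 1) with hu2 | hu2
      · have hue : u = (⟨i + 1, hi⟩ : Fin n) := Fin.ext hu2
        subst hue
        rw [hm'_ip1, hm_ip1]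
        simp [Fin.ext_iff]
      · rw [hmx_eq u hu hu2]
        have : u ≠ (⟨i, Nat.lt_of_succ_lt hi⟩ : Fin n) := fun hc => hu (congrArg Fin.val hc)
        simp [this]
    rw [hsets, Finset.card_insert_of_notMem]
    rw [Finset.mem_filter, hm_i0]
    simp
  rcases eq_or_ne (x : ℕ) (i + 1) with hx2 | hx2
  · -- x = ip1 : goal Ffun y' i0 = Ffun y ip1
    have hxe : x = (⟨i + 1, hi⟩ : Fin n) := Fin.ext hx2
    subst hxe
    rw [simpleT_apply_right hi, Ffun, Ffun, hy'i0, hb]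
    simp only [lt_irrefl, if_false, add_zero]
    have h5 : ¬ ((⟨i + 1, hi⟩ : Fin n) : ℕ) < ((⟨i, Nat.lt_of_succ_lt hi⟩ : Fin n) : ℕ) := by simp
    rw [if_neg h5, add_zero]
    rw [cntv, cntv, hm'_i0, hm_ip1]
    congr 1
    apply Finset.filter_congr
    intro u _
    rcases eq_or_ne (u : ℕ) i with hu | hu
    · have hue : u = (⟨i, Nat.lt_of_succ_lt hi⟩ : Fin n) := Fin.ext hu
      subst hue
      rw [hm'_i0, hm_i0]
      simp
    rcases eq_or_ne (u : ℕ) (i + 1) with hu2 | hu2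
    · have hue : u = (⟨i + 1, hi⟩ : Fin n) := Fin.ext hu2
      subst hue
      rw [hm'_ip1, hm_ip1]
      simp
    · rw [hmx_eq u hu hu2]
      have h6 := (hmne u hu hu2).1
      constructor <;> intro h7 <;> omega
  · -- generic x
    have hsx : simpleT n i x = x := simpleT_fix hi hx hx2
    rw [hsx, Ffun, Ffun, hy'fix x hx hx2]
    congr 1
    rw [cntv, cntv, hmx_eq x hx hx2]
    congr 1
    apply Finset.filter_congr
    intro u _
    have h6 := (hmne x hx hx2).1
    have h7 := (hmne x hx hx2).2
    rcases eq_or_ne (u : ℕ) i with hu | hu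
    · have hue : u = (⟨i, Nat.lt_of_succ_lt hi⟩ : Fin n) := Fin.ext hu
      subst hue
      rw [hm'_i0, hm_i0]
      constructor <;> intro h8 <;> omega
    rcases eq_or_ne (u : ℕ) (i + 1) with hu2 | hu2
    · have hue : u = (⟨i + 1, hi⟩ : Fin n) := Fin.ext hu2
      subst hue
      rw [hm'_ip1, hm_ip1]
    · rw [hmx_eq u hu hu2]

end AuxProof7

section AuxProof8

open Finset

variable {n : ℕ}

lemma Ffun_conj {i : ℕ} (hi : i + 1 < n) {y : Equiv.Perm (Fin n)}
    (hzz : ∀ x, y (y x) = x)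
    (hagt : i + 1 < (y ⟨i, Nat.lt_of_succ_lt hi⟩ : ℕ))
    (hbne : (y ⟨i + 1, hi⟩ : ℕ) ≠ i) (x : Fin n) :
    Ffun n (simpleT n i * (y * simpleT n i)) (simpleT n i x) = Ffun n y x := by
  set y' := simpleT n i * (y * simpleT n i) with hy'
  have hss : ∀ u, simpleT n i (simpleT n i u) = u := simpleT_apply_apply i
  have hy'app : ∀ u : Fin n, y' (simpleT n i u) = simpleT n i (y u) := by
    intro u
    rw [hy']
    simp only [Equiv.Perm.mul_apply, hss]
  -- nobody has cycle max = i
  have hk2 : ∀ u : Fin n, mxv n y u ≠ i := by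
    intro u hc
    rw [mxv, Nat.max_def] at hc
    split_ifs at hc with hle
    · -- (y u : ℕ) = i and (u:ℕ) ≤ (y u:ℕ)
      have h3 : y u = ⟨i, Nat.lt_of_succ_lt hi⟩ := Fin.ext hc
      have h4 := congrArg y h3
      rw [hzz] at h4
      have h5 := congrArg Fin.val h4
      rw [← h5] at hagt
      rw [h3] at hle
      simp only [h5] at hle
      -- hle : (u:ℕ) ≤ i, hagt : i + 1 < (u : ℕ)
      omega
    · -- (u : ℕ) = i
      have h3 : u = ⟨i, Nat.lt_of_succ_lt hi⟩ := Fin.ext hc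
      rw [h3] at hle
      simp only [Fin.val_mk] at hle
      omega
  -- the pair condition for arbitrary p = u, q = y u
  have hpair : ∀ u : Fin n, ¬ ((u : ℕ) = i ∧ (y u : ℕ) = i + 1) ∧
      ¬ ((u : ℕ) = i + 1 ∧ (y u : ℕ) = i) := by
    intro u
    constructor
    · rintro ⟨h1, h2⟩
      have : u = (⟨i, Nat.lt_of_succ_lt hi⟩ : Fin n) := Fin.ext h1
      rw [this] at h2
      omega
    · rintro ⟨h1, h2⟩
      have : u = (⟨i + 1, hi⟩ : Fin n) := Fin.ext h1
      rw [this] at h2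
      exact hbne h2
  -- values of s as ℕ-swap
  have hsval : ∀ u : Fin n, ((simpleT n i u : Fin n) : ℕ) =
      if (u : ℕ) = i then i + 1 else if (u : ℕ) = i + 1 then i else (u : ℕ) :=
    simpleT_apply_nat hi
  -- key conjugation formula for mxv
  have hk1 : ∀ u : Fin n, mxv n y' (simpleT n i u) =
      (if mxv n y u = i then i + 1 else if mxv n y u = i + 1 then i else mxv n y u) := by
    intro u
    rw [mxv, hy'app, hsval, hsval, mxv]
    exact sswap_max i (u : ℕ) ((y u : Fin n) : ℕ) (hpair u).1 (hpair u).2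
  -- count part
  have hcnt : cntv n y' (simpleT n i x) = cntv n y x := by
    rw [cntv, cntv]
    have hre : (Finset.univ.filter fun u : Fin n => mxv n y' u < mxv n y' (simpleT n i x)).card =
        (Finset.univ.filter fun u : Fin n => mxv n y' (simpleT n i u) < mxv n y' (simpleT n i x)).card := by
      apply Finset.card_nbij' (fun u => simpleT n i u) (fun u => simpleT n i u)
      · intro u hu
        simp only [Finset.mem_coe] at hu ⊢
        rw [Finset.mem_filter] at hu ⊢
        refine ⟨Finset.mem_univ _, ?_⟩
        rw [hss]
        exact hu.2
      · intro u hu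
        simp only [Finset.mem_coe] at hu ⊢
        rw [Finset.mem_filter] at hu ⊢
        exact ⟨Finset.mem_univ _, hu.2⟩
      · intro u _; exact hss u
      · intro u _; exact hss u
    rw [hre]
    congr 1
    apply Finset.filter_congr
    intro u _
    rw [hk1, hk1]
    exact sswap_lt_iff i (mxv n y u) (mxv n y x)
      (fun hc => (hk2 u) hc.1) (fun hc => (hk2 x) hc.2)
  -- indicator part
  have hind : (if ((simpleT n i x : Fin n) : ℕ) < ((y' (simpleT n i x) : Fin n) : ℕ) then 1 else 0) =
      (if (x : ℕ) < ((y x : Fin n) : ℕ) then (1:ℕ) else 0) := by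
    rw [hy'app, hsval, hsval]
    rw [if_congr (sswap_lt_iff i (x : ℕ) ((y x : Fin n) : ℕ) (hpair x).1 (hpair x).2) rfl rfl]
  rw [Ffun, Ffun, hcnt, hind]

end AuxProof8

section AuxProof9

open Finset

variable {n : ℕ}

lemma exists_atom : ∀ k : ℕ, ∀ y : Equiv.Perm (Fin n), linv n y = k → y * y = 1 →
    ∃ (w : Equiv.Perm (Fin n)) (l : List ℕ), wordProd n l = w ∧ l.length = linv n w ∧
      demWord n (l.reverse ++ l) = y ∧ linv n y + n = cycCount n y + 2 * linv n w ∧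
      (∀ x : Fin n, (w x : ℕ) = Ffun n y x) := by
  intro k
  induction k using Nat.strong_induction_on with
  | _ k ih =>
  intro y hk hy
  by_cases hy1 : y = 1
  · subst hy1
    refine ⟨1, [], wordProd_nil, ?_, demWord_nil, ?_, ?_⟩
    · rw [linv_one]; rfl
    · rw [linv_one, cycCount_one]; omega
    · intro x; rw [Ffun_one]; rfl
  have hzz : ∀ x, y (y x) = x := apply_apply_self hy
  have hyinv : y⁻¹ = y := inv_eq_of_mul_eq_one_right hy
  -- choose the largest point moved up
  obtain ⟨i, hi, hilt, hmax⟩ : ∃ i : ℕ, ∃ hi : i + 1 < n,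
      i < (y ⟨i, Nat.lt_of_succ_lt hi⟩ : ℕ) ∧
      ∀ j : Fin n, (j : ℕ) < (y j : ℕ) → (j : ℕ) ≤ i := by
    have hDne : (Finset.univ.filter fun j : Fin n => (j : ℕ) < (y j : ℕ)).Nonempty := by
      have hex : ∃ x : Fin n, y x ≠ x := by
        by_contra hc
        push_neg at hc
        exact hy1 (Equiv.ext hc)
      obtain ⟨x, hx⟩ := hex
      have hvne : ((y x : Fin n) : ℕ) ≠ (x : ℕ) := fun hc => hx (Fin.ext hc)
      rcases lt_or_gt_of_ne hvne with h | h
      · refine ⟨y x, ?_⟩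
        rw [Finset.mem_filter]
        refine ⟨Finset.mem_univ _, ?_⟩
        rw [hzz]
        exact h
      · exact ⟨x, by rw [Finset.mem_filter]; exact ⟨Finset.mem_univ _, h⟩⟩
    set i0 := (Finset.univ.filter fun j : Fin n => (j : ℕ) < (y j : ℕ)).max' hDne with hi0
    have hi0mem := (Finset.univ.filter fun j : Fin n => (j : ℕ) < (y j : ℕ)).max'_mem hDne
    rw [Finset.mem_filter] at hi0mem
    have hi0lt : (i0 : ℕ) < (y i0 : ℕ) := hi0mem.2
    have hilt : (i0 : ℕ) + 1 < n := lt_of_le_of_lt (Nat.succ_le_of_lt hi0lt) (y i0).isLt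
    refine ⟨(i0 : ℕ), hilt, ?_, ?_⟩
    · have : (⟨(i0 : ℕ), Nat.lt_of_succ_lt hilt⟩ : Fin n) = i0 := Fin.ext rfl
      rw [this]
      exact hi0lt
    · intro j hj
      have : j ∈ Finset.univ.filter fun j : Fin n => (j : ℕ) < (y j : ℕ) := by
        rw [Finset.mem_filter]; exact ⟨Finset.mem_univ _, hj⟩
      exact Finset.le_max' _ j this
  have hyip1 : (y ⟨i + 1, hi⟩ : ℕ) ≤ i + 1 := by
    by_contra hc
    push_neg at hc
    have := hmax ⟨i + 1, hi⟩ (by simpa using hc)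
    simp at this
  by_cases hcomm : (y ⟨i, Nat.lt_of_succ_lt hi⟩ : ℕ) = i + 1
  · -- commuting case
    have ha : y ⟨i, Nat.lt_of_succ_lt hi⟩ = ⟨i + 1, hi⟩ := Fin.ext hcomm
    have hb : y ⟨i + 1, hi⟩ = ⟨i, Nat.lt_of_succ_lt hi⟩ := by
      have := hzz ⟨i, Nat.lt_of_succ_lt hi⟩
      rwa [ha] at this
    set y' := y * simpleT n i with hy'def
    have hy'i0 : y' ⟨i, Nat.lt_of_succ_lt hi⟩ = ⟨i, Nat.lt_of_succ_lt hi⟩ := by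
      rw [hy'def, Equiv.Perm.mul_apply, simpleT_apply_left hi, hb]
    have hy'ip1 : y' ⟨i + 1, hi⟩ = ⟨i + 1, hi⟩ := by
      rw [hy'def, Equiv.Perm.mul_apply, simpleT_apply_right hi, ha]
    have hy'fix : ∀ u : Fin n, (u : ℕ) ≠ i → (u : ℕ) ≠ i + 1 → y' u = y u := by
      intro u h1 h2
      rw [hy'def, Equiv.Perm.mul_apply, simpleT_fix hi h1 h2]
    have hy'inv : y' * y' = 1 := by
      apply Equiv.ext
      intro x
      rw [Equiv.Perm.mul_apply, Equiv.Perm.one_apply]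
      rcases eq_or_ne (x : ℕ) i with hx | hx
      · have hxe : x = (⟨i, Nat.lt_of_succ_lt hi⟩ : Fin n) := Fin.ext hx
        rw [hxe, hy'i0, hy'i0]
      rcases eq_or_ne (x : ℕ) (i + 1) with hx2 | hx2
      · have hxe : x = (⟨i + 1, hi⟩ : Fin n) := Fin.ext hx2
        rw [hxe, hy'ip1, hy'ip1]
      · rw [hy'fix x hx hx2]
        have hyx1 : ((y x : Fin n) : ℕ) ≠ i := by
          intro hc
          have h3 : y x = ⟨i, Nat.lt_of_succ_lt hi⟩ := Fin.ext hc
          have h4 := congrArg y h3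
          rw [hzz, ha] at h4
          exact hx2 (congrArg Fin.val h4)
        have hyx2 : ((y x : Fin n) : ℕ) ≠ i + 1 := by
          intro hc
          have h3 : y x = ⟨i + 1, hi⟩ := Fin.ext hc
          have h4 := congrArg y h3
          rw [hzz, hb] at h4
          exact hx (congrArg Fin.val h4)
        rw [hy'fix (y x) hyx1 hyx2, hzz]
    have hdesc : (y ⟨i + 1, hi⟩ : ℕ) < (y ⟨i, Nat.lt_of_succ_lt hi⟩ : ℕ) := by
      rw [ha, hb]; simp
    have hlinv : linv n y' + 1 = linv n y := linv_mul_desc hi hdesc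
    have hcyc : cycCount n y + 1 = cycCount n y' := by
      have := cycCount_mul_s hi hy'i0 hy'ip1
      rw [hy'def, mul_assoc, simpleT_mul_self, mul_one] at this
      exact this
    obtain ⟨w', l', hw1, hw2, hw3, hw4, hw5⟩ := ih (linv n y') (by omega) y' rfl hy'inv
    have hwasc : (w' ⟨i, Nat.lt_of_succ_lt hi⟩ : ℕ) < (w' ⟨i + 1, hi⟩ : ℕ) := by
      rw [hw5, hw5]
      rw [Ffun, Ffun, hy'i0, hy'ip1]
      simp only [lt_irrefl, if_false, add_zero]
      rw [cntv, cntv]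
      have hm1 : mxv n y' ⟨i, Nat.lt_of_succ_lt hi⟩ = i := by rw [mxv, hy'i0]; simp
      have hm2 : mxv n y' ⟨i + 1, hi⟩ = i + 1 := by rw [mxv, hy'ip1]; simp
      rw [hm1, hm2]
      apply Finset.card_lt_card
      constructor
      · intro u hu
        rw [Finset.mem_filter] at hu ⊢
        exact ⟨hu.1, by omega⟩
      · intro hc
        have hmem : (⟨i, Nat.lt_of_succ_lt hi⟩ : Fin n) ∈
            Finset.univ.filter fun u : Fin n => mxv n y' u < i + 1 := by
          rw [Finset.mem_filter, hm1]
          simp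
        have := hc hmem
        rw [Finset.mem_filter, hm1] at this
        omega
    refine ⟨w' * simpleT n i, l' ++ [i], ?_, ?_, ?_, ?_, ?_⟩
    · rw [wordProd_append_single, hw1]
    · rw [linv_mul_asc hi hwasc]
      simp only [List.length_append, List.length_singleton]
      omega
    · rw [demWord_self_append, hw3]
      have hstep1 : demStepR n y' i = y := by
        rw [demStepR_asc hi (by rw [hy'i0, hy'ip1]; simp), hy'def, mul_assoc,
          simpleT_mul_self, mul_one]
      rw [hstep1]
      apply demStepL_desc hi
      rw [hyinv, ha, hb]
      simp
    · rw [linv_mul_asc hi hwasc]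
      omega
    · intro x
      rw [Equiv.Perm.mul_apply, hw5]
      rw [hy'def]
      exact Ffun_commute hi hzz ha x
  · -- conjugation case
    have hagt : i + 1 < (y ⟨i, Nat.lt_of_succ_lt hi⟩ : ℕ) := by omega
    have hbne : (y ⟨i + 1, hi⟩ : ℕ) ≠ i := by
      intro hc
      have h3 : y ⟨i + 1, hi⟩ = ⟨i, Nat.lt_of_succ_lt hi⟩ := Fin.ext hc
      have h4 := congrArg y h3
      rw [hzz] at h4
      have h5 := congrArg Fin.val h4
      simp only [Fin.val_mk] at h5
      omega
    set y' := simpleT n i * (y * simpleT n i) with hy'def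
    have hss : ∀ u, simpleT n i (simpleT n i u) = u := simpleT_apply_apply i
    have hy'app : ∀ u : Fin n, y' u = simpleT n i (y (simpleT n i u)) := by
      intro u
      rw [hy'def]
      simp only [Equiv.Perm.mul_apply]
    have hy'inv : y' * y' = 1 := by
      apply Equiv.ext
      intro x
      simp only [Equiv.Perm.mul_apply, Equiv.Perm.one_apply, hy'app, hss, hzz]
    -- values of y'
    have hsvi0 : simpleT n i ⟨i, Nat.lt_of_succ_lt hi⟩ = ⟨i + 1, hi⟩ := simpleT_apply_left hi
    have hsvip1 : simpleT n i ⟨i + 1, hi⟩ = ⟨i, Nat.lt_of_succ_lt hi⟩ := simpleT_apply_right hi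
    have hyi0fix : simpleT n i (y ⟨i, Nat.lt_of_succ_lt hi⟩) = y ⟨i, Nat.lt_of_succ_lt hi⟩ := by
      apply simpleT_fix hi <;> omega
    have hy'i0 : (y' ⟨i, Nat.lt_of_succ_lt hi⟩ : ℕ) ≤ i := by
      rw [hy'app, hsvi0]
      rw [simpleT_apply_nat hi]
      have := hyip1
      split_ifs <;> omega
    have hy'ip1 : (y' ⟨i + 1, hi⟩ : ℕ) = (y ⟨i, Nat.lt_of_succ_lt hi⟩ : ℕ) := by
      rw [hy'app, hsvip1, hyi0fix]
    have hdesc : (y ⟨i + 1, hi⟩ : ℕ) < (y ⟨i, Nat.lt_of_succ_lt hi⟩ : ℕ) := by omega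
    have e1 : linv n (y * simpleT n i) + 1 = linv n y := linv_mul_desc hi hdesc
    have hvinv : ∀ x : Fin n, (y * simpleT n i)⁻¹ x = simpleT n i (y x) := by
      intro x
      rw [mul_inv_rev, simpleT_inv, hyinv, Equiv.Perm.mul_apply]
    have hcondL : ((y * simpleT n i)⁻¹ ⟨i + 1, hi⟩ : ℕ) <
        ((y * simpleT n i)⁻¹ ⟨i, Nat.lt_of_succ_lt hi⟩ : ℕ) := by
      rw [hvinv, hvinv, hyi0fix]
      rw [simpleT_apply_nat hi]
      split_ifs <;> omega
    have e2 : linv n y' + 1 = linv n (y * simpleT n i) := by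
      rw [hy'def]
      exact linv_mul_left_desc hi hcondL
    have hcyc : cycCount n y' = cycCount n y := by
      have f1 := two_cycCount hy
      have f2 := two_cycCount hy'inv
      have f3 : fixc n y' = fixc n y := by
        rw [hy'def, ← mul_assoc]
        exact fixc_conj i
      omega
    obtain ⟨w', l', hw1, hw2, hw3, hw4, hw5⟩ := ih (linv n y') (by omega) y' rfl hy'inv
    have hwasc : (w' ⟨i, Nat.lt_of_succ_lt hi⟩ : ℕ) < (w' ⟨i + 1, hi⟩ : ℕ) := by
      rw [hw5, hw5]
      rw [Ffun, Ffun]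
      have hm1 : mxv n y' ⟨i, Nat.lt_of_succ_lt hi⟩ = i := by
        rw [mxv]
        have := hy'i0
        simp only [Fin.val_mk]
        omega
      have hm2 : mxv n y' ⟨i + 1, hi⟩ = (y ⟨i, Nat.lt_of_succ_lt hi⟩ : ℕ) := by
        rw [mxv, hy'ip1]
        simp only [Fin.val_mk]
        omega
      have hind1 : ¬ ((⟨i, Nat.lt_of_succ_lt hi⟩ : Fin n) : ℕ) <
          (y' ⟨i, Nat.lt_of_succ_lt hi⟩ : ℕ) := by
        simp only [Fin.val_mk]
        omega
      have hind2 : ((⟨i + 1, hi⟩ : Fin n) : ℕ) < (y' ⟨i + 1, hi⟩ : ℕ) := by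
        simp only [Fin.val_mk]
        omega
      rw [if_neg hind1, if_pos hind2, cntv, cntv, hm1, hm2]
      have hsub : (Finset.univ.filter fun u : Fin n => mxv n y' u < i) ⊆
          (Finset.univ.filter fun u : Fin n => mxv n y' u < (y ⟨i, Nat.lt_of_succ_lt hi⟩ : ℕ)) := by
        intro u hu
        rw [Finset.mem_filter] at hu ⊢
        exact ⟨hu.1, by omega⟩
      have := Finset.card_le_card hsub
      omega
    refine ⟨w' * simpleT n i, l' ++ [i], ?_, ?_, ?_, ?_, ?_⟩
    · rw [wordProd_append_single, hw1]
    · rw [linv_mul_asc hi hwasc]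
      simp only [List.length_append, List.length_singleton]
      omega
    · rw [demWord_self_append, hw3]
      have hstep1 : demStepR n y' i = simpleT n i * y := by
        rw [demStepR_asc hi (by omega), hy'def, mul_assoc, mul_assoc, simpleT_mul_self, mul_one]
      rw [hstep1]
      have hstep2 : demStepL n i (simpleT n i * y) = simpleT n i * (simpleT n i * y) := by
        apply demStepL_asc hi
        have hsyinv : ∀ x : Fin n, (simpleT n i * y)⁻¹ x = y (simpleT n i x) := by
          intro x
          rw [mul_inv_rev, simpleT_inv, hyinv, Equiv.Perm.mul_apply]
        rw [hsyinv, hsyinv, hsvi0, hsvip1]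
        omega
      rw [hstep2, ← mul_assoc, simpleT_mul_self, one_mul]
    · rw [linv_mul_asc hi hwasc]
      omega
    · intro x
      rw [Equiv.Perm.mul_apply, hw5]
      rw [hy'def]
      exact Ffun_conj hi hzz hagt hbne x

end AuxProof9

/-- For an involution `y` and any `w` with `w⁻¹ ∘ w = y` (Demazure product),
`ℓ(w) ≥ ℓ̂(y)`, i.e. `ℓ(y) + n ≤ |Cyc(y)| + 2ℓ(w)`; moreover equality is attained,
so the atoms of `y` are exactly the minimal-length such `w`. -/
theorem atoms_are_minimal (n : ℕ) (y : Equiv.Perm (Fin n)) (hy : y * y = 1) :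
    (∀ w : Equiv.Perm (Fin n), DemSelf n w y →
      len n y + n ≤ cycCount n y + 2 * len n w) ∧
    ∃ w : Equiv.Perm (Fin n), DemSelf n w y ∧
      len n y + n = cycCount n y + 2 * len n w := by
  constructor
  · intro w hw
    obtain ⟨l, hl1, hl2, hl3⟩ := hw
    have hp := (part_one (n := n) l).2
    rw [hl3] at hp
    rw [len_eq_linv y, ← hl2]
    exact hp
  · obtain ⟨w, l, hw1, hw2, hw3, hw4, -⟩ := exists_atom (n := n) (linv n y) y rfl hy
    refine ⟨w, ⟨l, hw1, ?_, hw3⟩, ?_⟩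
    · rw [len_eq_linv]; exact hw2
    · rw [len_eq_linv, len_eq_linv]; exact hw4
end

section
/- Let y be an involution in S_n and w a permutation in its atom set A(y). Then for every cycle (i,j) of y with i ≤ j, we have w(i) ≥ w(j), and there is no k with i < k < j and w(i) > w(k) > w(j). -/
open scoped Classical

namespace AtomProof

variable {n : ℕ}

/-- value of swap application, numerically -/
lemma swap_val (a : ℕ) (ha : a + 1 < n) (x : Fin n) :
    ((Equiv.swap ⟨a, Nat.lt_of_succ_lt ha⟩ ⟨a+1, ha⟩ : Equiv.Perm (Fin n)) x : ℕ) =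
      if (x : ℕ) = a then a+1 else if (x : ℕ) = a + 1 then a else x := by
  rcases x with ⟨x, hx⟩
  rw [Equiv.swap_apply_def]
  split_ifs with h1 h2 h3 h4 h5 <;>
    simp_all [Fin.ext_iff] <;> omega

lemma simpleT_apply (a : ℕ) (ha : a + 1 < n) (x : Fin n) :
    ((simpleT n a x : Fin n) : ℕ) =
      if (x : ℕ) = a then a+1 else if (x : ℕ) = a + 1 then a else x := by
  rw [simpleT, dif_pos ha]; exact swap_val a ha x

lemma simpleT_mul_self (a : ℕ) : simpleT n a * simpleT n a = 1 := by
  unfold simpleT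
  split_ifs with h
  · exact Equiv.swap_mul_self _ _
  · simp

lemma simpleT_triv (a : ℕ) (ha : ¬ a + 1 < n) : simpleT n a = 1 := by
  rw [simpleT, dif_neg ha]

/-- order-preservation of the adjacent swap off the special pair -/
lemma simpleT_lt (a : ℕ) (ha : a + 1 < n) {x y : Fin n} (hxy : x < y)
    (hne : ¬((x : ℕ) = a ∧ (y : ℕ) = a + 1)) :
    simpleT n a x < simpleT n a y := by
  have hx := simpleT_apply a ha x
  have hy := simpleT_apply a ha y
  have hxy' : (x : ℕ) < (y : ℕ) := hxy
  rw [Fin.lt_def]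
  split_ifs at hx hy <;> omega

lemma simpleT_flip (a : ℕ) (ha : a + 1 < n) {x y : Fin n} (hxy : x < y)
    (hflip : ¬ simpleT n a x < simpleT n a y) : (x : ℕ) = a ∧ (y : ℕ) = a + 1 := by
  by_contra h
  exact hflip (simpleT_lt a ha hxy h)


/-- the inversion number -/
def N (w : Equiv.Perm (Fin n)) : ℕ :=
  (Finset.univ.filter fun p : Fin n × Fin n => p.1 < p.2 ∧ w p.2 < w p.1).card

lemma perm_apply_inv_self (u : Equiv.Perm (Fin n)) (x : Fin n) : u (u⁻¹ x) = x :=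
  u.apply_symm_apply x

lemma perm_inv_apply_self (u : Equiv.Perm (Fin n)) (x : Fin n) : u⁻¹ (u x) = x :=
  u.symm_apply_apply x

lemma N_one : N (1 : Equiv.Perm (Fin n)) = 0 := by
  rw [N, Finset.card_eq_zero, Finset.filter_eq_empty_iff]
  rintro ⟨x, y⟩ -
  simp only [Equiv.Perm.one_apply]
  rintro ⟨h1, h2⟩
  exact absurd h1 (not_lt.2 h2.le)

/-- A := a-th element, A' := (a+1)-th -/
lemma mul_simpleT_apply (w : Equiv.Perm (Fin n)) (a : ℕ) (x : Fin n) :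
    (w * simpleT n a) x = w (simpleT n a x) := rfl

lemma N_mul_asc (w : Equiv.Perm (Fin n)) (a : ℕ) (ha : a + 1 < n)
    (hasc : w ⟨a, Nat.lt_of_succ_lt ha⟩ < w ⟨a+1, ha⟩) :
    N (w * simpleT n a) = N w + 1 := by
  set A : Fin n := ⟨a, Nat.lt_of_succ_lt ha⟩ with hA
  set A' : Fin n := ⟨a+1, ha⟩ with hA'
  set σ := simpleT n a with hσ
  have hσA : σ A = A' := by
    have := simpleT_apply a ha A; rw [Fin.ext_iff]; simp_all
  have hσA' : σ A' = A := by
    have := simpleT_apply a ha A'; rw [Fin.ext_iff]; simp_all [A, A']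
  have hσσ : ∀ x, σ (σ x) = x := by
    intro x
    have : σ * σ = 1 := simpleT_mul_self a
    calc σ (σ x) = (σ * σ) x := rfl
    _ = x := by rw [this]; rfl
  set v := w * σ with hv
  have hvx : ∀ x, v x = w (σ x) := fun x => rfl
  set Iw := Finset.univ.filter fun p : Fin n × Fin n => p.1 < p.2 ∧ w p.2 < w p.1 with hIw
  set Iv := Finset.univ.filter fun p : Fin n × Fin n => p.1 < p.2 ∧ v p.2 < v p.1 with hIv
  have hmemAB : (A, A') ∈ Iv := by
    simp only [hIv, Finset.mem_filter, Finset.mem_univ, true_and]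
    refine ⟨?_, ?_⟩
    · rw [Fin.lt_def]; simp [A, A']
    · rw [hvx, hvx, hσA, hσA']; exact hasc
  have hnmemAB : (A, A') ∉ Iw := by
    simp only [hIw, Finset.mem_filter, Finset.mem_univ, true_and, not_and]
    intro _; exact not_lt.2 hasc.le
  have key : (Iv.erase (A, A')).card = (Iw.erase (A, A')).card := by
    apply Finset.card_nbij' (i := fun p => (σ p.1, σ p.2)) (j := fun p => (σ p.1, σ p.2))
    · rintro ⟨x, y⟩ hp
      simp only [Finset.mem_coe, Finset.mem_erase, hIv, Finset.mem_filter, Finset.mem_univ, true_and] at hp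
      obtain ⟨hne, hlt, hinv⟩ := hp
      have hne' : ¬((x : ℕ) = a ∧ (y : ℕ) = a + 1) := by
        rintro ⟨h1, h2⟩
        exact hne (by rw [Prod.ext_iff]; constructor <;> (rw [Fin.ext_iff]; simp [A, A', h1, h2]))
      have hlt2 : σ x < σ y := simpleT_lt a ha hlt hne'
      simp only [Finset.mem_coe, Finset.mem_erase, hIw, Finset.mem_filter, Finset.mem_univ, true_and]
      refine ⟨?_, hlt2, ?_⟩
      · rintro hq
        rw [Prod.ext_iff] at hq
        obtain ⟨h1, h2⟩ := hq
        have h1' : σ x = A := h1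
        have h2' : σ y = A' := h2
        have hx : x = A' := by rw [← hσσ x, h1', hσA]
        have hy : y = A := by rw [← hσσ y, h2', hσA']
        subst hx; subst hy
        rw [Fin.lt_def] at hlt; simp only [A, A'] at hlt; omega
      · rw [hvx, hvx] at hinv; exact hinv
    · rintro ⟨x, y⟩ hp
      simp only [Finset.mem_coe, Finset.mem_erase, hIw, Finset.mem_filter, Finset.mem_univ, true_and] at hp
      obtain ⟨hne, hlt, hinv⟩ := hp
      have hne' : ¬((x : ℕ) = a ∧ (y : ℕ) = a + 1) := by
        rintro ⟨h1, h2⟩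
        exact hne (by rw [Prod.ext_iff]; constructor <;> (rw [Fin.ext_iff]; simp [A, A', h1, h2]))
      have hlt2 : σ x < σ y := simpleT_lt a ha hlt hne'
      simp only [Finset.mem_coe, Finset.mem_erase, hIv, Finset.mem_filter, Finset.mem_univ, true_and]
      refine ⟨?_, hlt2, ?_⟩
      · rintro hq
        rw [Prod.ext_iff] at hq
        obtain ⟨h1, h2⟩ := hq
        have h1' : σ x = A := h1
        have h2' : σ y = A' := h2
        have hx : x = A' := by rw [← hσσ x, h1', hσA]
        have hy : y = A := by rw [← hσσ y, h2', hσA']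
        subst hx; subst hy
        rw [Fin.lt_def] at hlt; simp only [A, A'] at hlt; omega
      · rw [hvx, hvx, hσσ, hσσ]; exact hinv
    · rintro ⟨x, y⟩ _; simp [hσσ]
    · rintro ⟨x, y⟩ _; simp [hσσ]
  have h1 : Iv.card = (Iv.erase (A, A')).card + 1 := by
    rw [Finset.card_erase_of_mem hmemAB]
    have : 0 < Iv.card := Finset.card_pos.2 ⟨_, hmemAB⟩
    omega
  have h2 : (Iw.erase (A, A')).card = Iw.card := by
    rw [Finset.erase_eq_of_notMem hnmemAB]
  show Iv.card = Iw.card + 1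
  omega




lemma N_mul_desc (w : Equiv.Perm (Fin n)) (a : ℕ) (ha : a + 1 < n)
    (hdesc : w ⟨a+1, ha⟩ < w ⟨a, Nat.lt_of_succ_lt ha⟩) :
    N w = N (w * simpleT n a) + 1 := by
  set v := w * simpleT n a with hv
  have hvA : v ⟨a, Nat.lt_of_succ_lt ha⟩ = w ⟨a+1, ha⟩ := by
    show w (simpleT n a _) = _
    congr 1
    rw [Fin.ext_iff, simpleT_apply a ha]; simp
  have hvA' : v ⟨a+1, ha⟩ = w ⟨a, Nat.lt_of_succ_lt ha⟩ := by
    show w (simpleT n a _) = _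
    congr 1
    rw [Fin.ext_iff, simpleT_apply a ha]; simp
  have hasc : v ⟨a, Nat.lt_of_succ_lt ha⟩ < v ⟨a+1, ha⟩ := by
    rw [hvA, hvA']; exact hdesc
  have := N_mul_asc v a ha hasc
  have hvv : v * simpleT n a = w := by
    rw [hv, mul_assoc, simpleT_mul_self, mul_one]
  rw [hvv] at this
  omega

lemma N_mul_le (w : Equiv.Perm (Fin n)) (a : ℕ) :
    N (w * simpleT n a) ≤ N w + 1 := by
  by_cases ha : a + 1 < n
  · rcases lt_trichotomy (w ⟨a, Nat.lt_of_succ_lt ha⟩) (w ⟨a+1, ha⟩) with h | h | h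
    · rw [N_mul_asc w a ha h]
    · exact absurd (w.injective h) (by rw [Fin.ext_iff]; simp)
    · have := N_mul_desc w a ha h; omega
  · rw [simpleT_triv a ha, mul_one]; omega

lemma strictMono_le_apply {w : Fin n → Fin n} (h : StrictMono w) : ∀ x : Fin n, x ≤ w x := by
  suffices hm : ∀ m : ℕ, ∀ x : Fin n, (x : ℕ) = m → m ≤ (w x : ℕ) by
    intro x
    exact Fin.le_def.2 (hm (x : ℕ) x rfl)
  intro m
  induction m with
  | zero => intro x _; omega
  | succ k ihk =>
    intro x hx
    have hk : k < n := by omega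
    have hlt : (⟨k, hk⟩ : Fin n) < x := by rw [Fin.lt_def]; simp only [Fin.val_mk]; omega
    have h1 := ihk ⟨k, hk⟩ rfl
    have h2 := h hlt
    rw [Fin.lt_def] at h2
    omega

lemma strictMono_eq_one {w : Equiv.Perm (Fin n)} (h : StrictMono w) : w = 1 := by
  have h2 : StrictMono (w⁻¹ : Equiv.Perm (Fin n)) := by
    intro x y hxy
    rcases lt_trichotomy (w⁻¹ x) (w⁻¹ y) with hc | hc | hc
    · exact hc
    · exact absurd ((w⁻¹ : Equiv.Perm (Fin n)).injective hc) hxy.ne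
    · have := h hc
      rw [perm_apply_inv_self, perm_apply_inv_self] at this
      exact absurd hxy (not_lt.2 this.le)
  ext x
  have h1 : x ≤ w x := strictMono_le_apply h x
  have h3 : w x ≤ w⁻¹ (w x) := strictMono_le_apply h2 (w x)
  rw [perm_inv_apply_self] at h3
  exact le_antisymm h3 h1

lemma N_eq_zero {w : Equiv.Perm (Fin n)} (h : N w = 0) : w = 1 := by
  apply strictMono_eq_one
  intro x y hxy
  rcases lt_trichotomy (w x) (w y) with hc | hc | hc
  · exact hc
  · exact absurd (w.injective hc) hxy.ne
  · exfalso
    rw [N, Finset.card_eq_zero, Finset.filter_eq_empty_iff] at h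
    exact h (Finset.mem_univ (x, y)) ⟨hxy, hc⟩

lemma exists_descent {w : Equiv.Perm (Fin n)} (h : w ≠ 1) :
    ∃ a : ℕ, ∃ ha : a + 1 < n, w ⟨a+1, ha⟩ < w ⟨a, Nat.lt_of_succ_lt ha⟩ := by
  by_contra hno
  push_neg at hno
  apply h
  apply strictMono_eq_one
  cases n with
  | zero => intro x; exact absurd x.2 (by omega)
  | succ m =>
    rw [Fin.strictMono_iff_lt_succ]
    intro i
    have hi : (i : ℕ) + 1 < m + 1 := by omega
    have hle := hno i hi
    have hne2 : w ⟨(i:ℕ), by omega⟩ ≠ w ⟨(i:ℕ)+1, hi⟩ := by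
      intro he
      exact absurd (w.injective he) (by rw [Fin.ext_iff]; simp)
    have hlt : w ⟨(i:ℕ), by omega⟩ < w ⟨(i:ℕ)+1, hi⟩ := lt_of_le_of_ne hle hne2
    have e1 : Fin.castSucc i = ⟨(i:ℕ), by omega⟩ := Fin.ext rfl
    have e2 : i.succ = ⟨(i:ℕ)+1, hi⟩ := Fin.ext rfl
    rw [e1, e2]; exact hlt

lemma wordProd_nil : wordProd n [] = 1 := rfl

lemma wordProd_append (l₁ l₂ : List ℕ) :
    wordProd n (l₁ ++ l₂) = wordProd n l₁ * wordProd n l₂ := by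
  unfold wordProd; rw [List.map_append, List.prod_append]

lemma wordProd_concat (l : List ℕ) (a : ℕ) :
    wordProd n (l ++ [a]) = wordProd n l * simpleT n a := by
  rw [wordProd_append]
  simp [wordProd]

lemma exists_word_N (w : Equiv.Perm (Fin n)) :
    ∃ l : List ℕ, l.length = N w ∧ wordProd n l = w := by
  generalize hm : N w = m
  induction m using Nat.strong_induction_on generalizing w with
  | _ m ih =>
    rcases Nat.eq_zero_or_pos m with h0 | hpos
    · subst h0
      refine ⟨[], rfl, ?_⟩
      rw [wordProd_nil, (N_eq_zero hm).symm]
    · have hw1 : w ≠ 1 := by rintro rfl; rw [N_one] at hm; omega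
      obtain ⟨a, ha, hdesc⟩ := exists_descent hw1
      have hNd := N_mul_desc w a ha hdesc
      rw [hm] at hNd
      obtain ⟨l, hlen, hprod⟩ := ih (N (w * simpleT n a)) (by omega) (w * simpleT n a) rfl
      refine ⟨l ++ [a], ?_, ?_⟩
      · simp only [List.length_append, List.length_singleton, hlen]; omega
      · rw [wordProd_concat, hprod, mul_assoc, simpleT_mul_self, mul_one]

lemma N_le_of_word {l : List ℕ} {w : Equiv.Perm (Fin n)} (h : wordProd n l = w) :
    N w ≤ l.length := by
  induction l using List.reverseRecOn generalizing w with
  | nil => rw [← h, wordProd_nil, N_one]; simp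
  | append_singleton l a ih =>
    rw [wordProd_concat] at h
    have h1 := ih (w := wordProd n l) rfl
    have h2 : N w ≤ N (wordProd n l) + 1 := by rw [← h]; exact N_mul_le _ a
    simp; omega

lemma len_eq_N (w : Equiv.Perm (Fin n)) : len n w = N w := by
  apply le_antisymm
  · obtain ⟨l, hlen, hprod⟩ := exists_word_N w
    exact Nat.sInf_le ⟨l, hlen, hprod⟩
  · have hne : {p | ∃ l : List ℕ, l.length = p ∧ wordProd n l = w}.Nonempty := by
      obtain ⟨l, hlen, hprod⟩ := exists_word_N w
      exact ⟨l.length, l, rfl, hprod⟩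
    obtain ⟨l, hlen, hprod⟩ := Nat.sInf_mem hne
    show N w ≤ sInf {p | ∃ l : List ℕ, l.length = p ∧ wordProd n l = w}
    rw [← hlen]
    exact N_le_of_word hprod


end AtomProof
namespace AtomProof
variable {n : ℕ}

lemma fin_eq_of_val {x : Fin n} {m : ℕ} (hm : m < n) (h : (x : ℕ) = m) : x = ⟨m, hm⟩ :=
  Fin.ext h

lemma simpleT_inv (a : ℕ) : (simpleT n a)⁻¹ = simpleT n a :=
  inv_eq_of_mul_eq_one_right (simpleT_mul_self a)

lemma simpleT_A (a : ℕ) (ha : a + 1 < n) :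
    simpleT n a ⟨a, Nat.lt_of_succ_lt ha⟩ = ⟨a+1, ha⟩ := by
  rw [Fin.ext_iff, simpleT_apply a ha]; simp

lemma simpleT_A' (a : ℕ) (ha : a + 1 < n) :
    simpleT n a ⟨a+1, ha⟩ = ⟨a, Nat.lt_of_succ_lt ha⟩ := by
  rw [Fin.ext_iff, simpleT_apply a ha]; simp

lemma simpleT_fix (a : ℕ) {y : Fin n} (h1 : (y : ℕ) ≠ a) (h2 : (y : ℕ) ≠ a + 1) :
    simpleT n a y = y := by
  by_cases ha : a + 1 < n
  · rw [Fin.ext_iff, simpleT_apply a ha, if_neg h1, if_neg h2]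
  · rw [simpleT_triv a ha]; rfl

lemma len_one : len n 1 = 0 := by rw [len_eq_N, N_one]

lemma len_mul_asc {w : Equiv.Perm (Fin n)} {a : ℕ} (ha : a + 1 < n)
    (hasc : w ⟨a, Nat.lt_of_succ_lt ha⟩ < w ⟨a+1, ha⟩) :
    len n (w * simpleT n a) = len n w + 1 := by
  rw [len_eq_N, len_eq_N]; exact N_mul_asc w a ha hasc

lemma len_mul_desc {w : Equiv.Perm (Fin n)} {a : ℕ} (ha : a + 1 < n)
    (hdesc : w ⟨a+1, ha⟩ < w ⟨a, Nat.lt_of_succ_lt ha⟩) :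
    len n w = len n (w * simpleT n a) + 1 := by
  rw [len_eq_N, len_eq_N]; exact N_mul_desc w a ha hdesc

lemma N_inv (w : Equiv.Perm (Fin n)) : N w⁻¹ = N w := by
  unfold N
  apply Finset.card_nbij' (i := fun p => (w⁻¹ p.2, w⁻¹ p.1)) (j := fun p => (w p.2, w p.1))
  · rintro ⟨x, y⟩ hp
    simp only [Finset.mem_coe, Finset.mem_filter, Finset.mem_univ, true_and] at hp ⊢
    obtain ⟨h1, h2⟩ := hp
    constructor
    · exact h2
    · simp only [perm_apply_inv_self]
      exact h1
  · rintro ⟨x, y⟩ hp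
    simp only [Finset.mem_coe, Finset.mem_filter, Finset.mem_univ, true_and] at hp ⊢
    obtain ⟨h1, h2⟩ := hp
    constructor
    · exact h2
    · simp only [perm_inv_apply_self]
      exact h1
  · rintro ⟨x, y⟩ _; simp
  · rintro ⟨x, y⟩ _; simp

lemma len_inv (w : Equiv.Perm (Fin n)) : len n w⁻¹ = len n w := by
  rw [len_eq_N, len_eq_N]; exact N_inv w

lemma demStepR_asc {w : Equiv.Perm (Fin n)} {a : ℕ} (ha : a + 1 < n)
    (hasc : w ⟨a, Nat.lt_of_succ_lt ha⟩ < w ⟨a+1, ha⟩) :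
    demStepR n w a = w * simpleT n a := by
  rw [demStepR, if_pos]
  rw [len_mul_asc ha hasc]; omega

lemma demStepR_desc {w : Equiv.Perm (Fin n)} {a : ℕ} (ha : a + 1 < n)
    (hdesc : w ⟨a+1, ha⟩ < w ⟨a, Nat.lt_of_succ_lt ha⟩) :
    demStepR n w a = w := by
  rw [demStepR, if_neg]
  have := len_mul_desc ha hdesc; omega

lemma demStepR_triv {w : Equiv.Perm (Fin n)} {a : ℕ} (ha : ¬ a + 1 < n) :
    demStepR n w a = w := by
  rw [demStepR, simpleT_triv a ha, mul_one, if_neg (lt_irrefl _)]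

lemma len_simpleT_mul (w : Equiv.Perm (Fin n)) (a : ℕ) :
    len n (simpleT n a * w) = len n (w⁻¹ * simpleT n a) := by
  rw [← len_inv (simpleT n a * w), mul_inv_rev, simpleT_inv]

lemma demStepL_asc {w : Equiv.Perm (Fin n)} {a : ℕ} (ha : a + 1 < n)
    (hasc : w⁻¹ ⟨a, Nat.lt_of_succ_lt ha⟩ < w⁻¹ ⟨a+1, ha⟩) :
    demStepL n a w = simpleT n a * w := by
  rw [demStepL, if_pos]
  rw [len_simpleT_mul, len_mul_asc ha hasc, len_inv]; omega

lemma demStepL_desc {w : Equiv.Perm (Fin n)} {a : ℕ} (ha : a + 1 < n)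
    (hdesc : w⁻¹ ⟨a+1, ha⟩ < w⁻¹ ⟨a, Nat.lt_of_succ_lt ha⟩) :
    demStepL n a w = w := by
  rw [demStepL, if_neg]
  rw [len_simpleT_mul]
  have h2 := len_mul_desc (w := w⁻¹) ha hdesc
  have h3 := len_inv w
  omega

lemma demStepL_triv {w : Equiv.Perm (Fin n)} {a : ℕ} (ha : ¬ a + 1 < n) :
    demStepL n a w = w := by
  rw [demStepL, simpleT_triv a ha, one_mul, if_neg (lt_irrefl _)]

/-- the special commutation identity -/
lemma swap_comm_special {u : Equiv.Perm (Fin n)} {a b : ℕ} (ha : a + 1 < n) (hb : b + 1 < n)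
    (h1 : u ⟨b, Nat.lt_of_succ_lt hb⟩ = ⟨a, Nat.lt_of_succ_lt ha⟩)
    (h2 : u ⟨b+1, hb⟩ = ⟨a+1, ha⟩) :
    simpleT n a * u = u * simpleT n b := by
  apply Equiv.ext
  intro x
  show simpleT n a (u x) = u (simpleT n b x)
  by_cases hx1 : x = ⟨b, Nat.lt_of_succ_lt hb⟩
  · subst hx1
    rw [h1, simpleT_A a ha]
    rw [show simpleT n b ⟨b, Nat.lt_of_succ_lt hb⟩ = ⟨b+1, hb⟩ from simpleT_A b hb, h2]
  · by_cases hx2 : x = ⟨b+1, hb⟩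
    · subst hx2
      rw [h2, simpleT_A' a ha, simpleT_A' b hb, h1]
    · have hfix : simpleT n b x = x := by
        apply simpleT_fix
        · intro h; exact hx1 (Fin.ext h)
        · intro h; exact hx2 (Fin.ext h)
      rw [hfix]
      apply simpleT_fix
      · intro h
        have : u x = ⟨a, Nat.lt_of_succ_lt ha⟩ := Fin.ext h
        exact hx1 (u.injective (by rw [this, h1]))
      · intro h
        have : u x = ⟨a+1, ha⟩ := Fin.ext h
        exact hx2 (u.injective (by rw [this, h2]))

lemma mul_simpleT_inv_apply (u : Equiv.Perm (Fin n)) (b : ℕ) (x : Fin n) :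
    (u * simpleT n b)⁻¹ x = simpleT n b (u⁻¹ x) := by
  rw [mul_inv_rev, simpleT_inv]; rfl

lemma demStep_comm (a b : ℕ) (u : Equiv.Perm (Fin n)) :
    demStepR n (demStepL n a u) b = demStepL n a (demStepR n u b) := by
  by_cases ha : a + 1 < n
  swap
  · rw [demStepL_triv ha, demStepL_triv ha]
  by_cases hb : b + 1 < n
  swap
  · rw [demStepR_triv hb, demStepR_triv hb]
  set A : Fin n := ⟨a, Nat.lt_of_succ_lt ha⟩
  set A' : Fin n := ⟨a+1, ha⟩
  set B : Fin n := ⟨b, Nat.lt_of_succ_lt hb⟩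
  set B' : Fin n := ⟨b+1, hb⟩
  have hAA' : A ≠ A' := Fin.ne_of_val_ne (show a ≠ a + 1 by omega)
  have hBB' : B < B' := by rw [Fin.lt_def]; exact Nat.lt_succ_self b
  by_cases hLA : u⁻¹ A < u⁻¹ A'
  · -- demStepL a u = s a * u
    rw [demStepL_asc ha hLA]
    by_cases hRA : u B < u B'
    · rw [demStepR_asc hb hRA]
      by_cases hsp : u B = A ∧ u B' = A'
      · -- special case: both sides collapse
        obtain ⟨hs1, hs2⟩ := hsp
        have hd1 : (simpleT n a * u) B' < (simpleT n a * u) B := by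
          show simpleT n a (u B') < simpleT n a (u B)
          rw [hs1, hs2, simpleT_A a ha, simpleT_A' a ha]
          rw [Fin.lt_def]; exact Nat.lt_succ_self a
        rw [demStepR_desc hb hd1]
        have hu1 : u⁻¹ A = B := by rw [← hs1, perm_inv_apply_self]
        have hu2 : u⁻¹ A' = B' := by rw [← hs2, perm_inv_apply_self]
        have hd2 : (u * simpleT n b)⁻¹ A' < (u * simpleT n b)⁻¹ A := by
          rw [mul_simpleT_inv_apply, mul_simpleT_inv_apply, hu1, hu2,
            simpleT_A b hb, simpleT_A' b hb]
          exact hBB'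
        rw [demStepL_desc ha hd2]
        exact swap_comm_special ha hb hs1 hs2
      · -- generic case: both apply
        have hRA2 : (simpleT n a * u) B < (simpleT n a * u) B' := by
          show simpleT n a (u B) < simpleT n a (u B')
          apply simpleT_lt a ha hRA
          rintro ⟨h1, h2⟩
          exact hsp ⟨fin_eq_of_val _ h1, fin_eq_of_val _ h2⟩
        rw [demStepR_asc hb hRA2]
        have hLA2 : (u * simpleT n b)⁻¹ A < (u * simpleT n b)⁻¹ A' := by
          rw [mul_simpleT_inv_apply, mul_simpleT_inv_apply]
          apply simpleT_lt b hb hLA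
          rintro ⟨h1, h2⟩
          apply hsp
          constructor
          · rw [← perm_apply_inv_self u A]; congr 1; exact (fin_eq_of_val _ h1).symm
          · rw [← perm_apply_inv_self u A']; congr 1; exact (fin_eq_of_val _ h2).symm
        rw [demStepL_asc ha hLA2, mul_assoc]
    · -- u descent at b
      have hRAd : u B' < u B := by
        rcases lt_trichotomy (u B) (u B') with h | h | h
        · exact absurd h hRA
        · exact absurd (u.injective h) (by rw [Fin.ext_iff]; simp [B, B'])
        · exact h
      rw [demStepR_desc hb hRAd]
      have : (simpleT n a * u) B' < (simpleT n a * u) B := by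
        show simpleT n a (u B') < simpleT n a (u B)
        apply simpleT_lt a ha hRAd
        rintro ⟨h1, h2⟩
        -- u B' = A, u B = A' would contradict hLA
        have hv1 : u B' = A := fin_eq_of_val _ h1
        have hv2 : u B = A' := fin_eq_of_val _ h2
        have hw1 : u⁻¹ A = B' := by rw [← hv1, perm_inv_apply_self]
        have hw2 : u⁻¹ A' = B := by rw [← hv2, perm_inv_apply_self]
        rw [hw1, hw2] at hLA
        exact absurd hLA (not_lt.2 hBB'.le)
      rw [demStepR_desc hb this, demStepL_asc ha hLA]
  · -- u left descent at a
    have hLAd : u⁻¹ A' < u⁻¹ A := by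
      rcases lt_trichotomy (u⁻¹ A) (u⁻¹ A') with h | h | h
      · exact absurd h hLA
      · exact absurd ((u⁻¹).injective h) hAA'
      · exact h
    rw [demStepL_desc ha hLAd]
    by_cases hRA : u B < u B'
    · rw [demStepR_asc hb hRA]
      have : (u * simpleT n b)⁻¹ A' < (u * simpleT n b)⁻¹ A := by
        rw [mul_simpleT_inv_apply, mul_simpleT_inv_apply]
        apply simpleT_lt b hb hLAd
        rintro ⟨h1, h2⟩
        -- u⁻¹ A' = B, u⁻¹ A = B' : then u B = A', u B' = A contradicting hRA
        have hv1 : u B = A' := by rw [← perm_apply_inv_self u A']; congr 1; exact (fin_eq_of_val _ h1).symm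
        have hv2 : u B' = A := by rw [← perm_apply_inv_self u A]; congr 1; exact (fin_eq_of_val _ h2).symm
        rw [hv1, hv2, Fin.lt_def] at hRA
        simp only [A, A', Fin.val_mk] at hRA
        omega
      rw [demStepL_desc ha this]
    · have hRAd : u B' < u B := by
        rcases lt_trichotomy (u B) (u B') with h | h | h
        · exact absurd h hRA
        · exact absurd (u.injective h) (by rw [Fin.ext_iff]; simp [B, B'])
        · exact h
      rw [demStepR_desc hb hRAd, demStepL_desc ha hLAd]

end AtomProof
namespace AtomProof
variable {n : ℕ}

lemma foldR_demStepL (a : ℕ) (l : List ℕ) :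
    ∀ u : Equiv.Perm (Fin n),
      List.foldl (demStepR n) (demStepL n a u) l = demStepL n a (List.foldl (demStepR n) u l) := by
  induction l with
  | nil => intro u; rfl
  | cons b t ih =>
    intro u
    show List.foldl (demStepR n) (demStepR n (demStepL n a u) b) t = _
    rw [demStep_comm a b u]
    exact ih (demStepR n u b)

/-- the conjugation-type Demazure operator -/
noncomputable def P (a : ℕ) (z : Equiv.Perm (Fin n)) : Equiv.Perm (Fin n) :=
  demStepL n a (demStepR n z a)

lemma one_lt_A {a : ℕ} (ha : a + 1 < n) :
    (1 : Equiv.Perm (Fin n)) ⟨a, Nat.lt_of_succ_lt ha⟩ < (1 : Equiv.Perm (Fin n)) ⟨a+1, ha⟩ := by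
  show (⟨a, Nat.lt_of_succ_lt ha⟩ : Fin n) < ⟨a+1, ha⟩
  rw [Fin.lt_def]; exact Nat.lt_succ_self a

lemma demStepR_one (a : ℕ) : demStepR n 1 a = simpleT n a := by
  by_cases ha : a + 1 < n
  · rw [demStepR_asc ha (one_lt_A ha), one_mul]
  · rw [demStepR_triv ha, simpleT_triv a ha]

lemma demStepL_one (a : ℕ) : demStepL n a 1 = simpleT n a := by
  by_cases ha : a + 1 < n
  · rw [demStepL_asc ha (by rw [inv_one]; exact one_lt_A ha), mul_one]
  · rw [demStepL_triv ha, simpleT_triv a ha]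

lemma sp_concat (l : List ℕ) (a : ℕ) :
    demWord n ((l ++ [a]).reverse ++ (l ++ [a])) = P a (demWord n (l.reverse ++ l)) := by
  have h1 : (l ++ [a]).reverse ++ (l ++ [a]) = a :: ((l.reverse ++ l) ++ [a]) := by
    simp [List.reverse_append]
  rw [h1]
  show List.foldl (demStepR n) 1 (a :: ((l.reverse ++ l) ++ [a])) = _
  rw [List.foldl_cons, demStepR_one, ← demStepL_one, foldR_demStepL, List.foldl_append]
  rfl

lemma sp_nil : demWord n (([] : List ℕ).reverse ++ []) = 1 := rfl

lemma A_lt_A' {a : ℕ} (ha : a + 1 < n) :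
    (⟨a, Nat.lt_of_succ_lt ha⟩ : Fin n) < ⟨a+1, ha⟩ := by
  rw [Fin.lt_def]; exact Nat.lt_succ_self a

lemma mul_simpleT_inv_apply' (z : Equiv.Perm (Fin n)) (a : ℕ) (hz : z * z = 1) (x : Fin n) :
    (z * simpleT n a)⁻¹ x = simpleT n a (z x) := by
  rw [mul_simpleT_inv_apply]
  congr 1
  rw [inv_eq_of_mul_eq_one_right hz]

lemma P_triv {z : Equiv.Perm (Fin n)} {a : ℕ} (ha : ¬ a + 1 < n) : P a z = z := by
  rw [P, demStepR_triv ha, demStepL_triv ha]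

lemma P_desc {z : Equiv.Perm (Fin n)} {a : ℕ} (ha : a + 1 < n) (hz : z * z = 1)
    (hdesc : z ⟨a+1, ha⟩ < z ⟨a, Nat.lt_of_succ_lt ha⟩) : P a z = z := by
  rw [P, demStepR_desc ha hdesc]
  apply demStepL_desc ha
  rw [inv_eq_of_mul_eq_one_right hz]
  exact hdesc

lemma P_fix {z : Equiv.Perm (Fin n)} {a : ℕ} (ha : a + 1 < n) (hz : z * z = 1)
    (h1 : z ⟨a, Nat.lt_of_succ_lt ha⟩ = ⟨a, Nat.lt_of_succ_lt ha⟩)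
    (h2 : z ⟨a+1, ha⟩ = ⟨a+1, ha⟩) : P a z = z * simpleT n a := by
  have hasc : z ⟨a, Nat.lt_of_succ_lt ha⟩ < z ⟨a+1, ha⟩ := by
    rw [h1, h2]; exact A_lt_A' ha
  rw [P, demStepR_asc ha hasc]
  apply demStepL_desc ha
  rw [mul_simpleT_inv_apply' z a hz, mul_simpleT_inv_apply' z a hz, h1, h2,
    simpleT_A a ha, simpleT_A' a ha]
  exact A_lt_A' ha

lemma P_conj {z : Equiv.Perm (Fin n)} {a : ℕ} (ha : a + 1 < n) (hz : z * z = 1)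
    (hasc : z ⟨a, Nat.lt_of_succ_lt ha⟩ < z ⟨a+1, ha⟩)
    (hne : ¬(z ⟨a, Nat.lt_of_succ_lt ha⟩ = ⟨a, Nat.lt_of_succ_lt ha⟩ ∧ z ⟨a+1, ha⟩ = ⟨a+1, ha⟩)) :
    P a z = simpleT n a * (z * simpleT n a) := by
  rw [P, demStepR_asc ha hasc]
  apply demStepL_asc ha
  rw [mul_simpleT_inv_apply' z a hz, mul_simpleT_inv_apply' z a hz]
  apply simpleT_lt a ha hasc
  rintro ⟨hv1, hv2⟩
  exact hne ⟨fin_eq_of_val _ hv1, fin_eq_of_val _ hv2⟩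

lemma sp_invol (l : List ℕ) :
    demWord n (l.reverse ++ l) * demWord n (l.reverse ++ l) = 1 := by
  induction l using List.reverseRecOn with
  | nil => rw [sp_nil, one_mul]
  | append_singleton l a ih =>
    rw [sp_concat]
    set z := demWord n (l.reverse ++ l) with hzdef
    by_cases ha : a + 1 < n
    · rcases lt_trichotomy (z ⟨a, Nat.lt_of_succ_lt ha⟩) (z ⟨a+1, ha⟩) with hc | hc | hc
      · by_cases hfix : z ⟨a, Nat.lt_of_succ_lt ha⟩ = ⟨a, Nat.lt_of_succ_lt ha⟩ ∧
            z ⟨a+1, ha⟩ = ⟨a+1, ha⟩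
        · rw [P_fix ha ih hfix.1 hfix.2]
          have hcomm := swap_comm_special ha ha hfix.1 hfix.2
          calc z * simpleT n a * (z * simpleT n a)
              = z * ((simpleT n a * z) * simpleT n a) := by simp only [mul_assoc]
            _ = z * ((z * simpleT n a) * simpleT n a) := by rw [hcomm]
            _ = (z * z) * (simpleT n a * simpleT n a) := by simp only [mul_assoc]
            _ = 1 := by rw [ih, simpleT_mul_self, one_mul]
        · rw [P_conj ha ih hc hfix]
          calc simpleT n a * (z * simpleT n a) * (simpleT n a * (z * simpleT n a))
              = simpleT n a * z * ((simpleT n a * simpleT n a) * (z * simpleT n a)) := by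
                simp only [mul_assoc]
            _ = simpleT n a * z * (z * simpleT n a) := by rw [simpleT_mul_self, one_mul]
            _ = simpleT n a * ((z * z) * simpleT n a) := by simp only [mul_assoc]
            _ = 1 := by rw [ih, one_mul, simpleT_mul_self]
      · exact absurd (z.injective hc) (Fin.ne_of_val_ne (show a ≠ a + 1 by omega))
      · rw [P_desc ha ih hc]; exact ih
    · rw [P_triv ha]; exact ih

end AtomProof
namespace AtomProof
variable {n : ℕ}

lemma len_le_of_word {l : List ℕ} {w : Equiv.Perm (Fin n)} (h : wordProd n l = w) :
    len n w ≤ l.length := by rw [len_eq_N]; exact N_le_of_word h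

lemma invol_apply {z : Equiv.Perm (Fin n)} (hz : z * z = 1) (x : Fin n) : z (z x) = x := by
  have : (z * z) x = (1 : Equiv.Perm (Fin n)) x := by rw [hz]
  exact this

lemma peel {l' : List ℕ} {a : ℕ} {w : Equiv.Perm (Fin n)}
    (hprod : wordProd n (l' ++ [a]) = w)
    (hlen : (l' ++ [a]).length = len n w) :
    ∃ ha : a + 1 < n, wordProd n l' * simpleT n a = w ∧
      l'.length = len n (wordProd n l') ∧
      len n w = len n (wordProd n l') + 1 ∧
      (wordProd n l') ⟨a, Nat.lt_of_succ_lt ha⟩ < (wordProd n l') ⟨a+1, ha⟩ := by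
  set w' := wordProd n l' with hw'
  have hcon : w' * simpleT n a = w := by rw [hw', ← wordProd_concat, hprod]
  have h1 : len n w' ≤ l'.length := len_le_of_word rfl
  have h2 : len n w ≤ len n w' + 1 := by
    rw [← hcon, len_eq_N, len_eq_N]; exact N_mul_le w' a
  have hlen' : l'.length + 1 = len n w := by
    rw [← hlen]; simp
  have hl1 : l'.length = len n w' := by omega
  have hl2 : len n w = len n w' + 1 := by omega
  have ha : a + 1 < n := by
    by_contra ha
    rw [simpleT_triv a ha, mul_one] at hcon
    rw [hcon] at hl2
    omega
  refine ⟨ha, hcon, hl1, hl2, ?_⟩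
  rcases lt_trichotomy (w' ⟨a, Nat.lt_of_succ_lt ha⟩) (w' ⟨a+1, ha⟩) with hc | hc | hc
  · exact hc
  · exact absurd (w'.injective hc) (Fin.ne_of_val_ne (show a ≠ a + 1 by omega))
  · exfalso
    have := len_mul_desc ha hc
    rw [hcon] at this
    omega

lemma exists_atom {z : Equiv.Perm (Fin n)} (hne : ∃ v, DemSelf n v z) :
    ∃ v, DemSelf n v z ∧ ∀ v', DemSelf n v' z → len n v ≤ len n v' := by
  set S : Set ℕ := {p | ∃ v, DemSelf n v z ∧ len n v = p} with hS
  have hSne : S.Nonempty := by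
    obtain ⟨v, hv⟩ := hne
    exact ⟨len n v, v, hv, rfl⟩
  obtain ⟨v, hv, hq⟩ := Nat.sInf_mem hSne
  refine ⟨v, hv, fun v' hv' => ?_⟩
  rw [hq]
  exact Nat.sInf_le ⟨v', hv', rfl⟩

lemma demself_extend {v z : Equiv.Perm (Fin n)} {a : ℕ} (ha : a + 1 < n)
    (hd : DemSelf n v z) (hasc : v ⟨a, Nat.lt_of_succ_lt ha⟩ < v ⟨a+1, ha⟩) :
    DemSelf n (v * simpleT n a) (P a z) := by
  obtain ⟨m, hm_prod, hm_len, hm_dem⟩ := hd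
  refine ⟨m ++ [a], ?_, ?_, ?_⟩
  · rw [wordProd_concat, hm_prod]
  · rw [len_mul_asc ha hasc]; simp [hm_len]
  · rw [sp_concat, hm_dem]

/-- The pairwise cycle invariant for atoms. -/
def Invt (w y : Equiv.Perm (Fin n)) : Prop :=
  ∀ i j i' j' : Fin n, y i = j → i ≤ j → y i' = j' → i' ≤ j' →
    (w j ≤ w i) ∧
    (i < i' → j < j' → w i < w j') ∧
    (i < i' → j' < j → (w i' < w j ∨ w i < w j' ∨ (w j' < w j ∧ w i < w i')))

/-- ascents of the self-product are ascents of any Invt-witness -/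
lemma Dprime {v z : Equiv.Perm (Fin n)} (hI : Invt v z) (hz : z * z = 1)
    {a : ℕ} (ha : a + 1 < n)
    (hza : z ⟨a, Nat.lt_of_succ_lt ha⟩ < z ⟨a+1, ha⟩) :
    v ⟨a, Nat.lt_of_succ_lt ha⟩ < v ⟨a+1, ha⟩ := by
  set A : Fin n := ⟨a, Nat.lt_of_succ_lt ha⟩ with hA
  set A' : Fin n := ⟨a+1, ha⟩ with hA'
  have hAA' : A < A' := A_lt_A' ha
  set α := z A with hα
  set β := z A' with hβ
  have hzα : z α = A := invol_apply hz A
  have hzβ : z β = A' := invol_apply hz A'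
  have hαβ : α < β := hza
  have hαA' : α ≠ A' := by
    intro h
    have h2 : β = A := by rw [hβ, ← h, hα, invol_apply hz]
    rw [h, h2] at hαβ
    exact absurd hαβ (not_lt.2 hAA'.le)
  rcases lt_trichotomy α A with hc | hc | hc
  · -- cycle (α, A)
    rcases lt_trichotomy β A' with hd | hd | hd
    · -- β < A' : cycle (β, A')
      have key := hI α A β A' hzα hc.le hzβ hd.le
      have h2 := (key.2.1) hαβ hAA'
      have h1 := (hI α A α A hzα hc.le hzα hc.le).1
      exact lt_of_le_of_lt h1 h2
    · -- β = A'
      have key := hI α A A' A' hzα hc.le (hβ.symm.trans hd) le_rfl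
      have h2 := key.2.1 (lt_trans hc hAA') hAA'
      have h1 := (hI α A α A hzα hc.le hzα hc.le).1
      exact lt_of_le_of_lt h1 h2
    · -- β > A' : cycle (A', β)
      have key := hI α A A' β hzα hc.le hβ.symm hd.le
      have h2 := key.2.1 (lt_trans hc hAA') (lt_trans hAA' hd)
      have h1 := (hI α A α A hzα hc.le hzα hc.le).1
      have h3 := (hI A' β A' β hβ.symm hd.le hβ.symm hd.le).1
      exact lt_of_le_of_lt h1 (lt_of_lt_of_le h2 h3)
  · -- α = A : A fixed
    have hzA : z A = A := by rw [← hα, hc]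
    rcases lt_trichotomy β A' with hd | hd | hd
    · exfalso
      have h1 : A < β := by rw [← hc]; exact hαβ
      rw [Fin.lt_def] at h1 hd
      simp only [hA, hA'] at h1 hd
      omega
    · have hzA' : z A' = A' := by rw [← hβ, hd]
      exact (hI A A A' A' hzA le_rfl hzA' le_rfl).2.1 hAA' hAA'
    · have key := hI A A A' β hzA le_rfl hβ.symm hd.le
      have h2 := key.2.1 hAA' (lt_trans hAA' hd)
      have h3 := (hI A' β A' β hβ.symm hd.le hβ.symm hd.le).1
      exact lt_of_lt_of_le h2 h3
  · -- α > A : cycle (A, α), with α > A'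
    have hαA'2 : A' < α := by
      rcases lt_trichotomy α A' with h | h | h
      · exfalso
        rw [Fin.lt_def] at h hc
        simp only [hA, hA'] at h hc
        omega
      · exact absurd h hαA'
      · exact h
    have hβA' : A' < β := lt_trans hαA'2 hαβ
    have key := hI A α A' β hα.symm hc.le hβ.symm hβA'.le
    have h2 := key.2.1 hAA' hαβ
    have h3 := (hI A' β A' β hβ.symm hβA'.le hβ.symm hβA'.le).1
    exact lt_of_lt_of_le h2 h3

end AtomProof
namespace AtomProof
variable {n : ℕ}

lemma Invt_cond {w y : Equiv.Perm (Fin n)} (hI : Invt w y) (hy : y * y = 1)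
    {i j : Fin n} (hij : i ≤ j) (hc : y i = j) :
    w j ≤ w i ∧ ¬ ∃ k : Fin n, i < k ∧ k < j ∧ w j < w k ∧ w k < w i := by
  have hyj : y j = i := by rw [← hc, invol_apply hy]
  constructor
  · exact (hI i j i j hc hij hc hij).1
  · rintro ⟨k, hik, hkj, h1, h2⟩
    set k' := y k with hk'
    have hyk : y k = k' := rfl
    have hyk' : y k' = k := invol_apply hy k
    have hkne_i : k ≠ i := fun h => absurd (h ▸ hik) (lt_irrefl i)
    have hkne_j : k ≠ j := fun h => absurd (h ▸ hkj) (lt_irrefl j)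
    have hk'ne_i : k' ≠ i := by
      intro h
      rw [h] at hyk'
      rw [hc] at hyk'
      exact hkne_j hyk'.symm
    have hk'ne_j : k' ≠ j := by
      intro h
      rw [h] at hyk'
      rw [hyj] at hyk'
      exact hkne_i hyk'.symm
    rcases lt_trichotomy k k' with hkk | hkk | hkk
    · -- cycle (k, k')
      have hwk' : w k' ≤ w k := (hI k k' k k' hyk hkk.le hyk hkk.le).1
      rcases lt_trichotomy k' j with hd | hd | hd
      · have key := (hI i j k k' hc hij hyk hkk.le).2.2 hik hd
        rcases key with h | h | ⟨h, h'⟩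
        · exact absurd h (not_lt.2 h1.le)
        · exact absurd (lt_of_lt_of_le h hwk') (not_lt.2 h2.le)
        · exact absurd h' (not_lt.2 h2.le)
      · exact hk'ne_j hd
      · have key := (hI i j k k' hc hij hyk hkk.le).2.1 hik hd
        exact absurd (lt_of_lt_of_le key hwk') (not_lt.2 h2.le)
    · -- k fixed
      have key := (hI i j k k hc hij (by rw [hyk, ← hkk]) le_rfl).2.2 hik hkj
      rcases key with h | h | ⟨h, h'⟩
      · exact absurd h (not_lt.2 h1.le)
      · exact absurd h (not_lt.2 h2.le)
      · exact absurd h (not_lt.2 h1.le)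
    · -- cycle (k', k)
      have hyk2 : y k' = k := hyk'
      have hwk : w k ≤ w k' := (hI k' k k' k hyk2 hkk.le hyk2 hkk.le).1
      rcases lt_trichotomy i k' with hd | hd | hd
      · have key := (hI i j k' k hc hij hyk2 hkk.le).2.2 hd hkj
        rcases key with h | h | ⟨h, h'⟩
        · exact absurd (lt_of_le_of_lt hwk h) (not_lt.2 h1.le)
        · exact absurd h (not_lt.2 h2.le)
        · exact absurd h (not_lt.2 h1.le)
      · exact hk'ne_i hd.symm
      · have key := (hI k' k i j hyk2 hkk.le hc hij).2.1 hd hkj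
        exact absurd (lt_of_le_of_lt hwk key) (not_lt.2 h1.le)

end AtomProof
namespace AtomProof
variable {n : ℕ}

lemma sigma_lt_cases {a : ℕ} (ha : a + 1 < n) {x y : Fin n} (hxy : x < y) :
    simpleT n a x < simpleT n a y ∨
      (x = ⟨a, Nat.lt_of_succ_lt ha⟩ ∧ y = ⟨a+1, ha⟩) := by
  by_cases h : (x : ℕ) = a ∧ (y : ℕ) = a + 1
  · exact Or.inr ⟨fin_eq_of_val _ h.1, fin_eq_of_val _ h.2⟩
  · exact Or.inl (simpleT_lt a ha hxy h)

lemma val_lt_cases {a : ℕ} (ha : a + 1 < n) {x : Fin n}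
    (h1 : x ≠ ⟨a, Nat.lt_of_succ_lt ha⟩) (h2 : x < (⟨a+1, ha⟩ : Fin n)) :
    x < ⟨a, Nat.lt_of_succ_lt ha⟩ := by
  rw [Fin.lt_def] at h2 ⊢
  have : (x : ℕ) ≠ a := fun h => h1 (fin_eq_of_val _ h)
  simp only [Fin.val_mk] at h2 ⊢
  omega

lemma val_gt_cases {a : ℕ} (ha : a + 1 < n) {x : Fin n}
    (h1 : x ≠ ⟨a+1, ha⟩) (h2 : (⟨a, Nat.lt_of_succ_lt ha⟩ : Fin n) < x) :
    (⟨a+1, ha⟩ : Fin n) < x := by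
  rw [Fin.lt_def] at h2 ⊢
  have : (x : ℕ) ≠ a + 1 := fun h => h1 (fin_eq_of_val _ h)
  simp only [Fin.val_mk] at h2 ⊢
  omega

lemma closure_fix {z w' : Equiv.Perm (Fin n)} {a : ℕ} (ha : a + 1 < n) (hz : z * z = 1)
    (hfA : z ⟨a, Nat.lt_of_succ_lt ha⟩ = ⟨a, Nat.lt_of_succ_lt ha⟩)
    (hfA' : z ⟨a+1, ha⟩ = ⟨a+1, ha⟩)
    (hasc : w' ⟨a, Nat.lt_of_succ_lt ha⟩ < w' ⟨a+1, ha⟩)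
    (hI : Invt w' z) :
    Invt (w' * simpleT n a) (z * simpleT n a) := by
  set A : Fin n := ⟨a, Nat.lt_of_succ_lt ha⟩ with hA
  set A' : Fin n := ⟨a+1, ha⟩ with hA'
  have hAA' : A < A' := A_lt_A' ha
  set σ := simpleT n a with hσ
  set y := z * σ with hy
  set w := w' * σ with hw
  have hyap : ∀ x, y x = z (σ x) := fun x => rfl
  have hwap : ∀ x, w x = w' (σ x) := fun x => rfl
  have hσA : σ A = A' := simpleT_A a ha
  have hσA' : σ A' = A := simpleT_A' a ha
  have hσfix : ∀ x : Fin n, x ≠ A → x ≠ A' → σ x = x := by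
    intro x h1 h2
    apply simpleT_fix
    · exact fun h => h1 (fin_eq_of_val _ h)
    · exact fun h => h2 (fin_eq_of_val _ h)
  have hwA : w A = w' A' := by rw [hwap, hσA]
  have hwA' : w A' = w' A := by rw [hwap, hσA']
  have hwo : ∀ x : Fin n, x ≠ A → x ≠ A' → w x = w' x := by
    intro x h1 h2; rw [hwap, hσfix x h1 h2]
  -- cycle characterization
  have hcyc : ∀ i j : Fin n, y i = j → i ≤ j →
      (i = A ∧ j = A') ∨ (i ≠ A ∧ i ≠ A' ∧ j ≠ A ∧ j ≠ A' ∧ z i = j) := by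
    intro i j hyij hij
    by_cases hiA : i = A
    · left
      refine ⟨hiA, ?_⟩
      rw [← hyij, hiA, hyap, hσA, hfA']
    · by_cases hiA' : i = A'
      · exfalso
        rw [hiA'] at hyij hij
        rw [hyap, hσA', hfA] at hyij
        rw [← hyij] at hij
        exact absurd hAA' (not_lt.2 hij)
      · right
        have hzij : z i = j := by rw [← hyij, hyap, hσfix i hiA hiA']
        refine ⟨hiA, hiA', ?_, ?_, hzij⟩
        · intro h
          rw [h] at hzij
          have : i = A := by rw [← invol_apply hz i, hzij, hfA]
          exact hiA this
        · intro h
          rw [h] at hzij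
          have : i = A' := by rw [← invol_apply hz i, hzij, hfA']
          exact hiA' this
  intro i j i' j' h1 h2 h3 h4
  rcases hcyc i j h1 h2 with ⟨hiA, hjA'⟩ | ⟨hi1, hi2, hj1, hj2, hzij⟩ <;>
    rcases hcyc i' j' h3 h4 with ⟨hiA2, hjA'2⟩ | ⟨hi1', hi2', hj1', hj2', hzij'⟩
  · -- both are the new cycle (A, A')
    subst hiA; subst hjA'; subst hiA2; subst hjA'2
    refine ⟨?_, ?_, ?_⟩
    · rw [hwA, hwA']; exact hasc.le
    · intro h _; exact absurd h (lt_irrefl _)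
    · intro h _; exact absurd h (lt_irrefl _)
  · -- (i,j) = (A,A'), (i',j') old
    subst hiA; subst hjA'
    refine ⟨?_, ?_, ?_⟩
    · rw [hwA, hwA']; exact hasc.le
    · intro hii' hjj'
      rw [hwA, hwo j' hj1' hj2']
      have hA'i' : A' < i' := val_gt_cases ha hi2' hii'
      exact (hI A' A' i' j' hfA' le_rfl hzij' h4).2.1 hA'i' hjj'
    · intro hii' hj'j
      exfalso
      have hA'i' : A' < i' := val_gt_cases ha hi2' hii'
      exact absurd (lt_trans hA'i' (lt_of_le_of_lt h4 hj'j)) (lt_irrefl A')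
  · -- (i,j) old, (i',j') = (A,A')
    subst hiA2; subst hjA'2
    refine ⟨?_, ?_, ?_⟩
    · rw [hwo i hi1 hi2, hwo j hj1 hj2]
      exact (hI i j i j hzij h2 hzij h2).1
    · intro hii' hjj'
      rw [hwo i hi1 hi2, hwA']
      have hjA : j < A := val_lt_cases ha hj1 hjj'
      exact (hI i j A A hzij h2 hfA le_rfl).2.1 hii' hjA
    · intro hii' hj'j
      rw [hwA, hwA', hwo i hi1 hi2, hwo j hj1 hj2]
      have hAj : A < j := lt_trans hAA' hj'j
      have hiA'2 : i < A' := lt_trans hii' hAA'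
      have keyA := (hI i j A A hzij h2 hfA le_rfl).2.2 hii' hAj
      have keyA' := (hI i j A' A' hzij h2 hfA' le_rfl).2.2 hiA'2 hj'j
      rcases keyA with hA1 | hA1 | ⟨hA1, hA1'⟩
      · rcases keyA' with hB1 | hB1 | ⟨hB1, hB1'⟩
        · exact Or.inl hB1
        · exact Or.inr (Or.inr ⟨hA1, hB1⟩)
        · exact Or.inl hB1
      · exact Or.inr (Or.inl hA1)
      · exact Or.inr (Or.inl hA1')
  · -- both old
    refine ⟨?_, ?_, ?_⟩
    · rw [hwo i hi1 hi2, hwo j hj1 hj2]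
      exact (hI i j i' j' hzij h2 hzij' h4).1
    · intro hii' hjj'
      rw [hwo i hi1 hi2, hwo j' hj1' hj2']
      exact (hI i j i' j' hzij h2 hzij' h4).2.1 hii' hjj'
    · intro hii' hj'j
      rw [hwo i' hi1' hi2', hwo j hj1 hj2, hwo i hi1 hi2, hwo j' hj1' hj2']
      exact (hI i j i' j' hzij h2 hzij' h4).2.2 hii' hj'j

end AtomProof
namespace AtomProof
variable {n : ℕ}

lemma closure_conj {z w' : Equiv.Perm (Fin n)} {a : ℕ} (ha : a + 1 < n) (hz : z * z = 1)
    (hlt : z ⟨a, Nat.lt_of_succ_lt ha⟩ < z ⟨a+1, ha⟩)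
    (hne : ¬(z ⟨a, Nat.lt_of_succ_lt ha⟩ = ⟨a, Nat.lt_of_succ_lt ha⟩ ∧
      z ⟨a+1, ha⟩ = ⟨a+1, ha⟩))
    (hI : Invt w' z) :
    Invt (w' * simpleT n a) (simpleT n a * (z * simpleT n a)) := by
  set A : Fin n := ⟨a, Nat.lt_of_succ_lt ha⟩ with hA
  set A' : Fin n := ⟨a+1, ha⟩ with hA'
  have hAA' : A < A' := A_lt_A' ha
  set σ := simpleT n a with hσ
  have hσA : σ A = A' := simpleT_A a ha
  have hσA' : σ A' = A := simpleT_A' a ha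
  have hσσ : ∀ x, σ (σ x) = x := by
    intro x
    have : σ * σ = 1 := simpleT_mul_self a
    calc σ (σ x) = (σ * σ) x := rfl
    _ = x := by rw [this]; rfl
  set y := σ * (z * σ) with hy
  set w := w' * σ with hw
  have hyap : ∀ x, y x = σ (z (σ x)) := fun x => rfl
  have hwap : ∀ x, w x = w' (σ x) := fun x => rfl
  have hzcyc : ∀ i j : Fin n, y i = j → z (σ i) = σ j := by
    intro i j hyij
    have : σ (z (σ i)) = j := hyij
    rw [← this, hσσ]
  have hsorted : ∀ i j : Fin n, y i = j → i ≤ j → σ i ≤ σ j := by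
    intro i j hyij hij
    rcases hij.lt_or_eq with hlt2 | heq
    · rcases sigma_lt_cases ha hlt2 with h | ⟨hiA, hjA'⟩
      · exact h.le
      · exfalso
        have e1 : z A' = A := by
          have := hzcyc i j hyij
          rw [hiA, hjA', hσA, hσA'] at this
          exact this
        have e2 : z A = A' := by
          rw [← invol_apply hz A']
          rw [e1]
        rw [e1, e2] at hlt
        exact absurd hlt (not_lt.2 hAA'.le)
    · rw [heq]
  intro i j i' j' h1 h2 h3 h4
  have hz1 : z (σ i) = σ j := hzcyc i j h1
  have hs1 : σ i ≤ σ j := hsorted i j h1 h2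
  have hz1' : z (σ i') = σ j' := hzcyc i' j' h3
  have hs1' : σ i' ≤ σ j' := hsorted i' j' h3 h4
  refine ⟨?_, ?_, ?_⟩
  · show w' (σ j) ≤ w' (σ i)
    exact (hI (σ i) (σ j) (σ i) (σ j) hz1 hs1 hz1 hs1).1
  · intro hii' hjj'
    show w' (σ i) < w' (σ j')
    rcases sigma_lt_cases ha hii' with hii | ⟨hiA, hi'A'⟩
    · rcases sigma_lt_cases ha hjj' with hjj | ⟨hjA, hj'A'⟩
      · exact (hI (σ i) (σ j) (σ i') (σ j') hz1 hs1 hz1' hs1').2.1 hii hjj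
      · exfalso
        have e1 : z A' = σ i := by
          have e := hz1
          rw [hjA, hσA] at e
          rw [← invol_apply hz (σ i), e]
        have e2 : z A = σ i' := by
          have e := hz1'
          rw [hj'A', hσA'] at e
          rw [← invol_apply hz (σ i'), e]
        rw [e1, e2] at hlt
        exact absurd (lt_trans hii hlt) (lt_irrefl _)
    · exfalso
      rcases sigma_lt_cases ha hjj' with hjj | ⟨hjA, hj'A'⟩
      · have e1 : z A' = σ j := by
          have e := hz1
          rw [hiA, hσA] at e
          exact e
        have e2 : z A = σ j' := by
          have e := hz1'
          rw [hi'A', hσA'] at e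
          exact e
        rw [e1, e2] at hlt
        exact absurd (lt_trans hjj hlt) (lt_irrefl _)
      · apply hne
        constructor
        · have e := hz1'
          rw [hi'A', hj'A', hσA'] at e
          exact e
        · have e := hz1
          rw [hiA, hjA, hσA] at e
          exact e
  · intro hii' hj'j
    rcases sigma_lt_cases ha hii' with hii | ⟨hiA, hi'A'⟩
    · rcases sigma_lt_cases ha hj'j with hjj | ⟨hj'A, hjA'⟩
      · exact (hI (σ i) (σ j) (σ i') (σ j') hz1 hs1 hz1' hs1').2.2 hii hjj
      · -- j' = A, j = A' : images give σ j = A < A' = σ j'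
        have ej : σ j = A := by rw [hjA', hσA']
        have ej' : σ j' = A' := by rw [hj'A, hσA]
        have key := (hI (σ i) (σ j) (σ i') (σ j') hz1 hs1 hz1' hs1').2.1 hii
          (by rw [ej, ej']; exact hAA')
        exact Or.inr (Or.inl key)
    · rcases sigma_lt_cases ha hj'j with hjj | ⟨hj'A, hjA'⟩
      · -- i = A, i' = A' : σ i = A', σ i' = A
        have ei : σ i = A' := by rw [hiA, hσA]
        have ei' : σ i' = A := by rw [hi'A', hσA']
        have key := (hI (σ i') (σ j') (σ i) (σ j) hz1' hs1' hz1 hs1).2.1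
          (by rw [ei, ei']; exact hAA') hjj
        exact Or.inl key
      · exfalso
        have e1 : z A' = A := by
          have e := hz1
          rw [hiA, hjA', hσA, hσA'] at e
          exact e
        have e2 : z A = A' := by
          rw [← invol_apply hz A', e1]
        rw [e1, e2] at hlt
        exact absurd hlt (not_lt.2 hAA'.le)

end AtomProof
namespace AtomProof
variable {n : ℕ}

lemma main_invt : ∀ p : ℕ, ∀ w y : Equiv.Perm (Fin n), DemSelf n w y →
    (∀ v, DemSelf n v y → len n w ≤ len n v) → len n w = p → Invt w y := by
  intro p
  induction p using Nat.strong_induction_on with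
  | _ p ih =>
    intro w y hd hmin hp
    obtain ⟨l, hl_prod, hl_len, hl_dem⟩ := hd
    rcases List.eq_nil_or_concat l with rfl | ⟨l', a, rfl⟩
    · -- w = 1, y = 1
      have hw1 : w = 1 := by rw [← hl_prod]; rfl
      have hy1 : y = 1 := by rw [← hl_dem]; rfl
      subst hw1; subst hy1
      intro i j i' j' h1 h2 h3 h4
      have hji : j = i := h1.symm
      have hji' : j' = i' := h3.symm
      subst hji; subst hji'
      refine ⟨le_rfl, ?_, ?_⟩
      · intro h _; exact h
      · intro h h'; exact absurd (lt_trans h h') (lt_irrefl _)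
    · rw [List.concat_eq_append] at hl_prod hl_len hl_dem
      obtain ⟨ha, hcon, hl'red, hlensucc, hasc⟩ := peel hl_prod hl_len
      set w' := wordProd n l' with hw'
      set z := demWord n (l'.reverse ++ l') with hz
      have hdz : DemSelf n w' z := ⟨l', rfl, hl'red, rfl⟩
      have hzz : z * z = 1 := sp_invol l'
      have hyP : y = P a z := by rw [← hl_dem, sp_concat]
      rcases lt_trichotomy (z ⟨a, Nat.lt_of_succ_lt ha⟩) (z ⟨a+1, ha⟩) with hzasc | hzeq | hzdesc
      · -- the real case
        obtain ⟨v, hdv, hminv⟩ := exists_atom ⟨w', hdz⟩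
        have hlenv : len n v ≤ len n w' := hminv w' hdz
        have hplt : len n v < p := by omega
        have hIv : Invt v z := ih (len n v) hplt v z hdv hminv rfl
        have hvasc := Dprime hIv hzz ha hzasc
        have hdva : DemSelf n (v * simpleT n a) y := by
          rw [hyP]; exact demself_extend ha hdv hvasc
        have hge := hmin _ hdva
        have hlen_vs : len n (v * simpleT n a) = len n v + 1 := len_mul_asc ha hvasc
        have hminw' : ∀ v', DemSelf n v' z → len n w' ≤ len n v' := by
          intro v' hv'
          have := hminv v' hv'
          omega
        have hIw' : Invt w' z := ih (len n w') (by omega) w' z hdz hminw' rfl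
        by_cases hfix : z ⟨a, Nat.lt_of_succ_lt ha⟩ = ⟨a, Nat.lt_of_succ_lt ha⟩ ∧
            z ⟨a+1, ha⟩ = ⟨a+1, ha⟩
        · have hyz : y = z * simpleT n a := by
            rw [hyP, P_fix ha hzz hfix.1 hfix.2]
          rw [← hcon, hyz]
          exact closure_fix ha hzz hfix.1 hfix.2 hasc hIw'
        · have hyz : y = simpleT n a * (z * simpleT n a) := by
            rw [hyP, P_conj ha hzz hzasc hfix]
          rw [← hcon, hyz]
          exact closure_conj ha hzz hzasc hfix hIw'
      · exact absurd (z.injective hzeq) (Fin.ne_of_val_ne (show a ≠ a + 1 by omega))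
      · -- descent: y = z, contradiction with minimality
        exfalso
        have hyz : y = z := by rw [hyP, P_desc ha hzz hzdesc]
        have := hmin w' (by rw [hyz]; exact hdz)
        omega

end AtomProof


/-- For an atom `w` of an involution `y` and a cycle `(i,j)` of `y` with `i ≤ j`:
`w(i) ≥ w(j)` and there is no `i < k < j` with `w(i) > w(k) > w(j)`. -/
theorem atom_cycle_conditions (n : ℕ) (y w : Equiv.Perm (Fin n)) (hy : y * y = 1)
    (hw : IsAtomOf n y w) (i j : Fin n) (hij : i ≤ j) (hc : y i = j) :
    w j ≤ w i ∧ ¬ ∃ k : Fin n, i < k ∧ k < j ∧ w j < w k ∧ w k < w i := by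
  obtain ⟨hd, hmin⟩ := hw
  have hI : AtomProof.Invt w y := AtomProof.main_invt (len n w) w y hd hmin rfl
  exact AtomProof.Invt_cond hI hy hij hc
end

section
/- Let y be an involution in S_n and w ∈ A(y) an atom. If (i,j) and (k,l) are cycles of y with i < k and j < l, then w(k) ≥ w(l) > w(i) ≥ w(j). -/
open scoped Classical

noncomputable section
namespace ATC

variable {n : ℕ}

def Invs (n : ℕ) (w : Equiv.Perm (Fin n)) : Finset (Fin n × Fin n) :=
  Finset.univ.filter (fun p => p.1 < p.2 ∧ w p.2 < w p.1)

def inv (n : ℕ) (w : Equiv.Perm (Fin n)) : ℕ := (Invs n w).card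

lemma mem_Invs {w : Equiv.Perm (Fin n)} {p : Fin n × Fin n} :
    p ∈ Invs n w ↔ p.1 < p.2 ∧ w p.2 < w p.1 := by
  simp [Invs]

lemma simpleT_eq {c : ℕ} (h : n ≤ c + 1) : simpleT n c = 1 := by simp [simpleT, Nat.not_lt.2 h]

lemma simpleT_eq' {c : ℕ} (h : c + 1 < n) :
    simpleT n c = Equiv.swap ⟨c, Nat.lt_of_succ_lt h⟩ ⟨c + 1, h⟩ := by simp [simpleT, h]

lemma simpleT_mul_self (n c : ℕ) : simpleT n c * simpleT n c = 1 := by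
  by_cases h : c + 1 < n
  · rw [simpleT_eq' h]; exact Equiv.swap_mul_self _ _
  · rw [simpleT_eq (Nat.not_lt.1 h)]; simp

lemma wordProd_nil : wordProd n [] = 1 := rfl

lemma wordProd_append (l m : List ℕ) :
    wordProd n (l ++ m) = wordProd n l * wordProd n m := by
  simp [wordProd]

lemma wordProd_cons (c : ℕ) (l : List ℕ) :
    wordProd n (c :: l) = simpleT n c * wordProd n l := by
  simp [wordProd]

lemma wordProd_singleton (c : ℕ) : wordProd n [c] = simpleT n c := by
  simp [wordProd]

lemma swap_val {a b : Fin n} (hab : (b : ℕ) = (a : ℕ) + 1) (z : Fin n) :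
    ((Equiv.swap a b z : Fin n) : ℕ)
      = if (z : ℕ) = (a : ℕ) then (b : ℕ) else if (z : ℕ) = (b : ℕ) then (a : ℕ) else (z : ℕ) := by
  rcases eq_or_ne z a with rfl | hza
  · simp
  · rcases eq_or_ne z b with rfl | hzb
    · rw [Equiv.swap_apply_right, if_neg (by omega), if_pos rfl]
    · rw [Equiv.swap_apply_of_ne_of_ne hza hzb,
        if_neg (fun hc => hza (Fin.ext hc)), if_neg (fun hc => hzb (Fin.ext hc))]

lemma swap_adj_lt {a b x y : Fin n} (hab : (b : ℕ) = (a : ℕ) + 1) (hxy : x < y)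
    (hne : ¬(x = a ∧ y = b)) : Equiv.swap a b x < Equiv.swap a b y := by
  have hx := Fin.lt_def.1 hxy
  have hne' : ¬((x : ℕ) = (a : ℕ) ∧ (y : ℕ) = (b : ℕ)) := by
    rintro ⟨h1, h2⟩; exact hne ⟨Fin.ext h1, Fin.ext h2⟩
  rw [Fin.lt_def, swap_val hab, swap_val hab]
  split_ifs <;> omega

lemma invs_sdiff_card {c : ℕ} (h : c + 1 < n) (w : Equiv.Perm (Fin n)) :
    (Invs n (w * simpleT n c) \ {(⟨c, Nat.lt_of_succ_lt h⟩, ⟨c+1, h⟩)}).card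
      = (Invs n w \ {(⟨c, Nat.lt_of_succ_lt h⟩, ⟨c+1, h⟩)}).card := by
  set a : Fin n := ⟨c, Nat.lt_of_succ_lt h⟩ with ha
  set b : Fin n := ⟨c+1, h⟩ with hb
  have hab : (b : ℕ) = (a : ℕ) + 1 := rfl
  have hs := simpleT_eq' h
  refine Finset.card_bij' (fun p _ => (Equiv.swap a b p.1, Equiv.swap a b p.2))
    (fun p _ => (Equiv.swap a b p.1, Equiv.swap a b p.2)) ?_ ?_ ?_ ?_
  · intro p hp
    rw [Finset.mem_sdiff, mem_Invs] at hp ⊢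
    obtain ⟨⟨h1, h2⟩, h3⟩ := hp
    simp only [Finset.mem_singleton] at h3 ⊢
    rw [hs] at h2
    simp only [Equiv.Perm.mul_apply] at h2
    have hne : ¬ (p.1 = a ∧ p.2 = b) := fun ⟨e1, e2⟩ => h3 (by rw [← e1, ← e2])
    refine ⟨⟨swap_adj_lt hab h1 hne, h2⟩, ?_⟩
    intro hcon
    have e1 : Equiv.swap a b p.1 = a := congrArg Prod.fst hcon
    have e2 : Equiv.swap a b p.2 = b := congrArg Prod.snd hcon
    have e1' : p.1 = b := by
      have := congrArg (Equiv.swap a b) e1; simpa using this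
    have e2' : p.2 = a := by
      have := congrArg (Equiv.swap a b) e2; simpa using this
    rw [e1', e2'] at h1
    exact absurd h1 (by simp [Fin.lt_def, hab])
  · intro p hp
    rw [Finset.mem_sdiff, mem_Invs] at hp ⊢
    obtain ⟨⟨h1, h2⟩, h3⟩ := hp
    simp only [Finset.mem_singleton] at h3 ⊢
    have hne : ¬ (p.1 = a ∧ p.2 = b) := fun ⟨e1, e2⟩ => h3 (by rw [← e1, ← e2])
    refine ⟨⟨swap_adj_lt hab h1 hne, ?_⟩, ?_⟩
    · rw [hs]
      simp only [Equiv.Perm.mul_apply, a, b, Equiv.swap_apply_self]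
      exact h2
    · intro hcon
      have e1 : Equiv.swap a b p.1 = a := congrArg Prod.fst hcon
      have e2 : Equiv.swap a b p.2 = b := congrArg Prod.snd hcon
      have e1' : p.1 = b := by
        have := congrArg (Equiv.swap a b) e1; simpa using this
      have e2' : p.2 = a := by
        have := congrArg (Equiv.swap a b) e2; simpa using this
      rw [e1', e2'] at h1
      exact absurd h1 (by simp [Fin.lt_def, hab])
  · intro p _; simp
  · intro p _; simp

variable {c : ℕ} {w : Equiv.Perm (Fin n)}

lemma inv_one : inv n 1 = 0 := by
  rw [inv, Finset.card_eq_zero, Invs]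
  ext p
  simp only [Finset.mem_filter, Finset.mem_univ, true_and, Finset.notMem_empty, iff_false]
  rintro ⟨h1, h2⟩
  simp only [Equiv.Perm.one_apply] at h2
  exact absurd h1 (not_lt.2 h2.le)

lemma inv_mul_asc (h : c + 1 < n)
    (hasc : w ⟨c, Nat.lt_of_succ_lt h⟩ < w ⟨c+1, h⟩) :
    inv n (w * simpleT n c) = inv n w + 1 := by
  set a : Fin n := ⟨c, Nat.lt_of_succ_lt h⟩
  set b : Fin n := ⟨c+1, h⟩
  have hcard := invs_sdiff_card h w
  have hin : (a, b) ∈ Invs n (w * simpleT n c) := by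
    rw [mem_Invs]
    refine ⟨by simp [a, b, Fin.lt_def], ?_⟩
    rw [simpleT_eq' h]
    simpa [a, b, Equiv.swap_apply_left, Equiv.swap_apply_right] using hasc
  have hout : (a, b) ∉ Invs n w := by
    rw [mem_Invs]
    rintro ⟨-, h2⟩
    exact absurd hasc (not_lt.2 h2.le)
  rw [Finset.sdiff_singleton_eq_erase, Finset.sdiff_singleton_eq_erase,
    Finset.erase_eq_of_notMem hout] at hcard
  have := Finset.card_erase_add_one hin
  rw [inv, inv, ← this, hcard]

lemma inv_mul_desc (h : c + 1 < n)
    (hdesc : w ⟨c+1, h⟩ < w ⟨c, Nat.lt_of_succ_lt h⟩) :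
    inv n (w * simpleT n c) + 1 = inv n w := by
  set a : Fin n := ⟨c, Nat.lt_of_succ_lt h⟩
  set b : Fin n := ⟨c+1, h⟩
  have hcard := invs_sdiff_card h w
  have hin : (a, b) ∈ Invs n w := by
    rw [mem_Invs]
    exact ⟨by simp [a, b, Fin.lt_def], hdesc⟩
  have hout : (a, b) ∉ Invs n (w * simpleT n c) := by
    rw [mem_Invs]
    rintro ⟨-, h2⟩
    rw [simpleT_eq' h] at h2
    simp only [Equiv.Perm.mul_apply, a, b, Equiv.swap_apply_left, Equiv.swap_apply_right] at h2
    exact absurd hdesc (not_lt.2 h2.le)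
  rw [Finset.sdiff_singleton_eq_erase, Finset.sdiff_singleton_eq_erase,
    Finset.erase_eq_of_notMem hout] at hcard
  have := Finset.card_erase_add_one hin
  rw [inv, inv, hcard, this]

lemma inv_inv_eq (w : Equiv.Perm (Fin n)) : inv n w⁻¹ = inv n w := by
  refine Finset.card_bij' (fun p _ => ((w⁻¹ p.2 : Fin n), (w⁻¹ p.1 : Fin n)))
    (fun p _ => ((w p.2 : Fin n), (w p.1 : Fin n))) ?_ ?_ ?_ ?_
  · intro p hp
    rw [mem_Invs] at hp ⊢
    exact ⟨hp.2, by simpa using hp.1⟩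
  · intro p hp
    rw [mem_Invs] at hp ⊢
    exact ⟨hp.2, by simpa using hp.1⟩
  · intro p hp; simp
  · intro p hp; simp

lemma ne_one_exists_descent (hw : w ≠ 1) :
    ∃ c : ℕ, ∃ h : c + 1 < n, w ⟨c+1, h⟩ < w ⟨c, Nat.lt_of_succ_lt h⟩ := by
  by_contra hcon
  push_neg at hcon
  apply hw
  match n, w, hcon with
  | 0, w, hcon => exact Subsingleton.elim _ _
  | (m+1), w, hcon =>
    have hmono : StrictMono w := by
      rw [Fin.strictMono_iff_lt_succ]
      intro i
      have h : (i : ℕ) + 1 < m + 1 := by omega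
      have := hcon (i : ℕ) h
      have hcs : Fin.castSucc i = (⟨(i : ℕ), by omega⟩ : Fin (m+1)) := rfl
      have hsu : Fin.succ i = (⟨(i : ℕ) + 1, h⟩ : Fin (m+1)) := rfl
      rw [hcs, hsu]
      rcases lt_or_ge (w ⟨(i:ℕ), by omega⟩) (w ⟨(i:ℕ)+1, h⟩) with h' | h'
      · exact h'
      · rcases lt_or_eq_of_le h' with h'' | h''
        · exact absurd h'' (by simpa using this)
        · exfalso
          have heq : (⟨(i:ℕ)+1, h⟩ : Fin (m+1)) = ⟨(i:ℕ), by omega⟩ := w.injective h''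
          exact absurd (congrArg Fin.val heq) (by simp)
    have hiso : (StrictMono.orderIsoOfSurjective w hmono w.surjective)
        = OrderIso.refl (Fin (m+1)) := Subsingleton.elim _ _
    ext i
    have h1 : (StrictMono.orderIsoOfSurjective w hmono w.surjective) i = w i := by
      rw [StrictMono.coe_orderIsoOfSurjective]
    rw [hiso] at h1
    simp only [OrderIso.refl_apply] at h1
    exact congrArg Fin.val h1.symm

lemma inv_eq_zero (hw : inv n w = 0) : w = 1 := by
  by_contra hne
  obtain ⟨c, h, hdesc⟩ := ne_one_exists_descent hne
  have : (⟨c, Nat.lt_of_succ_lt h⟩, (⟨c+1, h⟩ : Fin n)) ∈ Invs n w :=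
    mem_Invs.2 ⟨by simp [Fin.lt_def], hdesc⟩
  rw [inv, Finset.card_eq_zero] at hw
  rw [hw] at this
  exact absurd this (Finset.notMem_empty _)

lemma exists_word_aux : ∀ N (w : Equiv.Perm (Fin n)), inv n w = N →
    ∃ l : List ℕ, wordProd n l = w ∧ l.length = inv n w := by
  intro N
  induction N using Nat.strong_induction_on with
  | _ N ih =>
    intro w hN
    rcases eq_or_ne w 1 with rfl | hne
    · exact ⟨[], wordProd_nil, by simp [inv_one]⟩
    · obtain ⟨c, h, hdesc⟩ := ne_one_exists_descent hne
      have hinv := inv_mul_desc h hdesc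
      obtain ⟨l, hl1, hl2⟩ := ih (inv n (w * simpleT n c)) (by omega) _ rfl
      refine ⟨l ++ [c], ?_, ?_⟩
      · rw [wordProd_append, hl1, wordProd_singleton, mul_assoc, simpleT_mul_self, mul_one]
      · simp [hl2]; omega

lemma exists_word (w : Equiv.Perm (Fin n)) :
    ∃ l : List ℕ, wordProd n l = w ∧ l.length = inv n w :=
  exists_word_aux _ w rfl

lemma inv_mul_simpleT_le (w : Equiv.Perm (Fin n)) (c : ℕ) :
    inv n (w * simpleT n c) ≤ inv n w + 1 := by
  by_cases h : c + 1 < n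
  · rcases lt_trichotomy (w ⟨c, Nat.lt_of_succ_lt h⟩) (w ⟨c+1, h⟩) with h' | h' | h'
    · rw [inv_mul_asc h h']
    · exact absurd (w.injective h') (by intro hc; exact absurd (congrArg Fin.val hc) (by simp))
    · have := inv_mul_desc h h'; omega
  · rw [simpleT_eq (Nat.not_lt.1 h), mul_one]; omega

lemma inv_wordProd_le (l : List ℕ) : inv n (wordProd n l) ≤ l.length := by
  induction l using List.reverseRecOn with
  | nil => simp [wordProd_nil, inv_one]
  | append_singleton l c ih =>
    rw [wordProd_append, wordProd_singleton]
    calc inv n (wordProd n l * simpleT n c) ≤ inv n (wordProd n l) + 1 :=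
          inv_mul_simpleT_le _ _
    _ ≤ l.length + 1 := by omega
    _ = (l ++ [c]).length := by simp

lemma len_eq_inv (w : Equiv.Perm (Fin n)) : len n w = inv n w := by
  apply le_antisymm
  · obtain ⟨l, hl1, hl2⟩ := exists_word w
    exact Nat.sInf_le ⟨l, hl2, hl1⟩
  · have hne : {p | ∃ l : List ℕ, l.length = p ∧ wordProd n l = w}.Nonempty := by
      obtain ⟨l, hl1, hl2⟩ := exists_word w
      exact ⟨l.length, l, rfl, hl1⟩
    obtain ⟨l, hl1, hl2⟩ := Nat.sInf_mem hne
    rw [len, ← hl1]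
    rw [← hl2]
    exact inv_wordProd_le l


section Stage3
variable {a b : ℕ} {u : Equiv.Perm (Fin n)}

lemma len_one : len n (1 : Equiv.Perm (Fin n)) = 0 := by rw [len_eq_inv, inv_one]

lemma len_eq_zero_iff : len n w = 0 ↔ w = 1 := by
  rw [len_eq_inv]
  exact ⟨inv_eq_zero, fun h => by rw [h, inv_one]⟩

lemma simpleT_inv (n c : ℕ) : (simpleT n c)⁻¹ = simpleT n c := by
  by_cases h : c + 1 < n
  · rw [simpleT_eq' h, Equiv.swap_inv]
  · rw [simpleT_eq (Nat.not_lt.1 h)]; simp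

lemma len_mul_asc (h : c + 1 < n) (hasc : w ⟨c, Nat.lt_of_succ_lt h⟩ < w ⟨c+1, h⟩) :
    len n (w * simpleT n c) = len n w + 1 := by
  rw [len_eq_inv, len_eq_inv]; exact inv_mul_asc h hasc

lemma len_mul_desc (h : c + 1 < n) (hdesc : w ⟨c+1, h⟩ < w ⟨c, Nat.lt_of_succ_lt h⟩) :
    len n (w * simpleT n c) + 1 = len n w := by
  rw [len_eq_inv, len_eq_inv]; exact inv_mul_desc h hdesc

lemma len_inv_perm (w : Equiv.Perm (Fin n)) : len n w⁻¹ = len n w := by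
  rw [len_eq_inv, len_eq_inv]; exact inv_inv_eq w

lemma apply_ne (w : Equiv.Perm (Fin n)) {x y : Fin n} (hxy : x ≠ y) : w x ≠ w y :=
  fun hc => hxy (w.injective hc)

lemma adj_ne (h : c + 1 < n) :
    (⟨c, Nat.lt_of_succ_lt h⟩ : Fin n) ≠ ⟨c+1, h⟩ := by
  intro hc; exact absurd (congrArg Fin.val hc) (by simp)

lemma len_mul_lt_iff (h : c + 1 < n) (w : Equiv.Perm (Fin n)) :
    len n w < len n (w * simpleT n c) ↔ w ⟨c, Nat.lt_of_succ_lt h⟩ < w ⟨c+1, h⟩ := by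
  rcases lt_trichotomy (w ⟨c, Nat.lt_of_succ_lt h⟩) (w ⟨c+1, h⟩) with h' | h' | h'
  · rw [len_mul_asc h h']; simp [h']
  · exact absurd (w.injective h') (adj_ne h)
  · have := len_mul_desc h h'
    constructor
    · intro hc; omega
    · intro hc; exact absurd h' (not_lt.2 hc.le)

lemma len_lmul_eq (c : ℕ) (w : Equiv.Perm (Fin n)) :
    len n (simpleT n c * w) = len n (w⁻¹ * simpleT n c) := by
  rw [← len_inv_perm (simpleT n c * w), mul_inv_rev, simpleT_inv]

lemma len_lmul_lt_iff (h : c + 1 < n) (w : Equiv.Perm (Fin n)) :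
    len n w < len n (simpleT n c * w) ↔ w⁻¹ ⟨c, Nat.lt_of_succ_lt h⟩ < w⁻¹ ⟨c+1, h⟩ := by
  rw [len_lmul_eq, ← len_inv_perm w]
  exact len_mul_lt_iff h w⁻¹

lemma demStepR_asc (h : c + 1 < n) (hasc : w ⟨c, Nat.lt_of_succ_lt h⟩ < w ⟨c+1, h⟩) :
    demStepR n w c = w * simpleT n c := by
  rw [demStepR, if_pos ((len_mul_lt_iff h w).2 hasc)]

lemma demStepR_desc (h : c + 1 < n) (hdesc : w ⟨c+1, h⟩ < w ⟨c, Nat.lt_of_succ_lt h⟩) :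
    demStepR n w c = w := by
  rw [demStepR, if_neg]
  rw [len_mul_lt_iff h w]
  exact not_lt.2 hdesc.le

lemma demStepR_invalid (h : ¬ c + 1 < n) (w : Equiv.Perm (Fin n)) :
    demStepR n w c = w := by
  rw [demStepR, simpleT_eq (Nat.not_lt.1 h), mul_one, if_neg (lt_irrefl _)]

lemma demStepL_asc (h : c + 1 < n) (hasc : w⁻¹ ⟨c, Nat.lt_of_succ_lt h⟩ < w⁻¹ ⟨c+1, h⟩) :
    demStepL n c w = simpleT n c * w := by
  rw [demStepL, if_pos ((len_lmul_lt_iff h w).2 hasc)]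

lemma demStepL_desc (h : c + 1 < n) (hdesc : w⁻¹ ⟨c+1, h⟩ < w⁻¹ ⟨c, Nat.lt_of_succ_lt h⟩) :
    demStepL n c w = w := by
  rw [demStepL, if_neg]
  rw [len_lmul_lt_iff h w]
  exact not_lt.2 hdesc.le

lemma demStepL_invalid (h : ¬ c + 1 < n) (w : Equiv.Perm (Fin n)) :
    demStepL n c w = w := by
  rw [demStepL, simpleT_eq (Nat.not_lt.1 h), one_mul, if_neg (lt_irrefl _)]

lemma lt_or_gt_adj (h : c + 1 < n) (w : Equiv.Perm (Fin n)) :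
    w ⟨c, Nat.lt_of_succ_lt h⟩ < w ⟨c+1, h⟩ ∨ w ⟨c+1, h⟩ < w ⟨c, Nat.lt_of_succ_lt h⟩ := by
  rcases lt_trichotomy (w ⟨c, Nat.lt_of_succ_lt h⟩) (w ⟨c+1, h⟩) with h' | h' | h'
  · exact Or.inl h'
  · exact absurd (w.injective h') (adj_ne h)
  · exact Or.inr h'

end Stage3

section Stage4
variable {a b : ℕ} {u : Equiv.Perm (Fin n)}

lemma demStep_comm (n a b : ℕ) (u : Equiv.Perm (Fin n)) :
    demStepR n (demStepL n a u) b = demStepL n a (demStepR n u b) := by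
  by_cases ha : a + 1 < n
  swap
  · rw [demStepL_invalid ha, demStepL_invalid ha]
  by_cases hb : b + 1 < n
  swap
  · rw [demStepR_invalid hb, demStepR_invalid hb]
  set A : Fin n := ⟨a, Nat.lt_of_succ_lt ha⟩ with hA
  set A' : Fin n := ⟨a+1, ha⟩ with hA'
  set B : Fin n := ⟨b, Nat.lt_of_succ_lt hb⟩ with hB
  set B' : Fin n := ⟨b+1, hb⟩ with hB'
  have hAA' : (A' : ℕ) = (A : ℕ) + 1 := rfl
  have hBB' : (B' : ℕ) = (B : ℕ) + 1 := rfl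
  have hBltB' : B < B' := by simp [hB, hB', Fin.lt_def]
  have hsa := simpleT_eq' ha
  have hsb := simpleT_eq' hb
  rcases lt_or_gt_adj ha u⁻¹ with hP | hP <;> rcases lt_or_gt_adj hb u with hQ | hQ
  · -- P asc, Q asc
    by_cases hbeta : u B = A ∧ u B' = A'
    · obtain ⟨h1, h2⟩ := hbeta
      have hcomm : simpleT n a * u = u * simpleT n b := by
        ext x
        simp only [Equiv.Perm.mul_apply, hsa, hsb]
        rcases eq_or_ne x B with rfl | hxB
        · rw [Equiv.swap_apply_left, h1, Equiv.swap_apply_left, h2]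
        · rcases eq_or_ne x B' with rfl | hxB'
          · rw [Equiv.swap_apply_right, h2, Equiv.swap_apply_right, h1]
          · rw [Equiv.swap_apply_of_ne_of_ne hxB hxB',
              Equiv.swap_apply_of_ne_of_ne]
            · intro hc; exact hxB (u.injective (hc.trans h1.symm))
            · intro hc; exact hxB' (u.injective (hc.trans h2.symm))
      rw [demStepL_asc ha hP, demStepR_asc hb hQ]
      rw [demStepR_desc hb (w := simpleT n a * u), demStepL_desc ha (w := u * simpleT n b)]
      · exact hcomm
      · -- (u * t)⁻¹ descent at a : (u t)⁻¹ A' < (u t)⁻¹ A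
        have e1 : (u * simpleT n b)⁻¹ A' = B := by
          rw [mul_inv_rev, simpleT_inv, Equiv.Perm.mul_apply, hsb]
          rw [show u⁻¹ A' = B' from by rw [← h2]; exact Equiv.symm_apply_apply u B']
          exact Equiv.swap_apply_right _ _
        have e2 : (u * simpleT n b)⁻¹ A = B' := by
          rw [mul_inv_rev, simpleT_inv, Equiv.Perm.mul_apply, hsb]
          rw [show u⁻¹ A = B from by rw [← h1]; exact Equiv.symm_apply_apply u B]
          exact Equiv.swap_apply_left _ _
        rw [e1, e2]; exact hBltB'
      · -- (s u) descent at b : (s u) B' < (s u) B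
        have e1 : (simpleT n a * u) B' = A := by
          rw [Equiv.Perm.mul_apply, h2, hsa]; exact Equiv.swap_apply_right _ _
        have e2 : (simpleT n a * u) B = A' := by
          rw [Equiv.Perm.mul_apply, h1, hsa]; exact Equiv.swap_apply_left _ _
        rw [e1, e2]
        simp [hA, hA', Fin.lt_def]
    · rw [demStepL_asc ha hP, demStepR_asc hb hQ]
      rw [demStepR_asc hb (w := simpleT n a * u), demStepL_asc ha (w := u * simpleT n b)]
      · rw [mul_assoc]
      · -- (u t)⁻¹ ascent at a
        have hx : u⁻¹ A < u⁻¹ A' := hP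
        have hne : ¬(u⁻¹ A = B ∧ u⁻¹ A' = B') := by
          rintro ⟨e1, e2⟩
          exact hbeta ⟨by rw [← e1]; exact Equiv.apply_symm_apply u _, by rw [← e2]; exact Equiv.apply_symm_apply u _⟩
        have := swap_adj_lt hBB' hx hne
        rw [mul_inv_rev, simpleT_inv]
        simpa [Equiv.Perm.mul_apply, hsb] using this
      · -- (s u) ascent at b
        have hne : ¬(u B = A ∧ u B' = A') := hbeta
        have := swap_adj_lt hAA' hQ hne
        simpa [Equiv.Perm.mul_apply, hsa] using this
  · -- P asc, Q desc
    rw [demStepR_desc hb hQ, demStepL_asc ha hP, demStepR_desc hb (w := simpleT n a * u)]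
    have hne : ¬(u B' = A ∧ u B = A') := by
      rintro ⟨e1, e2⟩
      have f1 : u⁻¹ A = B' := by rw [← e1]; exact Equiv.symm_apply_apply u _
      have f2 : u⁻¹ A' = B := by rw [← e2]; exact Equiv.symm_apply_apply u _
      rw [f1, f2] at hP
      exact absurd hBltB' (not_lt.2 hP.le)
    have := swap_adj_lt hAA' hQ hne
    simpa [Equiv.Perm.mul_apply, hsa] using this
  · -- P desc, Q asc
    rw [demStepL_desc ha hP, demStepR_asc hb hQ, demStepL_desc ha (w := u * simpleT n b)]
    have hne : ¬(u⁻¹ A' = B ∧ u⁻¹ A = B') := by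
      rintro ⟨e1, e2⟩
      have f1 : u B = A' := by rw [← e1]; exact Equiv.apply_symm_apply u _
      have f2 : u B' = A := by rw [← e2]; exact Equiv.apply_symm_apply u _
      rw [f1, f2] at hQ
      have : A < A' := by simp [hA, hA', Fin.lt_def]
      exact absurd this (not_lt.2 hQ.le)
    have := swap_adj_lt hBB' hP hne
    rw [mul_inv_rev, simpleT_inv]
    simpa [Equiv.Perm.mul_apply, hsb] using this
  · -- P desc, Q desc
    rw [demStepL_desc ha hP, demStepR_desc hb hQ, demStepL_desc ha hP]

end Stage4

section Stage5
variable {a b c : ℕ} {u w : Equiv.Perm (Fin n)}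

lemma demWord_nil : demWord n [] = 1 := rfl

lemma demWord_aux (p q : List ℕ) :
    demWord n (p ++ q) = List.foldl (demStepR n) (demWord n p) q := by
  rw [demWord, List.foldl_append, demWord]

lemma demWord_concat (p : List ℕ) (c : ℕ) :
    demWord n (p ++ [c]) = demStepR n (demWord n p) c := by
  rw [demWord_aux]; rfl

lemma foldl_demStepL (m : List ℕ) (a : ℕ) (u : Equiv.Perm (Fin n)) :
    List.foldl (demStepR n) (demStepL n a u) m
      = demStepL n a (List.foldl (demStepR n) u m) := by
  induction m generalizing u with
  | nil => rfl
  | cons x m ih =>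
    simp only [List.foldl_cons]
    rw [demStep_comm, ih]

lemma demStepR_one (c : ℕ) : demStepR n 1 c = demStepL n c 1 := by
  by_cases h : c + 1 < n
  · rw [demStepR_asc h (by simp [Fin.lt_def]), demStepL_asc h (by simp [Fin.lt_def]),
      one_mul, mul_one]
  · rw [demStepR_invalid h, demStepL_invalid h]

lemma demWord_cons (c : ℕ) (m : List ℕ) :
    demWord n (c :: m) = demStepL n c (demWord n m) := by
  show List.foldl (demStepR n) (demStepR n 1 c) m = _
  rw [demStepR_one, foldl_demStepL, demWord]

lemma demStepR_inv (w : Equiv.Perm (Fin n)) (c : ℕ) :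
    (demStepR n w c)⁻¹ = demStepL n c w⁻¹ := by
  by_cases h : c + 1 < n
  swap
  · rw [demStepR_invalid h, demStepL_invalid h]
  rcases lt_or_gt_adj h w with hQ | hQ
  · rw [demStepR_asc h hQ, demStepL_asc h (by rw [inv_inv]; exact hQ), mul_inv_rev, simpleT_inv]
  · rw [demStepR_desc h hQ, demStepL_desc h (by rw [inv_inv]; exact hQ)]

lemma demWord_reverse (m : List ℕ) : demWord n m.reverse = (demWord n m)⁻¹ := by
  induction m using List.reverseRecOn with
  | nil => simp [demWord_nil]
  | append_singleton m c ih =>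
    rw [List.reverse_append, List.reverse_singleton, List.singleton_append,
      demWord_cons, ih, demWord_concat, demStepR_inv]

lemma demWord_refl_inv (a : List ℕ) :
    (demWord n (a.reverse ++ a))⁻¹ = demWord n (a.reverse ++ a) := by
  rw [← demWord_reverse, List.reverse_append, List.reverse_reverse]

lemma demWord_refl_concat (m : List ℕ) (c : ℕ) :
    demWord n ((m ++ [c]).reverse ++ (m ++ [c]))
      = demStepL n c (demStepR n (demWord n (m.reverse ++ m)) c) := by
  have : (m ++ [c]).reverse ++ (m ++ [c]) = c :: ((m.reverse ++ m) ++ [c]) := by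
    simp
  rw [this, demWord_cons, demWord_concat]

lemma len_lmul_le (x : ℕ) (v : Equiv.Perm (Fin n)) :
    len n (simpleT n x * v) ≤ len n v + 1 := by
  rw [len_lmul_eq, ← len_inv_perm v, len_eq_inv, len_eq_inv]
  exact inv_mul_simpleT_le _ _

lemma len_lmul_asc (h : a + 1 < n) (hasc : u⁻¹ ⟨a, Nat.lt_of_succ_lt h⟩ < u⁻¹ ⟨a+1, h⟩) :
    len n (simpleT n a * u) = len n u + 1 := by
  rw [len_lmul_eq, ← len_inv_perm u]
  exact len_mul_asc h hasc

lemma demStepL_cases (a : ℕ) (u : Equiv.Perm (Fin n)) :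
    demStepL n a u = u ∨
      (demStepL n a u = simpleT n a * u ∧ len n (simpleT n a * u) = len n u + 1) := by
  by_cases h : a + 1 < n
  swap
  · exact Or.inl (demStepL_invalid h u)
  rcases lt_or_gt_adj h u⁻¹ with hP | hP
  · exact Or.inr ⟨demStepL_asc h hP, len_lmul_asc h hP⟩
  · exact Or.inl (demStepL_desc h hP)

lemma desc_pres_demStepL (hdesc : len n (u * simpleT n c) < len n u) (a : ℕ) :
    len n (demStepL n a u * simpleT n c) < len n (demStepL n a u) := by
  rcases demStepL_cases a u with h | ⟨h1, h2⟩
  · rw [h]; exact hdesc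
  · rw [h1, h2, mul_assoc]
    calc len n (simpleT n a * (u * simpleT n c)) ≤ len n (u * simpleT n c) + 1 :=
          len_lmul_le _ _
    _ < len n u + 1 := by omega

lemma desc_pres_prefix (p q : List ℕ) (c : ℕ)
    (hdesc : len n (demWord n q * simpleT n c) < len n (demWord n q)) :
    len n (demWord n (p ++ q) * simpleT n c) < len n (demWord n (p ++ q)) := by
  induction p with
  | nil => simpa using hdesc
  | cons x p ih =>
    rw [List.cons_append, demWord_cons]
    exact desc_pres_demStepL ih x

lemma demWord_reduced (l : List ℕ) (hred : l.length = len n (wordProd n l)) :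
    demWord n l = wordProd n l := by
  induction l using List.reverseRecOn with
  | nil => rw [demWord_nil, wordProd_nil]
  | append_singleton m c ih =>
    have hw : wordProd n (m ++ [c]) = wordProd n m * simpleT n c := by
      rw [wordProd_append, wordProd_singleton]
    have hlen1 : len n (wordProd n m) ≤ m.length := by
      obtain ⟨l', h1, h2⟩ := exists_word (n := n) (wordProd n m)
      calc len n (wordProd n m) = inv n (wordProd n m) := len_eq_inv _
      _ ≤ m.length := inv_wordProd_le m
    have hle : len n (wordProd n (m ++ [c])) ≤ len n (wordProd n m) + 1 := by
      rw [hw, len_eq_inv, len_eq_inv]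
      exact inv_mul_simpleT_le _ _
    have hlen : m.length + 1 = len n (wordProd n (m ++ [c])) := by
      simpa using hred
    have hred' : m.length = len n (wordProd n m) := by omega
    have hasc : len n (wordProd n m) < len n (wordProd n m * simpleT n c) := by
      rw [← hw]; omega
    rw [demWord_concat, ih hred', hw, demStepR, if_pos hasc]

/-- peeling the last letter of a reduced word -/
lemma reduced_concat (m : List ℕ) (c : ℕ)
    (hred : (m ++ [c]).length = len n (wordProd n (m ++ [c]))) :
    m.length = len n (wordProd n m) ∧ c + 1 < n ∧
      ∃ h : c + 1 < n, wordProd n m ⟨c, Nat.lt_of_succ_lt h⟩ < wordProd n m ⟨c+1, h⟩ := by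
  have hw : wordProd n (m ++ [c]) = wordProd n m * simpleT n c := by
    rw [wordProd_append, wordProd_singleton]
  have hlen1 : len n (wordProd n m) ≤ m.length := by
    calc len n (wordProd n m) = inv n (wordProd n m) := len_eq_inv _
    _ ≤ m.length := inv_wordProd_le m
  have hle : len n (wordProd n (m ++ [c])) ≤ len n (wordProd n m) + 1 := by
    rw [hw, len_eq_inv, len_eq_inv]
    exact inv_mul_simpleT_le _ _
  have hlen : m.length + 1 = len n (wordProd n (m ++ [c])) := by simpa using hred
  have hred' : m.length = len n (wordProd n m) := by omega
  have hvalid : c + 1 < n := by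
    by_contra hc
    rw [hw, simpleT_eq (Nat.not_lt.1 hc), mul_one] at hlen
    omega
  have hasc : len n (wordProd n m) < len n (wordProd n m * simpleT n c) := by
    rw [← hw]; omega
  exact ⟨hred', hvalid, hvalid, (len_mul_lt_iff hvalid _).1 hasc⟩

end Stage5

section Stage6
variable {c : ℕ}

lemma demSelf_of_word (a : List ℕ) (v z : Equiv.Perm (Fin n))
    (h1 : wordProd n a = v) (h2 : a.length = len n v)
    (h3 : demWord n (a.reverse ++ a) = z) : DemSelf n v z := ⟨a, h1, h2, h3⟩

lemma peel (m : List ℕ) (c : ℕ) (w y : Equiv.Perm (Fin n))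
    (hprod : wordProd n (m ++ [c]) = w)
    (hred : (m ++ [c]).length = len n w)
    (hy : demWord n ((m ++ [c]).reverse ++ (m ++ [c])) = y)
    (hmin : ∀ v, DemSelf n v y → len n w ≤ len n v) :
    ∃ h : c + 1 < n,
      m.length = len n (wordProd n m) ∧
      wordProd n m ⟨c, Nat.lt_of_succ_lt h⟩ < wordProd n m ⟨c+1, h⟩ ∧
      demWord n (m.reverse ++ m) ⟨c, Nat.lt_of_succ_lt h⟩
        < demWord n (m.reverse ++ m) ⟨c+1, h⟩ ∧
      y = demStepL n c (demStepR n (demWord n (m.reverse ++ m)) c) ∧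
      (∀ v, DemSelf n v (demWord n (m.reverse ++ m)) →
        len n (wordProd n m) ≤ len n v) := by
  subst hprod
  obtain ⟨hm_red, hvalid, h2, hasc⟩ := reduced_concat m c hred
  set w'' := wordProd n m with hw''
  set z := demWord n (m.reverse ++ m) with hz
  have hyz : y = demStepL n c (demStepR n z c) := by
    rw [← hy, demWord_refl_concat]
  have hlenw : len n (wordProd n (m ++ [c])) = m.length + 1 := by
    rw [← hred]; simp
  have hzinv : z⁻¹ = z := demWord_refl_inv m
  -- Claim 1 : z has an ascent at c
  have claim1 : z ⟨c, Nat.lt_of_succ_lt hvalid⟩ < z ⟨c+1, hvalid⟩ := by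
    by_contra hcon
    have hdesc : z ⟨c+1, hvalid⟩ < z ⟨c, Nat.lt_of_succ_lt hvalid⟩ := by
      rcases lt_or_gt_adj hvalid z with h' | h'
      · exact absurd h' hcon
      · exact h'
    have hR : demStepR n z c = z := demStepR_desc hvalid hdesc
    have hL : demStepL n c z = z := by
      apply demStepL_desc hvalid
      rw [hzinv]
      exact hdesc
    have hyz' : y = z := by rw [hyz, hR, hL]
    have : DemSelf n w'' y := demSelf_of_word m w'' y rfl hm_red (by rw [hyz'])
    have := hmin w'' this
    omega
  refine ⟨hvalid, hm_red, hasc, claim1, hyz, ?_⟩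
  -- Claim 2 : minimality transfers
  intro v hv
  obtain ⟨a, ha1, ha2, ha3⟩ := hv
  rcases lt_or_gt_adj hvalid v with hva | hvd
  · -- v has an ascent at c
    have hlenvs : len n (v * simpleT n c) = len n v + 1 := len_mul_asc hvalid hva
    have hds : DemSelf n (v * simpleT n c) y := by
      refine demSelf_of_word (a ++ [c]) _ _ ?_ ?_ ?_
      · rw [wordProd_append, wordProd_singleton, ha1]
      · simp [hlenvs, ha2]
      · rw [demWord_refl_concat, ha3, ← hyz]
    have := hmin _ hds
    rw [hlenvs] at this
    omega
  · -- v has a descent at c : impossible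
    exfalso
    have hared : a.length = len n (wordProd n a) := by rw [ha1]; exact ha2
    have hda : demWord n a = v := by rw [demWord_reduced a hared, ha1]
    have hdesc : len n (demWord n a * simpleT n c) < len n (demWord n a) := by
      rw [hda]
      have := len_mul_desc hvalid hvd
      omega
    have := desc_pres_prefix a.reverse a c hdesc
    rw [ha3] at this
    have hasc' : len n z < len n (z * simpleT n c) := (len_mul_lt_iff hvalid z).2 claim1
    omega

end Stage6

section Stage7

lemma swap_adj_le {a b x y : Fin n} (hab : (b : ℕ) = (a : ℕ) + 1) (hxy : x ≤ y)
    (hne : ¬(x = a ∧ y = b)) : Equiv.swap a b x ≤ Equiv.swap a b y := by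
  rcases eq_or_lt_of_le hxy with rfl | h
  · exact le_refl _
  · exact (swap_adj_lt hab h hne).le

lemma main_aux (l : List ℕ) : ∀ (w y : Equiv.Perm (Fin n)),
    wordProd n l = w → l.length = len n w → demWord n (l.reverse ++ l) = y →
    (∀ v, DemSelf n v y → len n w ≤ len n v) →
    ∀ i j k p : Fin n, i ≤ j → y i = j → k ≤ p → y k = p → i < k → j < p →
      w p ≤ w k ∧ w i < w p ∧ w j ≤ w i := by
  induction l using List.reverseRecOn with
  | nil =>
    intro w y hw hred hy hmin i j k p hij hci hkp hck hik hjp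
    have hw1 : w = 1 := by rw [← hw]; rfl
    have hy1 : y = 1 := by rw [← hy]; rfl
    rw [hy1] at hci hck
    simp only [Equiv.Perm.one_apply] at hci hck
    subst hci; subst hck
    subst hw1
    simp only [Equiv.Perm.one_apply]
    exact ⟨le_refl _, hik, le_refl _⟩
  | append_singleton m c ih =>
    intro w y hw hred hy hmin i j k p hij hci hkp hck hik hjp
    obtain ⟨hvalid, hm_red, hascW, hascZ, hyz, hmin'⟩ := peel m c w y hw hred hy hmin
    set A : Fin n := ⟨c, Nat.lt_of_succ_lt hvalid⟩ with hA
    set A' : Fin n := ⟨c+1, hvalid⟩ with hA'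
    have hAA' : (A' : ℕ) = (A : ℕ) + 1 := rfl
    have hAltA' : A < A' := by simp [hA, hA', Fin.lt_def]
    set w'' := wordProd n m with hw''
    set z := demWord n (m.reverse ++ m) with hz
    have hs := simpleT_eq' hvalid
    have hw_eq : w = w'' * simpleT n c := by
      rw [← hw, wordProd_append, wordProd_singleton]
    have hW : ∀ x, w x = w'' (Equiv.swap A A' x) := fun x => by
      rw [hw_eq, Equiv.Perm.mul_apply, hs]
    have hzinv : z⁻¹ = z := demWord_refl_inv m
    have hz2 : ∀ x, z (z x) = x := fun x => by
      nth_rewrite 1 [← hzinv]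
      exact Equiv.symm_apply_apply z x
    have hR : demStepR n z c = z * simpleT n c := demStepR_asc hvalid hascZ
    have IH := ih w'' z rfl hm_red rfl hmin'
    by_cases hfix : z A = A ∧ z A' = A'
    · -- case (i) : y = z * s, new cycle (A, A')
      obtain ⟨hfA, hfA'⟩ := hfix
      have hL : demStepL n c (z * simpleT n c) = z * simpleT n c := by
        apply demStepL_desc hvalid
        have e : (z * simpleT n c)⁻¹ = simpleT n c * z := by
          rw [mul_inv_rev, simpleT_inv, hzinv]
        rw [e, Equiv.Perm.mul_apply, Equiv.Perm.mul_apply, hfA, hfA', hs,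
          Equiv.swap_apply_left, Equiv.swap_apply_right]
        exact hAltA'
      have hy_eq : y = z * simpleT n c := by rw [hyz, hR, hL]
      have hyv : ∀ x, y x = z (Equiv.swap A A' x) := fun x => by
        rw [hy_eq, Equiv.Perm.mul_apply, hs]
      have hyA : y A = A' := by rw [hyv, Equiv.swap_apply_left, hfA']
      have hyA' : y A' = A := by rw [hyv, Equiv.swap_apply_right, hfA]
      have hyother : ∀ x, x ≠ A → x ≠ A' → y x = z x := fun x h1 h2 => by
        rw [hyv, Equiv.swap_apply_of_ne_of_ne h1 h2]
      by_cases hiA : i = A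
      · -- (i,j) = (A,A')
        subst hiA
        have hj : j = A' := by rw [← hci, hyA]
        subst hj
        have hkA : k ≠ A := by intro hc; rw [hc] at hik; exact lt_irrefl _ hik
        have hkA' : k ≠ A' := by
          intro hc
          rw [hc, hyA'] at hck
          subst hck
          rw [hc] at hkp
          exact absurd hkp (not_le.2 hAltA')
        have hpz : z k = p := by rw [← hyother k hkA hkA', hck]
        have hpA : p ≠ A := by
          intro hc; rw [hc] at hpz
          exact hkA (by rw [← hz2 k, hpz, hfA])
        have hpA' : p ≠ A' := by
          intro hc; rw [hc] at hpz
          exact hkA' (by rw [← hz2 k, hpz, hfA'])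
        have hAk : A < k := hik
        have hA'k : A' < k := by
          rw [Fin.lt_def] at hAk ⊢
          have : (k : ℕ) ≠ c + 1 := fun hc => hkA' (Fin.ext hc)
          omega
        have hA'p : A' < p := hjp
        have hAp : A < p := hAltA'.trans hA'p
        have IH1 := IH A A k p (le_refl A) hfA hkp hpz hAk hAp
        have IH2 := IH A' A' k p (le_refl A') hfA' hkp hpz hA'k hA'p
        have ek : Equiv.swap A A' k = k := Equiv.swap_apply_of_ne_of_ne hkA hkA'
        have ep : Equiv.swap A A' p = p := Equiv.swap_apply_of_ne_of_ne hpA hpA'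
        refine ⟨?_, ?_, ?_⟩
        · rw [hW, hW, ek, ep]; exact IH1.1
        · rw [hW, hW, ep, Equiv.swap_apply_left]; exact IH2.2.1
        · rw [hW, hW, Equiv.swap_apply_left, Equiv.swap_apply_right]
          exact hascW.le
      · -- i ≠ A
        have hiA' : i ≠ A' := by
          intro hc
          rw [hc, hyA'] at hci
          subst hci
          rw [hc] at hij
          exact absurd hij (not_le.2 hAltA')
        have hji : z i = j := by rw [← hyother i hiA hiA', hci]
        have hjA : j ≠ A := by
          intro hc; rw [hc] at hji
          exact hiA (by rw [← hz2 i, hji, hfA])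
        have hjA' : j ≠ A' := by
          intro hc; rw [hc] at hji
          exact hiA' (by rw [← hz2 i, hji, hfA'])
        have ei : Equiv.swap A A' i = i := Equiv.swap_apply_of_ne_of_ne hiA hiA'
        have ej : Equiv.swap A A' j = j := Equiv.swap_apply_of_ne_of_ne hjA hjA'
        by_cases hkA : k = A
        · -- (k,p) = (A,A')
          subst hkA
          have hp : p = A' := by rw [← hck, hyA]
          subst hp
          have hiltA : i < A := hik
          have hjltA : j < A := by
            rw [Fin.lt_def] at hjp ⊢
            have : (j : ℕ) ≠ c := fun hc => hjA (Fin.ext hc)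
            rw [hAA'] at hjp
            omega
          have IH3 := IH i j A A hij hji (le_refl A) hfA hiltA hjltA
          refine ⟨?_, ?_, ?_⟩
          · rw [hW, hW, Equiv.swap_apply_left, Equiv.swap_apply_right]
            exact hascW.le
          · rw [hW, hW, ei, Equiv.swap_apply_right]
            exact IH3.2.1
          · rw [hW, hW, ei, ej]
            exact IH3.2.2
        · -- k ∉ {A, A'}
          have hkA' : k ≠ A' := by
            intro hc
            rw [hc, hyA'] at hck
            subst hck
            rw [hc] at hkp
            exact absurd hkp (not_le.2 hAltA')
          have hpz : z k = p := by rw [← hyother k hkA hkA', hck]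
          have hpA : p ≠ A := by
            intro hc; rw [hc] at hpz
            exact hkA (by rw [← hz2 k, hpz, hfA])
          have hpA' : p ≠ A' := by
            intro hc; rw [hc] at hpz
            exact hkA' (by rw [← hz2 k, hpz, hfA'])
          have ek : Equiv.swap A A' k = k := Equiv.swap_apply_of_ne_of_ne hkA hkA'
          have ep : Equiv.swap A A' p = p := Equiv.swap_apply_of_ne_of_ne hpA hpA'
          have IH4 := IH i j k p hij hji hkp hpz hik hjp
          refine ⟨?_, ?_, ?_⟩
          · rw [hW, hW, ek, ep]; exact IH4.1
          · rw [hW, hW, ei, ep]; exact IH4.2.1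
          · rw [hW, hW, ei, ej]; exact IH4.2.2
    · -- case (ii) : y = s z s
      have hL : demStepL n c (z * simpleT n c)
          = simpleT n c * (z * simpleT n c) := by
        apply demStepL_asc hvalid
        have e : (z * simpleT n c)⁻¹ = simpleT n c * z := by
          rw [mul_inv_rev, simpleT_inv, hzinv]
        rw [e, Equiv.Perm.mul_apply, Equiv.Perm.mul_apply, hs]
        exact swap_adj_lt hAA' hascZ hfix
      have hy_eq : y = simpleT n c * (z * simpleT n c) := by rw [hyz, hR, hL]
      have hyv : ∀ x, y x = Equiv.swap A A' (z (Equiv.swap A A' x)) := fun x => by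
        rw [hy_eq, Equiv.Perm.mul_apply, Equiv.Perm.mul_apply, hs]
      have hcyc : ∀ x x' : Fin n, y x = x' → z (Equiv.swap A A' x) = Equiv.swap A A' x' := by
        intro x x' hxx'
        rw [hyv] at hxx'
        rw [← hxx', Equiv.swap_apply_self]
      have hci' := hcyc i j hci
      have hck' := hcyc k p hck
      have hne1 : ¬(i = A ∧ j = A') := by
        rintro ⟨rfl, rfl⟩
        rw [Equiv.swap_apply_left, Equiv.swap_apply_right] at hci'
        have h2 : z A = A' := by rw [← hz2 A', hci']
        rw [h2, hci'] at hascZ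
        exact absurd hAltA' (not_lt.2 hascZ.le)
      have hne2 : ¬(k = A ∧ p = A') := by
        rintro ⟨rfl, rfl⟩
        rw [Equiv.swap_apply_left, Equiv.swap_apply_right] at hck'
        have h2 : z A = A' := by rw [← hz2 A', hck']
        rw [h2, hck'] at hascZ
        exact absurd hAltA' (not_lt.2 hascZ.le)
      have hbad1 : ¬(i = A ∧ k = A') := by
        rintro ⟨rfl, rfl⟩
        rw [Equiv.swap_apply_left] at hci'
        rw [Equiv.swap_apply_right] at hck'
        have hlt : z A < z A' := hascZ
        rw [hck', hci'] at hlt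
        by_cases hc : j = A ∧ p = A'
        · obtain ⟨rfl, rfl⟩ := hc
          rw [Equiv.swap_apply_left] at hci'
          rw [Equiv.swap_apply_right] at hck'
          exact hfix ⟨hck', hci'⟩
        · exact absurd (swap_adj_lt hAA' hjp hc) (not_lt.2 hlt.le)
      have hbad2 : ¬(j = A ∧ p = A') := by
        rintro ⟨rfl, rfl⟩
        rw [Equiv.swap_apply_left] at hci'
        rw [Equiv.swap_apply_right] at hck'
        have hiAkA' : ¬(i = A ∧ k = A') := hbad1
        have hzA' : z A' = Equiv.swap A A' i := by
          have := congrArg z hci'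
          rw [hz2] at this
          exact this.symm
        have hzA : z A = Equiv.swap A A' k := by
          have := congrArg z hck'
          rw [hz2] at this
          exact this.symm
        have hlt : z A < z A' := hascZ
        rw [hzA, hzA'] at hlt
        by_cases hc : i = A ∧ k = A'
        · exact hbad1 hc
        · exact absurd (swap_adj_lt hAA' hik hc) (not_lt.2 hlt.le)
      have hik' : Equiv.swap A A' i < Equiv.swap A A' k := swap_adj_lt hAA' hik hbad1
      have hjp' : Equiv.swap A A' j < Equiv.swap A A' p := swap_adj_lt hAA' hjp hbad2
      have hij' : Equiv.swap A A' i ≤ Equiv.swap A A' j := swap_adj_le hAA' hij hne1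
      have hkp' : Equiv.swap A A' k ≤ Equiv.swap A A' p := swap_adj_le hAA' hkp hne2
      have IH5 := IH (Equiv.swap A A' i) (Equiv.swap A A' j) (Equiv.swap A A' k)
        (Equiv.swap A A' p) hij' hci' hkp' hck' hik' hjp'
      refine ⟨?_, ?_, ?_⟩
      · rw [hW, hW]; exact IH5.1
      · rw [hW, hW]; exact IH5.2.1
      · rw [hW, hW]; exact IH5.2.2

end Stage7
end ATC
end

/-- For an atom `w` of an involution `y` and cycles `(i,j)`, `(k,l)` of `y` with
`i < k` and `j < l`: `w(k) ≥ w(l) > w(i) ≥ w(j)`. -/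
theorem atom_two_cycle_conditions (n : ℕ) (y w : Equiv.Perm (Fin n)) (hy : y * y = 1)
    (hw : IsAtomOf n y w) (i j k l : Fin n) (hij : i ≤ j) (hci : y i = j)
    (hkl : k ≤ l) (hck : y k = l) (hik : i < k) (hjl : j < l) :
    w l ≤ w k ∧ w i < w l ∧ w j ≤ w i := by
  obtain ⟨⟨L, h1, h2, h3⟩, hmin⟩ := hw
  exact ATC.main_aux L w y h1 h2 h3 hmin i j k l hij hci hkl hck hik hjl
end
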